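/- arXiv:1904.06367 — 5 statements merged into one kernel-verified Lean document; each statement's English description precedes it below -/
import Mathlib

section
/- Let F: 𝒢 → ℋ be a functor between finite groupoids, V a rational vector space, and f: π₀(𝒢) → V a function. Then for every object h of ℋ, the push-forward satisfies (F_* f)([h]) = |Aut_ℋ(h)| · ∑ᵢ f(gᵢ)/|Aut_𝒢(gᵢ)|, where the sum is over objects gᵢ of 𝒢, one in each isomorphism class of 𝒢 whose image F(gᵢ) is isomorphic to h. -/
open CategoryTheory

/-- The set of isomorphism classes of objects of a category. -/
abbrev PiZero (C : Type*) [Category C] := Quotient (isIsomorphicSetoid C)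

/-- The orbisum `∫_C f = ∑_{[x]} f(x)/|Aut(x)|` of a vector-valued function on
isomorphism classes. -/
noncomputable def orbisum {C : Type*} [Category C] {V : Type*} [AddCommGroup V] [Module ℚ V]
    (f : PiZero C → V) : V :=
  ∑ᶠ c : PiZero C, ((Nat.card (Aut (Quotient.out c)) : ℚ))⁻¹ • f c

/-- The push-forward `F_* f`, defined by orbisums over comma categories `(F ↓ h)`. -/
noncomputable def pushforward {C D : Type*} [Category C] [Category D] (F : C ⥤ D)
    {V : Type*} [AddCommGroup V] [Module ℚ V] (f : PiZero C → V) : PiZero D → V :=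
  fun h => orbisum (fun c : PiZero (CostructuredArrow F (Quotient.out h)) =>
    f (Quotient.mk (isIsomorphicSetoid C) (Quotient.out c).left))

namespace PfAux
open MulAction


lemma card_aut_congr {E : Type*} [Category E] {x y : E} (e : x ≅ y) :
    Nat.card (Aut x) = Nat.card (Aut y) :=
  Nat.card_congr e.conjAut.toEquiv

lemma sum_inv_card_stab (G X : Type*) [Group G] [MulAction G X] [Finite G] [Finite X] :
    ∑ᶠ ω : orbitRel.Quotient G X, ((Nat.card (stabilizer G (Quotient.out ω)) : ℚ))⁻¹
      = (Nat.card X : ℚ) / Nat.card G := by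
  classical
  haveI : Fintype (orbitRel.Quotient G X) := Fintype.ofFinite _
  rw [finsum_eq_sum_of_fintype]
  have h1 : ∀ ω : orbitRel.Quotient G X,
      ((Nat.card (stabilizer G (Quotient.out ω)) : ℚ))⁻¹
        = (Nat.card (G ⧸ stabilizer G (Quotient.out ω)) : ℚ) / Nat.card G := by
    intro ω
    have h2 := Subgroup.card_eq_card_quotient_mul_card_subgroup (stabilizer G (Quotient.out ω))
    have h3 : 0 < (Nat.card (stabilizer G (Quotient.out ω)) : ℚ) := by
      exact_mod_cast Nat.card_pos
    have h4 : 0 < (Nat.card G : ℚ) := by exact_mod_cast Nat.card_pos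
    rw [eq_div_iff (ne_of_gt h4)]
    rw [h2]
    push_cast
    rw [inv_mul_eq_div, div_eq_iff (ne_of_gt h3)]
  simp_rw [h1]
  rw [← Finset.sum_div]
  congr 1
  cases nonempty_fintype G
  haveI : ∀ ω : orbitRel.Quotient G X, Fintype (G ⧸ stabilizer G (Quotient.out ω)) :=
    fun _ => Fintype.ofFinite _
  have := Nat.card_congr (selfEquivSigmaOrbitsQuotientStabilizer G X)
  rw [this, Nat.card_eq_fintype_card, Fintype.card_sigma]
  push_cast
  simp [Nat.card_eq_fintype_card]



variable {C D : Type*} [Groupoid C] [Groupoid D]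

lemma comp_fixed_symm {F : C ⥤ D} {g₀ : C} {d : D} (ψ : g₀ ≅ g₀) (φ : F.obj g₀ ⟶ d)
    (h : F.map ψ.hom ≫ φ = φ) : F.map ψ.inv ≫ φ = φ := by
  calc F.map ψ.inv ≫ φ = F.map ψ.inv ≫ (F.map ψ.hom ≫ φ) := by rw [h]
    _ = φ := by rw [← Category.assoc, ← F.map_comp, Iso.inv_hom_id, F.map_id, Category.id_comp]

/-- Type synonym for `F.obj g₀ ⟶ d` carrying the `Aut g₀`-action. -/
abbrev AutHom (F : C ⥤ D) (g₀ : C) (d : D) : Type _ := F.obj g₀ ⟶ d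

variable {F : C ⥤ D} {g₀ : C} {d : D}

instance : MulAction (Aut g₀) (AutHom F g₀ d) where
  smul ψ φ := (F.map ψ.inv ≫ (φ : F.obj g₀ ⟶ d) : F.obj g₀ ⟶ d)
  one_smul φ := by
    show (F.map (Iso.refl g₀).inv ≫ (φ : F.obj g₀ ⟶ d) : F.obj g₀ ⟶ d) = φ
    simp
  mul_smul ψ χ φ := by
    show (F.map (χ.trans ψ).inv ≫ (φ : F.obj g₀ ⟶ d) : F.obj g₀ ⟶ d)
      = (F.map ψ.inv ≫ (F.map χ.inv ≫ (φ : F.obj g₀ ⟶ d)) : F.obj g₀ ⟶ d)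
    exact (congrArg (· ≫ (φ : F.obj g₀ ⟶ d)) (F.map_comp ψ.inv χ.inv)).trans (Category.assoc _ _ _)

lemma autHom_smul_def (ψ : Aut g₀) (φ : AutHom F g₀ d) :
    ψ • φ = (F.map ψ.inv ≫ (φ : F.obj g₀ ⟶ d) : F.obj g₀ ⟶ d) := rfl

/-- Automorphisms of `mk φ` in the comma category correspond to the stabilizer of `φ`. -/
noncomputable def autMkEquivStab (φ : AutHom F g₀ d) :
    Aut (CostructuredArrow.mk (φ : F.obj g₀ ⟶ d)) ≃ stabilizer (Aut g₀) φ where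
  toFun α := ⟨(Groupoid.isoEquivHom g₀ g₀).symm α.hom.left, by
    refine mem_stabilizer_iff.mpr ?_
    show F.map ((Groupoid.isoEquivHom g₀ g₀).symm α.hom.left).inv ≫ (φ : F.obj g₀ ⟶ d)
      = (φ : F.obj g₀ ⟶ d)
    exact comp_fixed_symm _ _ (CostructuredArrow.w α.hom)⟩
  invFun ψ := CostructuredArrow.isoMk ((ψ : Aut g₀) : g₀ ≅ g₀)
    (comp_fixed_symm ((ψ : Aut g₀) : g₀ ≅ g₀).symm _ ψ.2)
  left_inv α := by
    apply Iso.ext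
    apply CostructuredArrow.ext
    rfl
  right_inv ψ := by
    apply Subtype.ext
    apply Aut.ext
    rfl


variable {C D : Type*} [Groupoid C] [Groupoid D] {F : C ⥤ D} {g₀ : C} {d : D}

lemma rel_iff (φ φ' : AutHom F g₀ d) :
    φ ∈ orbit (Aut g₀) φ' ↔
      Nonempty ((CostructuredArrow.mk (φ : F.obj g₀ ⟶ d)) ≅
        (CostructuredArrow.mk (φ' : F.obj g₀ ⟶ d))) := by
  rw [MulAction.mem_orbit_iff]
  constructor
  · rintro ⟨ψ, hψ⟩
    rw [autHom_smul_def] at hψ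
    exact ⟨CostructuredArrow.isoMk (ψ : g₀ ≅ g₀).symm hψ⟩
  · rintro ⟨e⟩
    refine ⟨((Groupoid.isoEquivHom g₀ g₀).symm e.hom.left).symm, ?_⟩
    refine (autHom_smul_def _ _).trans ?_
    exact CostructuredArrow.w e.hom

/-- The induced map from orbits to iso classes of the comma category. -/
def theta (F : C ⥤ D) (g₀ : C) (d : D) :
    orbitRel.Quotient (Aut g₀) (AutHom F g₀ d) → PiZero (CostructuredArrow F d) :=
  Quotient.lift
    (fun φ => Quotient.mk (isIsomorphicSetoid _) (CostructuredArrow.mk (φ : F.obj g₀ ⟶ d)))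
    (fun φ φ' h => Quotient.sound ((rel_iff φ φ').mp h))

lemma theta_injective : Function.Injective (theta F g₀ d) := by
  intro x y
  induction x using Quotient.inductionOn
  induction y using Quotient.inductionOn
  intro hxy
  exact Quotient.sound ((rel_iff _ _).mpr (Quotient.exact hxy))

lemma theta_mk (φ : AutHom F g₀ d) :
    theta F g₀ d (Quotient.mk _ φ)
      = Quotient.mk (isIsomorphicSetoid _) (CostructuredArrow.mk (φ : F.obj g₀ ⟶ d)) := rfl

lemma range_theta (F : C ⥤ D) (g₀ : C) (d : D) :
    Set.range (theta F g₀ d) =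
      {c : PiZero (CostructuredArrow F d) |
        (Quotient.mk (isIsomorphicSetoid C) (Quotient.out c).left : PiZero C)
          = Quotient.mk (isIsomorphicSetoid C) g₀} := by
  ext c
  constructor
  · rintro ⟨ω, rfl⟩
    induction ω using Quotient.inductionOn with
    | h φ =>
      rw [theta_mk]
      obtain ⟨e⟩ := Quotient.exact (Quotient.out_eq (Quotient.mk (isIsomorphicSetoid _)
          (CostructuredArrow.mk (φ : F.obj g₀ ⟶ d))))
      exact Quotient.sound ⟨(CostructuredArrow.proj F d).mapIso e⟩
  · intro hc
    obtain ⟨e⟩ := Quotient.exact hc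
    have ι : g₀ ≅ (Quotient.out c).left := e.symm
    refine ⟨Quotient.mk _ ((F.map ι.hom ≫ (Quotient.out c).hom : F.obj g₀ ⟶ d) : AutHom F g₀ d), ?_⟩
    rw [theta_mk]
    have h2 : (Quotient.mk (isIsomorphicSetoid (CostructuredArrow F d))
        (CostructuredArrow.mk ((F.map ι.hom ≫ (Quotient.out c).hom : F.obj g₀ ⟶ d))))
        = Quotient.mk (isIsomorphicSetoid (CostructuredArrow F d)) (Quotient.out c) :=
      Quotient.sound ⟨CostructuredArrow.isoMk ι rfl⟩
    rw [h2, Quotient.out_eq]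

end PfAux

namespace PfAux2
open PfAux MulAction

variable {C D : Type*} [Groupoid C] [Groupoid D] {F : C ⥤ D} {g₀ : C} {d : D}

noncomputable def autHomEquivAut (e : F.obj g₀ ≅ d) : AutHom F g₀ d ≃ Aut d :=
  ((e.homCongr (Iso.refl d)).trans (Groupoid.isoEquivHom d d).symm : (F.obj g₀ ⟶ d) ≃ Aut d)

lemma isEmpty_autHom (h : ¬ Nonempty (F.obj g₀ ≅ d)) : IsEmpty (AutHom F g₀ d) :=
  ⟨fun φ => h ⟨(Groupoid.isoEquivHom _ _).symm (φ : F.obj g₀ ⟶ d)⟩⟩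

lemma finite_autHom [Finite (Aut d)] : Finite (AutHom F g₀ d) := by
  by_cases h : Nonempty (F.obj g₀ ≅ d)
  · obtain ⟨e⟩ := h
    exact Finite.of_equiv _ (autHomEquivAut e).symm
  · haveI := isEmpty_autHom (F := F) (g₀ := g₀) h
    infer_instance

lemma fiber_sum (F : C ⥤ D) (g₀ : C) (d : D) [Finite (Aut g₀)] [Finite (Aut d)] :
    ∑ᶠ c ∈ {c : PiZero (CostructuredArrow F d) |
        (Quotient.mk (isIsomorphicSetoid C) (Quotient.out c).left : PiZero C)
          = Quotient.mk (isIsomorphicSetoid C) g₀},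
      ((Nat.card (Aut (Quotient.out c)) : ℚ))⁻¹
    = (Nat.card (AutHom F g₀ d) : ℚ) / Nat.card (Aut g₀) := by
  haveI : Finite (AutHom F g₀ d) := finite_autHom
  rw [← range_theta, finsum_mem_range theta_injective]
  have key : ∀ ω : orbitRel.Quotient (Aut g₀) (AutHom F g₀ d),
      ((Nat.card (Aut (Quotient.out (theta F g₀ d ω))) : ℚ))⁻¹
        = ((Nat.card (stabilizer (Aut g₀) (Quotient.out ω)) : ℚ))⁻¹ := by
    intro ω
    have h1 : theta F g₀ d ω = Quotient.mk (isIsomorphicSetoid _)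
        (CostructuredArrow.mk ((Quotient.out ω : AutHom F g₀ d) : F.obj g₀ ⟶ d)) := by
      conv_lhs => rw [← Quotient.out_eq ω]
      rfl
    obtain ⟨e⟩ := Quotient.exact (Quotient.out_eq (Quotient.mk (isIsomorphicSetoid _)
        (CostructuredArrow.mk ((Quotient.out ω : AutHom F g₀ d) : F.obj g₀ ⟶ d))))
    rw [h1]
    rw [card_aut_congr e, Nat.card_congr (autMkEquivStab (Quotient.out ω))]
  simp_rw [key]
  exact sum_inv_card_stab (Aut g₀) (AutHom F g₀ d)

lemma empty_fiber (F : C ⥤ D) (g₀ : C) (d : D) (h : ¬ Nonempty (F.obj g₀ ≅ d)) :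
    {c : PiZero (CostructuredArrow F d) |
        (Quotient.mk (isIsomorphicSetoid C) (Quotient.out c).left : PiZero C)
          = Quotient.mk (isIsomorphicSetoid C) g₀} = ∅ := by
  rw [← range_theta]
  haveI := isEmpty_autHom (F := F) (g₀ := g₀) h
  haveI : IsEmpty (orbitRel.Quotient (Aut g₀) (AutHom F g₀ d)) := Quotient.instIsEmpty
  exact Set.range_eq_empty _

end PfAux2

/-- The push-forward `F_* f` is given by
`(F_* f)([h]) = |Aut(h)| · ∑ f(gᵢ)/|Aut(gᵢ)|`, summing over one object `gᵢ` in each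
isomorphism class of `C` whose image under `F` is isomorphic to `h`. -/
theorem pushforward_eq {C D : Type*} [Groupoid C] [Groupoid D]
    (hC : Finite (PiZero C)) (hCa : ∀ x : C, Finite (Aut x))
    (hD : Finite (PiZero D)) (hDa : ∀ y : D, Finite (Aut y))
    {V : Type*} [AddCommGroup V] [Module ℚ V]
    (F : C ⥤ D) (f : PiZero C → V) (h : D) :
    pushforward F f (Quotient.mk (isIsomorphicSetoid D) h) =
      (Nat.card (Aut h) : ℚ) •
        ∑ᶠ c ∈ {c : PiZero C | Nonempty (F.obj (Quotient.out c) ≅ h)},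
          (Nat.card (Aut (Quotient.out c)) : ℚ)⁻¹ • f c := by
  classical
  obtain ⟨eh⟩ := Quotient.exact (Quotient.out_eq (Quotient.mk (isIsomorphicSetoid D) h))
  set d : D := Quotient.out (Quotient.mk (isIsomorphicSetoid D) h) with hd
  haveI : Finite (Aut d) := hDa d
  haveI : ∀ g₀ : C, Finite (PfAux.AutHom F g₀ d) := fun g₀ => PfAux2.finite_autHom
  haveI hKfib : ∀ b : PiZero C, Finite
      ↥{c : PiZero (CostructuredArrow F d) |
        (Quotient.mk (isIsomorphicSetoid C) (Quotient.out c).left : PiZero C) = b} := by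
    intro b
    haveI : Finite (Aut (Quotient.out b)) := hCa _
    have hb : ({c : PiZero (CostructuredArrow F d) |
        (Quotient.mk (isIsomorphicSetoid C) (Quotient.out c).left : PiZero C) = b})
        = Set.range (PfAux.theta F (Quotient.out b) d) := by
      rw [PfAux.range_theta]
      conv_lhs => rw [← Quotient.out_eq b]
    rw [hb]
    exact Set.finite_range _
  haveI hK : Finite (PiZero (CostructuredArrow F d)) := by
    rw [← Set.finite_univ_iff]
    have hu : (Set.univ : Set (PiZero (CostructuredArrow F d)))
        = ⋃ b : PiZero C, {c : PiZero (CostructuredArrow F d) |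
            (Quotient.mk (isIsomorphicSetoid C) (Quotient.out c).left : PiZero C) = b} := by
      ext c; simp
    rw [hu]
    exact Set.finite_iUnion (fun b => Set.finite_coe_iff.mp (hKfib b))
  haveI : Fintype (PiZero (CostructuredArrow F d)) := Fintype.ofFinite _
  haveI : Fintype (PiZero C) := Fintype.ofFinite _
  simp only [pushforward, orbisum]
  rw [finsum_eq_sum_of_fintype]
  rw [← Finset.sum_fiberwise_of_maps_to
    (g := fun c : PiZero (CostructuredArrow F d) =>
      (Quotient.mk (isIsomorphicSetoid C) (Quotient.out c).left : PiZero C))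
    (t := Finset.univ) (fun x _ => Finset.mem_univ _)]
  have hS : {c : PiZero C | Nonempty (F.obj (Quotient.out c) ≅ h)}
      = ↑(Finset.univ.filter (fun c : PiZero C => Nonempty (F.obj (Quotient.out c) ≅ h))) := by
    ext c; simp
  rw [hS, finsum_mem_coe_finset, Finset.smul_sum, Finset.sum_filter]
  apply Finset.sum_congr rfl
  intro b _
  have hfilter : (Finset.univ.filter (fun c : PiZero (CostructuredArrow F d) =>
      (Quotient.mk (isIsomorphicSetoid C) (Quotient.out c).left : PiZero C) = b) : Set _)
      = {c : PiZero (CostructuredArrow F d) |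
          (Quotient.mk (isIsomorphicSetoid C) (Quotient.out c).left : PiZero C)
            = Quotient.mk (isIsomorphicSetoid C) (Quotient.out b)} := by
    ext c; simp [Quotient.out_eq]
  have hinner : ∑ c ∈ Finset.univ.filter (fun c : PiZero (CostructuredArrow F d) =>
        (Quotient.mk (isIsomorphicSetoid C) (Quotient.out c).left : PiZero C) = b),
      ((Nat.card (Aut (Quotient.out c)) : ℚ))⁻¹ •
        f (Quotient.mk (isIsomorphicSetoid C) (Quotient.out c).left)
      = (∑ᶠ c ∈ {c : PiZero (CostructuredArrow F d) |
          (Quotient.mk (isIsomorphicSetoid C) (Quotient.out c).left : PiZero C)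
            = Quotient.mk (isIsomorphicSetoid C) (Quotient.out b)},
          ((Nat.card (Aut (Quotient.out c)) : ℚ))⁻¹) • f b := by
    rw [← hfilter, finsum_mem_coe_finset, Finset.sum_smul]
    apply Finset.sum_congr rfl
    intro c hc
    rw [Finset.mem_filter] at hc
    rw [hc.2]
  rw [hinner]
  haveI : Finite (Aut (Quotient.out b)) := hCa _
  by_cases hb : Nonempty (F.obj (Quotient.out b) ≅ h)
  · rw [if_pos hb]
    obtain ⟨e⟩ := hb
    have e' : F.obj (Quotient.out b) ≅ d := e.trans eh.symm
    rw [PfAux2.fiber_sum F (Quotient.out b) d]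
    have hcard : (Nat.card (PfAux.AutHom F (Quotient.out b) d) : ℚ) = Nat.card (Aut h) := by
      rw [Nat.card_congr (PfAux2.autHomEquivAut e'), PfAux.card_aut_congr eh]
    rw [hcard, smul_smul, div_eq_mul_inv]
  · rw [if_neg hb]
    have hb' : ¬ Nonempty (F.obj (Quotient.out b) ≅ d) := by
      intro ⟨e⟩; exact hb ⟨e.trans eh⟩
    rw [PfAux2.empty_fiber F (Quotient.out b) d hb', finsum_mem_empty, zero_smul]
end

section
/- Let F: 𝒢 → 𝒢′ and F′: 𝒢′ → 𝒢″ be functors between finite groupoids, V a rational vector space, and f: π₀(𝒢) → V a function. Then F′_*(F_* f) = (F′ ∘ F)_* f as functions π₀(𝒢″) → V. -/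
open CategoryTheory
open CategoryTheory

namespace PFaux

section
variable {C : Type*} [Category C]
abbrev pmk (x : C) : PiZero C := Quotient.mk (isIsomorphicSetoid C) x
lemma pmk_eq_of_iso {x y : C} (e : x ≅ y) : pmk x = pmk y := Quotient.sound ⟨e⟩
noncomputable def isoOutMk (x : C) : (Quotient.out (pmk x)) ≅ x :=
  Classical.choice (@Quotient.mk_out C (isIsomorphicSetoid C) x)
noncomputable def isoOfPmkEq {x y : C} (h : pmk x = pmk y) : x ≅ y :=
  Classical.choice (Quotient.exact h : IsIsomorphic x y)
lemma card_aut_eq_of_iso {x y : C} (e : x ≅ y) :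
    Nat.card (Aut x) = Nat.card (Aut y) :=
  Nat.card_congr e.conjAut.toEquiv
end

lemma homFinite {G : Type*} [Groupoid G] (hGa : ∀ x : G, Finite (Aut x)) (x y : G) :
    Finite (x ⟶ y) := by
  by_cases h : Nonempty (x ⟶ y)
  · obtain ⟨f⟩ := h
    have : Finite (x ≅ x) := hGa x
    have : Finite (x ⟶ x) := Finite.of_equiv _ (Groupoid.isoEquivHom x x)
    exact Finite.of_injective (fun g => g ≫ Groupoid.inv f)
      (fun g g' h => by simpa using congrArg (· ≫ f) h)
  · have := not_nonempty_iff.mp h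
    exact Finite.of_subsingleton

variable {A B : Type*} [Groupoid A] [Groupoid B]

section action
variable (P : A ⥤ B) {a : A} {b₀ : B}

/-- The action of `Aut a` on `P.obj a ⟶ b₀` by `α • φ = P.map α.inv ≫ φ`. -/
noncomputable def commaMulAction (a : A) (b₀ : B) : MulAction (Aut a) (P.obj a ⟶ b₀) where
  smul α φ := P.map α.inv ≫ φ
  one_smul φ := by show P.map (Iso.refl a).inv ≫ φ = φ; simp
  mul_smul α β φ := by
    show P.map (α.inv ≫ β.inv) ≫ φ = P.map α.inv ≫ P.map β.inv ≫ φ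
    simp

attribute [local instance] commaMulAction

lemma comma_smul_def (α : Aut a) (φ : P.obj a ⟶ b₀) : α • φ = P.map α.inv ≫ φ := rfl

/-- the class of the comma object attached to `φ` -/
noncomputable abbrev qcl (φ : P.obj a ⟶ b₀) : PiZero (CostructuredArrow P b₀) :=
  pmk (CostructuredArrow.mk φ)

lemma qcl_left (φ : P.obj a ⟶ b₀) :
    pmk (Quotient.out (qcl P φ)).left = pmk a := by
  have e := isoOutMk (CostructuredArrow.mk φ)
  exact pmk_eq_of_iso ((CostructuredArrow.proj P b₀).mapIso e)

lemma qcl_surj (k : PiZero (CostructuredArrow P b₀)) (h : pmk (Quotient.out k).left = pmk a) :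
    ∃ φ : P.obj a ⟶ b₀, qcl P φ = k := by
  set y := Quotient.out k with hy
  have e : y.left ≅ a := isoOfPmkEq h
  refine ⟨P.map e.inv ≫ y.hom, ?_⟩
  have : CostructuredArrow.mk (P.map e.inv ≫ y.hom) ≅ y :=
    CostructuredArrow.isoMk e.symm (by simp)
  exact (pmk_eq_of_iso this).trans (Quotient.out_eq k)

lemma qcl_eq_iff (φ φ' : P.obj a ⟶ b₀) :
    qcl P φ = qcl P φ' ↔ φ' ∈ MulAction.orbit (Aut a) φ := by
  constructor
  · intro h
    have e : CostructuredArrow.mk φ ≅ CostructuredArrow.mk φ' := isoOfPmkEq h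
    refine ⟨⟨e.hom.left, e.inv.left, ?_, ?_⟩, ?_⟩
    · rw [← Comma.comp_left, e.hom_inv_id]; rfl
    · rw [← Comma.comp_left, e.inv_hom_id]; rfl
    · show P.map e.inv.left ≫ φ = φ'
      simpa using CostructuredArrow.w e.inv
  · rintro ⟨α, rfl⟩
    refine (pmk_eq_of_iso (CostructuredArrow.isoMk α.symm ?_)).symm
    show P.map α.inv ≫ φ = α • φ
    rfl

/-- automorphisms of the comma object are the stabilizer -/
noncomputable def autCommaEquivStabilizer (φ : P.obj a ⟶ b₀) :
    Aut (CostructuredArrow.mk φ) ≃ MulAction.stabilizer (Aut a) φ where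
  toFun e :=
    ⟨⟨e.hom.left, e.inv.left,
      by rw [← Comma.comp_left, e.hom_inv_id]; rfl,
      by rw [← Comma.comp_left, e.inv_hom_id]; rfl⟩,
     by show P.map e.inv.left ≫ φ = φ; simpa using CostructuredArrow.w e.inv⟩
  invFun := fun ⟨α, hα⟩ => CostructuredArrow.isoMk α (by
      have h2 : P.map α.inv ≫ φ = φ := hα
      show P.map α.hom ≫ φ = φ
      conv_lhs => rw [← h2]
      rw [← Category.assoc, ← P.map_comp]
      rw [α.hom_inv_id, P.map_id, Category.id_comp])
  left_inv e := by apply Iso.ext; apply CostructuredArrow.ext; rfl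
  right_inv α := by apply Subtype.ext; apply Iso.ext; rfl
end action

noncomputable instance commaGroupoid (P : A ⥤ B) (b : B) : Groupoid (CostructuredArrow P b) := by
  apply Groupoid.ofIsIso
  intro X Y f
  have : (CostructuredArrow.isoMk (asIso f.left) (by simp)).hom = f := by
    apply CostructuredArrow.ext; rfl
  rw [← this]
  infer_instance

lemma autCommaFinite (P : A ⥤ B) (b : B) (hAa : ∀ x : A, Finite (Aut x))
    (k : CostructuredArrow P b) : Finite (Aut k) := by
  have : Finite (k.left ≅ k.left) := hAa k.left
  refine Finite.of_injective (fun e : Aut k =>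
    (⟨e.hom.left, e.inv.left,
      by rw [← Comma.comp_left, e.hom_inv_id]; rfl,
      by rw [← Comma.comp_left, e.inv_hom_id]; rfl⟩ : Aut k.left)) ?_
  intro e e' h
  apply Iso.ext
  exact CostructuredArrow.ext _ _ (congrArg Iso.hom h)

lemma piZeroCommaFinite (P : A ⥤ B) (b : B) (hA : Finite (PiZero A))
    (hBa : ∀ y : B, Finite (Aut y)) :
    Finite (PiZero (CostructuredArrow P b)) := by
  have hhom : ∀ (c : PiZero A), Finite (P.obj (Quotient.out c) ⟶ b) :=
    fun c => homFinite hBa _ _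
  have : Finite (Σ c : PiZero A, (P.obj (Quotient.out c) ⟶ b)) := Finite.instSigma
  refine Finite.of_surjective
    (fun p : Σ c : PiZero A, (P.obj (Quotient.out c) ⟶ b) =>
      pmk (CostructuredArrow.mk p.2)) ?_
  intro k
  induction k using Quotient.ind with
  | _ y =>
    exact ⟨⟨pmk y.left, P.map (isoOutMk y.left).hom ≫ y.hom⟩,
      Quotient.sound ⟨CostructuredArrow.isoMk (isoOutMk y.left) rfl⟩⟩

section counting
variable (P : A ⥤ B)

attribute [local instance] commaMulAction
attribute [local instance] Classical.propDecidable

lemma fiber_sum [Finite (PiZero A)] (hAa : ∀ x : A, Finite (Aut x))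
    (hBa : ∀ y : B, Finite (Aut y)) (b : PiZero B) (c : PiZero A)
    (hbc : pmk (P.obj (Quotient.out c)) = b) :
    ∑ᶠ k : PiZero (CostructuredArrow P (Quotient.out b)),
      (if pmk (Quotient.out k).left = c then ((Nat.card (Aut (Quotient.out k)) : ℚ))⁻¹ else 0)
    = (Nat.card (Aut (Quotient.out b)) : ℚ) / (Nat.card (Aut (Quotient.out c)) : ℚ) := by
  set a := Quotient.out c with ha
  set b₀ := Quotient.out b with hb₀
  haveI : Finite (PiZero (CostructuredArrow P b₀)) := piZeroCommaFinite P b₀ ‹_› hBa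
  letI : Fintype (PiZero (CostructuredArrow P b₀)) := Fintype.ofFinite _
  haveI hX : Finite (P.obj a ⟶ b₀) := homFinite hBa _ _
  letI : Fintype (P.obj a ⟶ b₀) := Fintype.ofFinite _
  haveI : Finite (Aut a) := hAa a
  letI : Fintype (Aut a) := Fintype.ofFinite _
  rw [finsum_eq_sum_of_fintype, ← Finset.sum_filter]
  set Sf : Finset (PiZero (CostructuredArrow P b₀)) :=
    Finset.univ.filter (fun k => pmk (Quotient.out k).left = c) with hSf
  have hqmem : ∀ φ : P.obj a ⟶ b₀, qcl P φ ∈ Sf := by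
    intro φ
    rw [hSf, Finset.mem_filter]
    exact ⟨Finset.mem_univ _, (qcl_left P φ).trans (Quotient.out_eq c)⟩
  have step1 : ∀ k ∈ Sf, ((Nat.card (Aut (Quotient.out k)) : ℚ))⁻¹ =
      ((Finset.univ.filter (fun φ : P.obj a ⟶ b₀ => qcl P φ = k)).card : ℚ)
        / (Nat.card (Aut a) : ℚ) := by
    intro k hk
    rw [hSf, Finset.mem_filter] at hk
    obtain ⟨φ, rfl⟩ := qcl_surj P k ((hk.2).trans (Quotient.out_eq c).symm)
    haveI : Finite (MulAction.orbit (Aut a) φ) := Subtype.finite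
    haveI : Finite (MulAction.stabilizer (Aut a) φ) := Subtype.finite
    letI : Fintype (MulAction.orbit (Aut a) φ) := Fintype.ofFinite _
    letI : Fintype (MulAction.stabilizer (Aut a) φ) := Fintype.ofFinite _
    have hκ : Nat.card (Aut (Quotient.out (qcl P φ))) =
        Nat.card (MulAction.stabilizer (Aut a) φ) := by
      rw [card_aut_eq_of_iso (isoOutMk (CostructuredArrow.mk φ))]
      exact Nat.card_congr (autCommaEquivStabilizer P φ)
    have hfib : ((Finset.univ.filter (fun φ' : P.obj a ⟶ b₀ => qcl P φ' = qcl P φ)).card)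
        = Nat.card (MulAction.orbit (Aut a) φ) := by
      rw [← Fintype.card_subtype, ← Nat.card_eq_fintype_card]
      exact Nat.card_congr (Equiv.subtypeEquivRight fun φ' => by
        rw [eq_comm]; exact qcl_eq_iff P φ φ')
    have hos : Nat.card (MulAction.orbit (Aut a) φ) *
        Nat.card (MulAction.stabilizer (Aut a) φ) = Nat.card (Aut a) := by
      simpa [Nat.card_eq_fintype_card] using
        MulAction.card_orbit_mul_card_stabilizer_eq_card_group (Aut a) φ
    rw [hκ, hfib]
    have h1 : (0:ℚ) < Nat.card (MulAction.orbit (Aut a) φ) := by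
      have : Nonempty (MulAction.orbit (Aut a) φ) := ⟨⟨φ, MulAction.mem_orbit_self φ⟩⟩
      exact_mod_cast Nat.card_pos
    have h2 : (0:ℚ) < Nat.card (MulAction.stabilizer (Aut a) φ) := by
      exact_mod_cast Nat.card_pos
    have hg : (0:ℚ) < Nat.card (Aut a) := by exact_mod_cast Nat.card_pos
    rw [eq_div_iff (ne_of_gt hg), inv_mul_eq_div, div_eq_iff (ne_of_gt h2)]
    exact_mod_cast hos.symm
  rw [Finset.sum_congr rfl step1, ← Finset.sum_div]
  have step2 : ∑ k ∈ Sf, ((Finset.univ.filter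
      (fun φ : P.obj a ⟶ b₀ => qcl P φ = k)).card : ℚ)
      = (Nat.card (P.obj a ⟶ b₀) : ℚ) := by
    have h3 := Finset.card_eq_sum_card_fiberwise
      (f := fun φ : P.obj a ⟶ b₀ => qcl P φ) (s := Finset.univ) (t := Sf)
      (fun φ _ => hqmem φ)
    rw [Finset.card_univ, ← Nat.card_eq_fintype_card] at h3
    exact_mod_cast h3.symm
  rw [step2]
  have h2 : Quotient.out (pmk (P.obj a)) = b₀ := by rw [hbc]
  have u : b₀ ≅ P.obj a := h2 ▸ isoOutMk (P.obj a)
  have step3 : Nat.card (P.obj a ⟶ b₀) = Nat.card (Aut b₀) := by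
    have e1 : (P.obj a ⟶ b₀) ≃ (b₀ ⟶ b₀) :=
      ⟨fun φ => u.hom ≫ φ, fun g => u.inv ≫ g, fun φ => by simp, fun g => by simp⟩
    have e : (P.obj a ⟶ b₀) ≃ Aut b₀ := e1.trans (Groupoid.isoEquivHom b₀ b₀).symm
    exact Nat.card_congr e
  rw [step3]

lemma fiber_sum_zero (hBa : ∀ y : B, Finite (Aut y)) (b : PiZero B) (c : PiZero A)
    (hbc : pmk (P.obj (Quotient.out c)) ≠ b) :
    ∑ᶠ k : PiZero (CostructuredArrow P (Quotient.out b)),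
      (if pmk (Quotient.out k).left = c then ((Nat.card (Aut (Quotient.out k)) : ℚ))⁻¹ else 0)
    = 0 := by
  apply finsum_eq_zero_of_forall_eq_zero
  intro k
  rw [if_neg]
  intro h
  apply hbc
  have h1 : pmk (P.obj (Quotient.out c)) = pmk (P.obj (Quotient.out k).left) :=
    pmk_eq_of_iso (P.mapIso (isoOfPmkEq ((Quotient.out_eq c).trans h.symm)))
  rw [h1, pmk_eq_of_iso (asIso (Quotient.out k).hom)]
  exact Quotient.out_eq b
end counting

section fubini
attribute [local instance] Classical.propDecidable

lemma orbisum_pushforward {V : Type*} [AddCommGroup V] [Module ℚ V]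
    (P : A ⥤ B) [Finite (PiZero A)] [Finite (PiZero B)]
    (hAa : ∀ x : A, Finite (Aut x)) (hBa : ∀ y : B, Finite (Aut y))
    (g : PiZero A → V) :
    orbisum (pushforward P g) = orbisum g := by
  letI : Fintype (PiZero A) := Fintype.ofFinite _
  letI : Fintype (PiZero B) := Fintype.ofFinite _
  rw [orbisum, orbisum, finsum_eq_sum_of_fintype, finsum_eq_sum_of_fintype]
  have key : ∀ b : PiZero B,
      ((Nat.card (Aut (Quotient.out b)) : ℚ))⁻¹ • pushforward P g b =
      ∑ c : PiZero A, (((Nat.card (Aut (Quotient.out b)) : ℚ))⁻¹ *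
        (if pmk (P.obj (Quotient.out c)) = b
          then (Nat.card (Aut (Quotient.out b)) : ℚ) / (Nat.card (Aut (Quotient.out c)) : ℚ)
          else 0)) • g c := by
    intro b
    haveI : Finite (PiZero (CostructuredArrow P (Quotient.out b))) :=
      piZeroCommaFinite P _ ‹_› hBa
    letI : Fintype (PiZero (CostructuredArrow P (Quotient.out b))) := Fintype.ofFinite _
    have h1 : ∀ k : PiZero (CostructuredArrow P (Quotient.out b)),
        ((Nat.card (Aut (Quotient.out k)) : ℚ))⁻¹ •
          g (Quotient.mk (isIsomorphicSetoid A) (Quotient.out k).left)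
        = ∑ c : PiZero A, (if pmk (Quotient.out k).left = c
            then ((Nat.card (Aut (Quotient.out k)) : ℚ))⁻¹ else 0) • g c := by
      intro k
      simp only [ite_smul, zero_smul]
      rw [Finset.sum_ite_eq]
      simp
    rw [pushforward, orbisum, finsum_eq_sum_of_fintype]
    rw [Finset.sum_congr rfl (fun k _ => h1 k), Finset.sum_comm, Finset.smul_sum]
    refine Finset.sum_congr rfl (fun c _ => ?_)
    rw [← Finset.sum_smul, smul_smul]
    congr 2
    rw [← finsum_eq_sum_of_fintype]
    by_cases hc : pmk (P.obj (Quotient.out c)) = b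
    · rw [if_pos hc]; exact fiber_sum P hAa hBa b c hc
    · rw [if_neg hc]; exact fiber_sum_zero P hBa b c hc
  rw [Finset.sum_congr rfl (fun b _ => key b), Finset.sum_comm]
  refine Finset.sum_congr rfl (fun c _ => ?_)
  rw [Finset.sum_eq_single (pmk (P.obj (Quotient.out c)))]
  · rw [if_pos rfl]
    haveI : Finite (Aut (Quotient.out (pmk (P.obj (Quotient.out c))))) := hBa _
    have hκ : (0:ℚ) < Nat.card (Aut (Quotient.out (pmk (P.obj (Quotient.out c))))) := by
      exact_mod_cast Nat.card_pos
    congr 1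
    rw [div_eq_mul_inv, ← mul_assoc, inv_mul_cancel₀ (ne_of_gt hκ), one_mul]
  · intro b _ hbne
    rw [if_neg (fun hh => hbne hh.symm), mul_zero, zero_smul]
  · intro h
    exact absurd (Finset.mem_univ _) h
end fubini


section transfer
variable {A B : Type*} [Groupoid A] [Groupoid B]


/-- the induced map on isomorphism classes -/
def piMap (Φ : A ⥤ B) : PiZero A → PiZero B :=
  Quotient.map Φ.obj (fun _ _ h => ⟨Φ.mapIso (Classical.choice h)⟩)

lemma piMap_mk (Φ : A ⥤ B) (x : A) : piMap Φ (pmk x) = pmk (Φ.obj x) := rfl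

lemma piMap_bijective (Φ : A ⥤ B) [Φ.Full] [Φ.Faithful] [Φ.EssSurj] :
    Function.Bijective (piMap Φ) := by
  constructor
  · intro x y h
    induction x using Quotient.ind with
    | _ x =>
    induction y using Quotient.ind with
    | _ y =>
      have e : Φ.obj x ≅ Φ.obj y := isoOfPmkEq h
      exact Quotient.sound ⟨Φ.preimageIso e⟩
  · intro k
    induction k using Quotient.ind with
    | _ y =>
      exact ⟨pmk (Φ.objPreimage y), Quotient.sound ⟨Φ.objObjPreimageIso y⟩⟩

/-- Aut cardinality preserved by fully faithful functors -/
lemma card_aut_map (Φ : A ⥤ B) [Φ.Full] [Φ.Faithful] (x : A) :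
    Nat.card (Aut x) = Nat.card (Aut (Φ.obj x)) := by
  refine Nat.card_congr ⟨fun e => Φ.mapIso e, fun e => Φ.preimageIso e, ?_, ?_⟩
  · intro e; apply Iso.ext; exact Φ.preimage_map e.hom
  · intro e; apply Iso.ext; simp [Functor.preimageIso]

lemma orbisum_transfer {V : Type*} [AddCommGroup V] [Module ℚ V]
    (Φ : A ⥤ B) [Φ.Full] [Φ.Faithful] [Φ.EssSurj]
    (gA : PiZero A → V) (gB : PiZero B → V)
    (hg : ∀ x : A, gA (pmk x) = gB (pmk (Φ.obj x))) :
    orbisum gA = orbisum gB := by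
  unfold orbisum
  rw [← finsum_comp_equiv (Equiv.ofBijective _ (piMap_bijective Φ))]
  apply finsum_congr
  intro c
  have hc : (Equiv.ofBijective _ (piMap_bijective Φ)) c = pmk (Φ.obj (Quotient.out c)) := by
    show piMap Φ c = _
    conv_lhs => rw [← Quotient.out_eq c]
    rfl
  rw [hc]
  have h1 : Nat.card (Aut (Quotient.out (pmk (Φ.obj (Quotient.out c))))) =
      Nat.card (Aut (Quotient.out c)) := by
    rw [card_aut_eq_of_iso (isoOutMk (Φ.obj (Quotient.out c)))]
    exact (card_aut_map Φ _).symm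
  rw [h1]
  congr 1
  conv_lhs => rw [← Quotient.out_eq c]
  exact hg _

end transfer

lemma pmk_left_out {C D : Type*} [Category C] [Category D] (S : C ⥤ D) (d : D)
    (x : CostructuredArrow S d) :
    pmk (Quotient.out (pmk x)).left = pmk x.left :=
  pmk_eq_of_iso ((CostructuredArrow.proj S d).mapIso (isoOutMk x))

end PFaux

open PFaux in

/-- Push-forwards of orbisum-valued functions compose: `F′_*(F_* f) = (F′ ∘ F)_* f`. -/
theorem pushforward_comp {C D E : Type*} [Groupoid C] [Groupoid D] [Groupoid E]
    (hC : Finite (PiZero C)) (hCa : ∀ x : C, Finite (Aut x))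
    (hD : Finite (PiZero D)) (hDa : ∀ y : D, Finite (Aut y))
    (hE : Finite (PiZero E)) (hEa : ∀ z : E, Finite (Aut z))
    {V : Type*} [AddCommGroup V] [Module ℚ V]
    (F : C ⥤ D) (F' : D ⥤ E) (f : PiZero C → V) :
    pushforward F' (pushforward F f) = pushforward (F ⋙ F') f := by
  funext h
  haveI : Finite (PiZero (CostructuredArrow (F ⋙ F') (Quotient.out h))) :=
    piZeroCommaFinite _ _ hC hEa
  haveI : Finite (PiZero (CostructuredArrow F' (Quotient.out h))) :=
    piZeroCommaFinite _ _ hD hEa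
  have hKa : ∀ k : CostructuredArrow (F ⋙ F') (Quotient.out h), Finite (Aut k) :=
    autCommaFinite _ _ hCa
  have hK'a : ∀ k : CostructuredArrow F' (Quotient.out h), Finite (Aut k) :=
    autCommaFinite _ _ hDa
  have hmain : ∀ k' : PiZero (CostructuredArrow F' (Quotient.out h)),
      pushforward (CostructuredArrow.pre F F' (Quotient.out h))
        (fun x : PiZero (CostructuredArrow (F ⋙ F') (Quotient.out h)) =>
          f (pmk (Quotient.out x).left)) k' =
      pushforward F f (pmk (Quotient.out k').left) := by
    intro k'
    set c' := Quotient.out k' with hc'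
    set e : Quotient.out (pmk c'.left) ≅ c'.left := isoOutMk c'.left with he
    let Ψ : CostructuredArrow (CostructuredArrow.pre F F' (Quotient.out h)) c' ⥤
        CostructuredArrow F (Quotient.out (pmk c'.left)) :=
      { obj := fun x => CostructuredArrow.mk (x.hom.left ≫ e.inv)
        map := fun {x y} η => CostructuredArrow.homMk η.left.left (by
          have hw :
              (CostructuredArrow.pre F F' (Quotient.out h)).map η.left ≫ y.hom = x.hom :=
            CostructuredArrow.w η
          have hw2 := congrArg CommaMorphism.left hw
          rw [Comma.comp_left] at hw2
          have hw3 : F.map η.left.left ≫ y.hom.left = x.hom.left := hw2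
          show F.map η.left.left ≫ (CostructuredArrow.mk (y.hom.left ≫ e.inv)).hom
              = (CostructuredArrow.mk (x.hom.left ≫ e.inv)).hom
          show F.map η.left.left ≫ y.hom.left ≫ e.inv = x.hom.left ≫ e.inv
          rw [← Category.assoc, hw3])
        map_id := by
          intro x
          apply CostructuredArrow.ext
          simp
        map_comp := by
          intro x y z η η'
          apply CostructuredArrow.ext
          simp }
    haveI : Ψ.Faithful :=
      { map_injective := by
          intro x y η η' hh
          have h0 := congrArg CommaMorphism.left hh
          exact CostructuredArrow.ext _ _ (CostructuredArrow.ext _ _ h0) }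
    haveI : Ψ.Full :=
      { map_surjective := by
          intro x y ζ
          have hζ : F.map ζ.left ≫ (y.hom.left ≫ e.inv) = x.hom.left ≫ e.inv :=
            CostructuredArrow.w ζ
          rw [← Category.assoc] at hζ
          have h₁ : F.map ζ.left ≫ y.hom.left = x.hom.left := (cancel_mono e.inv).mp hζ
          have wx : F'.map x.hom.left ≫ c'.hom = x.left.hom := CostructuredArrow.w x.hom
          have wy : F'.map y.hom.left ≫ c'.hom = y.left.hom := CostructuredArrow.w y.hom
          refine ⟨CostructuredArrow.homMk (CostructuredArrow.homMk ζ.left (by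
            show F'.map (F.map ζ.left) ≫ y.left.hom = x.left.hom
            rw [← wx, ← wy, ← Category.assoc, ← F'.map_comp, h₁])) ?_, ?_⟩
          · refine CostructuredArrow.ext _ _ ?_
            rw [Comma.comp_left]
            exact h₁
          · exact CostructuredArrow.ext _ _ rfl }
    haveI : Ψ.EssSurj :=
      { mem_essImage := by
          intro z
          refine ⟨CostructuredArrow.mk
            (Y := CostructuredArrow.mk (S := F ⋙ F') (F'.map (z.hom ≫ e.hom) ≫ c'.hom))
            (CostructuredArrow.homMk (z.hom ≫ e.hom) rfl),
            ⟨CostructuredArrow.isoMk (Iso.refl _) ?_⟩⟩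
          show F.map (𝟙 _) ≫ z.hom = (z.hom ≫ e.hom) ≫ e.inv
          simp }
    show orbisum _ = orbisum _
    refine orbisum_transfer Ψ _ _ ?_
    intro x
    have h0 : pmk (Quotient.out (pmk x)).left.left = pmk x.left.left :=
      pmk_eq_of_iso ((CostructuredArrow.proj _ c' ⋙
        CostructuredArrow.proj (F ⋙ F') (Quotient.out h)).mapIso (isoOutMk x))
    show f (pmk (Quotient.out (pmk (Quotient.out (pmk x)).left)).left) =
      f (pmk (Quotient.out (pmk (Ψ.obj x))).left)
    rw [pmk_left_out, pmk_left_out, h0]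
    rfl
  calc pushforward F' (pushforward F f) h
      = orbisum (fun k' : PiZero (CostructuredArrow F' (Quotient.out h)) =>
          pushforward F f (pmk (Quotient.out k').left)) := rfl
    _ = orbisum (pushforward (CostructuredArrow.pre F F' (Quotient.out h))
          (fun x : PiZero (CostructuredArrow (F ⋙ F') (Quotient.out h)) =>
            f (pmk (Quotient.out x).left))) := by
        exact congrArg orbisum (funext hmain).symm
    _ = orbisum (fun x : PiZero (CostructuredArrow (F ⋙ F') (Quotient.out h)) =>
          f (pmk (Quotient.out x).left)) :=
        orbisum_pushforward _ hKa hK'a _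
    _ = pushforward (F ⋙ F') f h := rfl
end

section
/- Let F: 𝒢 → ℋ be a functor between finite groupoids, V a rational vector space, and f: π₀(𝒢) → V a function. Then ∫_𝒢 f = ∫_ℋ (F_* f). -/
open CategoryTheory
open CategoryTheory


section Aux
variable {C : Type*} [Groupoid C]

/-- basepointed hom set equivalent to endos of target -/
def homEquivEnd {x y : C} (ψ : x ⟶ y) : (x ⟶ y) ≃ (y ⟶ y) where
  toFun φ := Groupoid.inv ψ ≫ φ
  invFun g := ψ ≫ g
  left_inv φ := by simp
  right_inv g := by simp

def endEquivAut (y : C) : (y ⟶ y) ≃ Aut y := (Groupoid.isoEquivHom y y).symm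

lemma card_hom_eq_card_aut {x y : C} (ψ : x ⟶ y) :
    Nat.card (x ⟶ y) = Nat.card (Aut y) :=
  Nat.card_congr ((homEquivEnd ψ).trans (endEquivAut y))

lemma finite_hom (hCa : ∀ z : C, Finite (Aut z)) (x y : C) : Finite (x ⟶ y) := by
  rcases isEmpty_or_nonempty (x ⟶ y) with h | ⟨⟨ψ⟩⟩
  · infer_instance
  · haveI := hCa y
    exact Finite.of_equiv _ ((homEquivEnd ψ).trans (endEquivAut y)).symm

end Aux

lemma aut_card_pos {A : Type*} [Category A] {x : A} (hx : Finite (Aut x)) :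
    0 < Nat.card (Aut x) :=
  @Nat.card_pos _ ⟨Iso.refl x⟩ hx

attribute [local instance] CategoryTheory.isIsomorphicSetoid
section Aux2
variable {C D : Type*} [Groupoid C] [Groupoid D] (F : C ⥤ D) (d : D)

/-- inverse of a morphism of costructured arrows over groupoids -/
def csInv {e e' : CostructuredArrow F d} (v : e ⟶ e') : e' ⟶ e :=
  CostructuredArrow.homMk (Groupoid.inv v.left)
    (by rw [← CostructuredArrow.w v, ← F.map_comp_assoc, Groupoid.inv_comp, F.map_id,
      Category.id_comp])

/-- every hom of costructured arrows over groupoids yields an iso -/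
def csIsoEquivHom (e e' : CostructuredArrow F d) : (e ≅ e') ≃ (e ⟶ e') where
  toFun := Iso.hom
  invFun v := ⟨v, csInv F d v,
    by apply CostructuredArrow.hom_ext; simp [csInv],
    by apply CostructuredArrow.hom_ext; simp [csInv]⟩
  left_inv η := Iso.ext rfl
  right_inv v := rfl

lemma cs_card_end (e : CostructuredArrow F d) :
    Nat.card (e ⟶ e) = Nat.card (Aut e) :=
  Nat.card_congr (csIsoEquivHom F d e e).symm

lemma cs_finite_aut (hCa : ∀ z : C, Finite (Aut z)) (e : CostructuredArrow F d) :
    Finite (Aut e) := by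
  haveI : Finite (e.left ⟶ e.left) := finite_hom hCa _ _
  exact Finite.of_injective (fun (η : Aut e) => η.hom.left)
    (fun η η' h => Iso.ext (CostructuredArrow.hom_ext _ _ h))

lemma cs_pi0_finite (hC : Finite (Quotient (isIsomorphicSetoid C)))
    (hCa : ∀ z : C, Finite (Aut z)) (hDa : ∀ z : D, Finite (Aut z)) :
    Finite (Quotient (isIsomorphicSetoid (CostructuredArrow F d))) := by
  haveI : ∀ c : Quotient (isIsomorphicSetoid C), Finite (F.obj c.out ⟶ d) :=
    fun c => finite_hom hDa _ _
  apply Finite.of_surjective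
    (f := fun p : Σ c : Quotient (isIsomorphicSetoid C), (F.obj c.out ⟶ d) =>
      Quotient.mk (isIsomorphicSetoid (CostructuredArrow F d)) (CostructuredArrow.mk p.2))
  intro q
  set e := q.out with he
  have h1 : (Quotient.mk (isIsomorphicSetoid C) e.left).out ≈ e.left := Quotient.mk_out e.left
  obtain ⟨γ⟩ : Nonempty ((Quotient.mk (isIsomorphicSetoid C) e.left).out ≅ e.left) := h1
  refine ⟨⟨Quotient.mk (isIsomorphicSetoid C) e.left, F.map γ.hom ≫ e.hom⟩, ?_⟩
  have : CostructuredArrow.mk (F.map γ.hom ≫ e.hom) ≅ e :=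
    CostructuredArrow.isoMk γ (by simp)
  calc Quotient.mk (isIsomorphicSetoid (CostructuredArrow F d))
        (CostructuredArrow.mk (F.map γ.hom ≫ e.hom)) = Quotient.mk _ e := Quotient.sound ⟨this⟩
    _ = q := Quotient.out_eq q
end Aux2

section Helpers
variable {A : Type*} [Category A]

lemma pz_sound {x y : A} (h : x ≅ y) :
    Quotient.mk (isIsomorphicSetoid A) x = Quotient.mk (isIsomorphicSetoid A) y :=
  Quotient.sound (Nonempty.intro h)

lemma pz_exact {x y : A}
    (h : Quotient.mk (isIsomorphicSetoid A) x = Quotient.mk (isIsomorphicSetoid A) y) :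
    Nonempty (x ≅ y) :=
  Quotient.exact h

lemma pz_out_iso (x : A) :
    Nonempty ((Quotient.out (Quotient.mk (isIsomorphicSetoid A) x)) ≅ x) :=
  @Quotient.mk_out A (isIsomorphicSetoid A) x
end Helpers

section Key
open Finset
attribute [local instance] CategoryTheory.isIsomorphicSetoid
open scoped Classical
variable {C D : Type*} [Groupoid C] [Groupoid D] (F : C ⥤ D) (d : D)

set_option maxHeartbeats 1000000 in
lemma key1 (hCa : ∀ z : C, Finite (Aut z)) (hDa : ∀ z : D, Finite (Aut z))
    (c : _root_.Quotient (isIsomorphicSetoid C))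
    [Fintype (_root_.Quotient (isIsomorphicSetoid (CostructuredArrow F d)))] :
    ∑ e ∈ Finset.univ.filter
        (fun e : _root_.Quotient (isIsomorphicSetoid (CostructuredArrow F d)) =>
          Quotient.mk (isIsomorphicSetoid C) e.out.left = c),
      ((Nat.card (Aut (Quotient.out e)) : ℚ))⁻¹
    = (Nat.card (F.obj c.out ⟶ d) : ℚ) / (Nat.card (Aut c.out) : ℚ) := by
  haveI : Finite (F.obj c.out ⟶ d) := finite_hom hDa _ _
  haveI : Fintype (F.obj c.out ⟶ d) := Fintype.ofFinite _
  haveI : Finite (Aut c.out) := hCa _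
  haveI : Fintype (Aut c.out) := Fintype.ofFinite _
  set q : (F.obj c.out ⟶ d) → _root_.Quotient (isIsomorphicSetoid (CostructuredArrow F d)) :=
    fun φ => Quotient.mk _ (CostructuredArrow.mk φ) with hqdef
  -- every class q φ lies in the fiber over c
  have hq : ∀ φ, Quotient.mk (isIsomorphicSetoid C) (Quotient.out (q φ)).left = c := by
    intro φ
    obtain ⟨η⟩ := pz_out_iso (CostructuredArrow.mk φ)
    have hiso : (Quotient.out (q φ)).left ≅ c.out := (CostructuredArrow.proj F d).mapIso η
    exact (pz_sound hiso).trans (Quotient.out_eq c)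
  -- the per-fiber counting
  have hcount : ∀ e, Quotient.mk (isIsomorphicSetoid C) (Quotient.out e).left = c →
      (Finset.univ.filter (fun φ => q φ = e)).card * Nat.card (Aut (Quotient.out e))
        = Nat.card (Aut c.out) := by
    intro e he
    have hrel := pz_out_iso (Quotient.out e).left
    rw [he] at hrel
    obtain ⟨γ⟩ := hrel
    set φ₀ : F.obj c.out ⟶ d := F.map γ.hom ≫ (Quotient.out e).hom with hφ₀
    have hmk : CostructuredArrow.mk φ₀ ≅ Quotient.out e :=
      CostructuredArrow.isoMk γ (by simp [hφ₀])
    have h0 : q φ₀ = e := (pz_sound hmk).trans (Quotient.out_eq e)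
    set Ψ : Aut c.out → (F.obj c.out ⟶ d) := fun α => F.map α.hom ≫ φ₀ with hΨ
    have hA : ∀ α, q (Ψ α) = e := by
      intro α
      have hiso : CostructuredArrow.mk (Ψ α) ≅ CostructuredArrow.mk φ₀ :=
        CostructuredArrow.isoMk α (by simp [hΨ])
      exact (pz_sound hiso).trans h0
    have hB : ∀ φ, q φ = e → ∃ α : Aut c.out, Ψ α = φ := by
      intro φ hφ
      obtain ⟨η⟩ := pz_exact (hφ.trans h0.symm)
      refine ⟨(Groupoid.isoEquivHom _ _).symm η.hom.left, ?_⟩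
      have hw := CostructuredArrow.w η.hom
      simpa [hΨ] using hw
    have hfib : ∀ φ, q φ = e →
        Nat.card {α : Aut c.out // Ψ α = φ} = Nat.card (Aut (Quotient.out e)) := by
      intro φ hφ
      obtain ⟨α, hα⟩ := hB φ hφ
      have e1 : {β : Aut c.out // Ψ β = φ} ≃
          {u : c.out ⟶ c.out // F.map u ≫ φ₀ = φ₀} := by
        refine ⟨fun β => ⟨α.inv ≫ β.1.hom, ?_⟩,
               fun u => ⟨(Groupoid.isoEquivHom _ _).symm (α.hom ≫ u.1), ?_⟩, ?_, ?_⟩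
        · have hβ : F.map β.1.hom ≫ φ₀ = φ := β.2
          calc F.map (α.inv ≫ β.1.hom) ≫ φ₀
              = F.map α.inv ≫ (F.map β.1.hom ≫ φ₀) := by simp
            _ = F.map α.inv ≫ (F.map α.hom ≫ φ₀) := by rw [hβ, ← hα]
            _ = φ₀ := by rw [← Category.assoc, ← F.map_comp, α.inv_hom_id, F.map_id,
                Category.id_comp]
        · show F.map (α.hom ≫ u.1) ≫ φ₀ = φ
          calc F.map (α.hom ≫ u.1) ≫ φ₀ = F.map α.hom ≫ (F.map u.1 ≫ φ₀) := by simp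
            _ = F.map α.hom ≫ φ₀ := by rw [u.2]
            _ = φ := hα
        · rintro ⟨β, hβ⟩
          apply Subtype.ext
          apply Iso.ext
          show α.hom ≫ (α.inv ≫ β.hom) = β.hom
          rw [← Category.assoc, α.hom_inv_id, Category.id_comp]
        · rintro ⟨u, hu⟩
          apply Subtype.ext
          show α.inv ≫ (α.hom ≫ u) = u
          rw [← Category.assoc, α.inv_hom_id, Category.id_comp]
      have e2 : {u : c.out ⟶ c.out // F.map u ≫ φ₀ = φ₀} ≃
          (CostructuredArrow.mk φ₀ ⟶ CostructuredArrow.mk φ₀) := by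
        refine ⟨fun u => CostructuredArrow.homMk u.1 (by simpa using u.2),
               fun v => ⟨v.left, by simpa using CostructuredArrow.w v⟩, ?_, ?_⟩
        · rintro ⟨u, hu⟩; apply Subtype.ext; simp
        · intro v; apply CostructuredArrow.hom_ext; simp
      calc Nat.card {α : Aut c.out // Ψ α = φ}
          = Nat.card (CostructuredArrow.mk φ₀ ⟶ CostructuredArrow.mk φ₀) :=
            Nat.card_congr (e1.trans e2)
        _ = Nat.card (Aut (CostructuredArrow.mk φ₀)) := cs_card_end F d _
        _ = Nat.card (Aut (Quotient.out e)) := Nat.card_congr (Iso.conjAut hmk).toEquiv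
    -- now count
    have hmt : ∀ α ∈ (Finset.univ : Finset (Aut c.out)), Ψ α ∈
        Finset.univ.filter (fun φ => q φ = e) := by
      intro α _; simp [hA]
    have hcards := Finset.card_eq_sum_card_fiberwise hmt
    have : ∀ φ ∈ Finset.univ.filter (fun φ => q φ = e),
        (Finset.univ.filter (fun α : Aut c.out => Ψ α = φ)).card
          = Nat.card (Aut (Quotient.out e)) := by
      intro φ hφ
      rw [Finset.mem_filter] at hφ
      rw [← Fintype.card_subtype, ← Nat.card_eq_fintype_card]
      exact hfib φ hφ.2
    rw [Finset.sum_congr rfl this, Finset.sum_const, smul_eq_mul] at hcards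
    rw [← hcards, Nat.card_eq_fintype_card, Finset.card_univ]
  -- assemble
  have hc0 : (0:ℚ) < (Nat.card (Aut c.out) : ℚ) := by
    exact_mod_cast aut_card_pos (hCa c.out)
  have hterm : ∀ e ∈ Finset.univ.filter
      (fun e : _root_.Quotient (isIsomorphicSetoid (CostructuredArrow F d)) =>
        Quotient.mk (isIsomorphicSetoid C) (Quotient.out e).left = c),
      ((Nat.card (Aut (Quotient.out e)) : ℚ))⁻¹
        = ((Finset.univ.filter (fun φ => q φ = e)).card : ℚ)
            / (Nat.card (Aut c.out) : ℚ) := by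
    intro e he
    rw [Finset.mem_filter] at he
    have h' : ((Finset.univ.filter (fun φ => q φ = e)).card : ℚ)
        * (Nat.card (Aut (Quotient.out e)) : ℚ) = (Nat.card (Aut c.out) : ℚ) := by
      exact_mod_cast hcount e he.2
    have hepos : 0 < Nat.card (Aut (Quotient.out e)) :=
      aut_card_pos (cs_finite_aut F d hCa _)
    have hane : (Nat.card (Aut (Quotient.out e)) : ℚ) ≠ 0 := by exact_mod_cast hepos.ne'
    rw [eq_div_iff (ne_of_gt hc0), ← h']
    field_simp [mul_comm]
  rw [Finset.sum_congr rfl hterm, ← Finset.sum_div]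
  congr 1
  rw [← Nat.cast_sum]
  norm_cast
  have hsum := Finset.card_eq_sum_card_fiberwise
    (f := q) (t := Finset.univ.filter
      (fun e : _root_.Quotient (isIsomorphicSetoid (CostructuredArrow F d)) =>
        Quotient.mk (isIsomorphicSetoid C) (Quotient.out e).left = c))
    (s := Finset.univ) (by intro φ _; simp [hq φ])
  rw [Nat.card_eq_fintype_card, ← Finset.card_univ, hsum]

end Key

lemma key2 {D : Type*} [Groupoid D] (hDa : ∀ z : D, Finite (Aut z))
    [Fintype (_root_.Quotient (isIsomorphicSetoid D))] (x : D) :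
    ∑ h : _root_.Quotient (isIsomorphicSetoid D),
      ((Nat.card (Aut (Quotient.out h)) : ℚ))⁻¹ * (Nat.card (x ⟶ Quotient.out h) : ℚ) = 1 := by
  rw [Finset.sum_eq_single (Quotient.mk (isIsomorphicSetoid D) x)]
  · obtain ⟨δ⟩ := pz_out_iso x
    have hcard : Nat.card (x ⟶ (Quotient.mk (isIsomorphicSetoid D) x).out)
        = Nat.card (Aut (Quotient.mk (isIsomorphicSetoid D) x).out) :=
      card_hom_eq_card_aut δ.inv
    rw [hcard]
    have hpos : (0:ℚ) < (Nat.card (Aut (Quotient.mk (isIsomorphicSetoid D) x).out) : ℚ) := by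
      exact_mod_cast aut_card_pos (hDa _)
    rw [inv_mul_cancel₀ (ne_of_gt hpos)]
  · intro h _ hne
    have hemp : IsEmpty (x ⟶ Quotient.out h) := by
      rw [← not_nonempty_iff]
      rintro ⟨ψ⟩
      apply hne
      have hiso : x ≅ Quotient.out h := (Groupoid.isoEquivHom _ _).symm ψ
      exact ((pz_sound hiso).trans (Quotient.out_eq h)).symm
    rw [Nat.card_of_isEmpty (α := (x ⟶ Quotient.out h))]
    simp
  · intro hx
    exact absurd (Finset.mem_univ _) hx

/-- Orbisums are preserved by push-forward: `∫_C f = ∫_D (F_* f)`. -/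
theorem orbisum_pushforward {C D : Type*} [Groupoid C] [Groupoid D]
    (hC : Finite (PiZero C)) (hCa : ∀ x : C, Finite (Aut x))
    (hD : Finite (PiZero D)) (hDa : ∀ y : D, Finite (Aut y))
    {V : Type*} [AddCommGroup V] [Module ℚ V]
    (F : C ⥤ D) (f : PiZero C → V) :
    orbisum f = orbisum (pushforward F f) := by
  classical
  haveI : Fintype (PiZero C) := Fintype.ofFinite _
  haveI : Fintype (PiZero D) := Fintype.ofFinite _
  rw [orbisum, orbisum, finsum_eq_sum_of_fintype, finsum_eq_sum_of_fintype]
  have hpush : ∀ h : PiZero D, pushforward F f h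
      = ∑ c : PiZero C, ((Nat.card (F.obj c.out ⟶ Quotient.out h) : ℚ)
          / (Nat.card (Aut c.out) : ℚ)) • f c := by
    intro h
    haveI : Finite (PiZero (CostructuredArrow F (Quotient.out h))) :=
      cs_pi0_finite F h.out hC hCa hDa
    haveI : Fintype (PiZero (CostructuredArrow F (Quotient.out h))) := Fintype.ofFinite _
    rw [pushforward, orbisum, finsum_eq_sum_of_fintype]
    rw [← Finset.sum_fiberwise_of_maps_to
      (g := fun e : PiZero (CostructuredArrow F (Quotient.out h)) =>
        Quotient.mk (isIsomorphicSetoid C) (Quotient.out e).left)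
      (t := Finset.univ) (fun e _ => Finset.mem_univ _)]
    refine Finset.sum_congr rfl ?_
    intro c _
    have hinner : ∀ e ∈ Finset.univ.filter
        (fun e : PiZero (CostructuredArrow F (Quotient.out h)) =>
          Quotient.mk (isIsomorphicSetoid C) (Quotient.out e).left = c),
        ((Nat.card (Aut (Quotient.out e)) : ℚ))⁻¹
            • f (Quotient.mk (isIsomorphicSetoid C) (Quotient.out e).left)
          = ((Nat.card (Aut (Quotient.out e)) : ℚ))⁻¹ • f c := by
      intro e he
      rw [Finset.mem_filter] at he
      rw [he.2]
    rw [Finset.sum_congr rfl hinner, ← Finset.sum_smul, key1 F h.out hCa hDa c]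
  calc ∑ c : PiZero C, ((Nat.card (Aut (Quotient.out c)) : ℚ))⁻¹ • f c
      = ∑ c : PiZero C, ((∑ h : PiZero D,
          ((Nat.card (Aut (Quotient.out h)) : ℚ))⁻¹
            * (Nat.card (F.obj c.out ⟶ Quotient.out h) : ℚ))
          * ((Nat.card (Aut (Quotient.out c)) : ℚ))⁻¹) • f c := by
        refine Finset.sum_congr rfl ?_
        intro c _
        rw [key2 hDa (F.obj c.out), one_mul]
    _ = ∑ c : PiZero C, ∑ h : PiZero D,
          (((Nat.card (Aut (Quotient.out h)) : ℚ))⁻¹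
            * ((Nat.card (F.obj c.out ⟶ Quotient.out h) : ℚ)
              / (Nat.card (Aut (Quotient.out c)) : ℚ))) • f c := by
        refine Finset.sum_congr rfl ?_
        intro c _
        rw [← Finset.sum_smul, Finset.sum_mul]
        congr 1
        refine Finset.sum_congr rfl ?_
        intro h _
        rw [mul_assoc, div_eq_mul_inv]
    _ = ∑ h : PiZero D, ∑ c : PiZero C,
          (((Nat.card (Aut (Quotient.out h)) : ℚ))⁻¹
            * ((Nat.card (F.obj c.out ⟶ Quotient.out h) : ℚ)
              / (Nat.card (Aut (Quotient.out c)) : ℚ))) • f c := Finset.sum_comm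
    _ = ∑ h : PiZero D, ((Nat.card (Aut (Quotient.out h)) : ℚ))⁻¹ • pushforward F f h := by
        refine Finset.sum_congr rfl ?_
        intro h _
        rw [hpush h, Finset.smul_sum]
        refine Finset.sum_congr rfl ?_
        intro c _
        rw [smul_smul]
end

section
/- Let F: 𝒢 → ℋ be a functor between finite groupoids such that the comma category (F ↓ h) is equivalent to a discrete category for every object h of ℋ. Let LF: Fun(ℤ,𝒢) → Fun(ℤ,ℋ) be the induced functor given by composing with F. Then for every object (h, τ) of Fun(ℤ,ℋ), the comma category (LF ↓ (h,τ)) is equivalent to a discrete category, and the set π₀(LF ↓ (h,τ)) of its isomorphism classes is in bijection with the set of isomorphism classes in π₀(F ↓ h) that are fixed by the map sending the class of (g, φ: F(g) → h) to the class of (g, τ∘φ). -/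
open CategoryTheory

namespace FreeLoopsAux

open CategoryTheory Multiplicative

theorem faithful_of_disc {G H : Type} [Groupoid G] [Groupoid H] (F : G ⥤ H)
    (hdisc : ∀ h : H, ∃ S : Type, Nonempty (CostructuredArrow F h ≌ Discrete S))
    {x y : G} (f g : x ⟶ y) (hfg : F.map f = F.map g) : f = g := by
  obtain ⟨S, ⟨E⟩⟩ := hdisc (F.obj y)
  have h1 : (CostructuredArrow.homMk f (by simp) :
      CostructuredArrow.mk (F.map f) ⟶ CostructuredArrow.mk (𝟙 (F.obj y))) =
      CostructuredArrow.homMk g (by simp [hfg]) :=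
    E.functor.map_injective (Subsingleton.elim _ _)
  simpa using congrArg CommaMorphism.left h1

/-- A category with all morphisms invertible and subsingleton hom-sets is equivalent to the
discrete category on its isomorphism classes. -/
noncomputable def toDisc (C : Type*) [Category C]
    (h0 : ∀ {X Y : C} (f : X ⟶ Y), IsIso f) : C ⥤ Discrete (PiZero C) where
  obj X := ⟨Quotient.mk _ X⟩
  map {X Y} f := eqToHom (by
    have : IsIsomorphic X Y := ⟨@asIso _ _ _ _ f (h0 f)⟩
    exact congrArg Discrete.mk (Quotient.sound this))
  map_id _ := Subsingleton.elim _ _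
  map_comp _ _ := Subsingleton.elim _ _

theorem equiv_discrete (C : Type*) [Category C]
    (h0 : ∀ {X Y : C} (f : X ⟶ Y), IsIso f)
    (h1 : ∀ (X Y : C) (u v : X ⟶ Y), u = v) :
    Nonempty (C ≌ Discrete (PiZero C)) := by
  letI Φ := toDisc C h0
  haveI : Φ.Faithful := ⟨fun {X Y f g} _ => h1 X Y f g⟩
  haveI : Φ.Full := ⟨fun {X Y} u => ⟨(Quotient.exact u.down.down).some.hom, Subsingleton.elim _ _⟩⟩
  haveI : Φ.EssSurj := ⟨fun q => ⟨q.as.out, ⟨eqToIso (congrArg Discrete.mk (Quotient.out_eq q.as))⟩⟩⟩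
  haveI : Φ.IsEquivalence := ⟨inferInstance, inferInstance, inferInstance⟩
  exact ⟨Φ.asEquivalence⟩

/-- Key naturality lemma: an endomorphism conjugate to the generator image extends to all powers. -/
theorem pow_nat {H : Type} [Groupoid H] (T : SingleObj (Multiplicative ℤ) ⥤ H)
    {Y : H} (ρ : End Y) (u : Y ⟶ T.obj (SingleObj.star (Multiplicative ℤ)))
    (hk : (ρ : Y ⟶ Y) ≫ u = u ≫ T.map (ofAdd 1)) (a : Multiplicative ℤ) :
    ((ρ ^ a.toAdd : End Y) : Y ⟶ Y) ≫ u = u ≫ T.map a := by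
  have h12 : ((asIso u).conj.toMonoidHom.comp (zpowersHom (End Y) ρ)) =
      (T.mapEnd (SingleObj.star (Multiplicative ℤ))).comp
        (SingleObj.toEnd (Multiplicative ℤ)).toMonoidHom := by
    apply MonoidHom.ext_mint
    show (asIso u).conj (ρ ^ ((ofAdd (1:ℤ)).toAdd)) = T.map (ofAdd 1)
    rw [Iso.conj_apply]
    simp only [toAdd_ofAdd, zpow_one, asIso_inv, asIso_hom]
    rw [hk]
    simp
  have h2 := congrArg (fun (φ : Multiplicative ℤ →* End (T.obj (SingleObj.star (Multiplicative ℤ)))) => φ a) h12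
  simp only [MonoidHom.comp_apply, MulEquiv.coe_toMonoidHom, zpowersHom_apply] at h2
  rw [Iso.conj_apply] at h2
  have h3 : (ρ ^ a.toAdd : End Y) ≫ u = u ≫ ((asIso u).inv ≫ (ρ ^ a.toAdd : End Y) ≫ (asIso u).hom) := by
    simp
  rw [h3, h2]
  rfl

end FreeLoopsAux

/-- Lemma on free loop groupoids: if `F : G ⥤ H` is a functor between finite groupoids
all of whose comma categories `(F ↓ h)` are equivalent to discrete categories, then for
the induced functor `LF : Fun(ℤ,G) ⥤ Fun(ℤ,H)` (given by postcomposition with `F`) the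
comma category `(LF ↓ (h,τ))` over any object `(h, τ)` is equivalent to a discrete
category, and its set of isomorphism classes is in bijection with the set of classes in
`π₀(F ↓ h)` fixed by the map `[(g, φ : F(g) → h)] ↦ [(g, τ ∘ φ)]`. -/
theorem comma_of_free_loops_discrete {G H : Type} [Groupoid G] [Groupoid H]
    (hG : Finite (PiZero G)) (hGa : ∀ x : G, Finite (Aut x))
    (hH : Finite (PiZero H)) (hHa : ∀ y : H, Finite (Aut y))
    (F : G ⥤ H)
    (hdisc : ∀ h : H, ∃ S : Type, Nonempty (CostructuredArrow F h ≌ Discrete S))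
    (T : SingleObj (Multiplicative ℤ) ⥤ H) :
    (∃ S : Type,
        Nonempty
          (CostructuredArrow ((Functor.whiskeringRight (SingleObj (Multiplicative ℤ)) G H).obj F) T ≌
            Discrete S)) ∧
    Nonempty
      (PiZero (CostructuredArrow ((Functor.whiskeringRight (SingleObj (Multiplicative ℤ)) G H).obj F) T) ≃
        {c : PiZero (CostructuredArrow F (T.obj (SingleObj.star (Multiplicative ℤ)))) //
          Quotient.mk (isIsomorphicSetoid _)
              (CostructuredArrow.mk ((Quotient.out c).hom ≫
                T.map (show SingleObj.star (Multiplicative ℤ) ⟶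
                    SingleObj.star (Multiplicative ℤ) from Multiplicative.ofAdd 1))) = c}) := by
  classical
  have hfaith : ∀ {x y : G} (f g : x ⟶ y), F.map f = F.map g → f = g :=
    fun f g h => FreeLoopsAux.faithful_of_disc F hdisc f g h
  set LF := (Functor.whiskeringRight (SingleObj (Multiplicative ℤ)) G H).obj F with hLF
  set st := SingleObj.star (Multiplicative ℤ) with hst
  -- hom-sets of the comma category over T are subsingletons
  have hsub : ∀ (X Y : CostructuredArrow LF T) (u v : X ⟶ Y), u = v := by
    intro X Y u v
    have hl : u.left = v.left := by
      apply NatTrans.ext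
      funext j
      apply hfaith
      have h1 : F.map (u.left.app j) ≫ Y.hom.app j = F.map (v.left.app j) ≫ Y.hom.app j := by
        have := congrArg (fun (t : LF.obj X.left ⟶ T) => t.app j)
          ((CostructuredArrow.w u).trans (CostructuredArrow.w v).symm)
        simp only [NatTrans.comp_app, hLF, Functor.whiskeringRight_obj_map, Functor.whiskerRight_app] at this
        exact this
      exact (cancel_mono (Y.hom.app j)).mp h1
    apply CommaMorphism.ext
    · exact hl
    · exact Subsingleton.elim _ _
  -- all morphisms in the comma category over T are isomorphisms
  have hiso : ∀ {X Y : CostructuredArrow LF T} (u : X ⟶ Y), IsIso u := by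
    intro X Y u
    haveI : IsIso u.left := NatIso.isIso_of_isIso_app u.left
    refine ⟨CostructuredArrow.homMk (inv u.left) ?_, hsub _ _ _ _, hsub _ _ _ _⟩
    rw [← CostructuredArrow.w u, ← Functor.map_comp_assoc, IsIso.inv_hom_id,
      CategoryTheory.Functor.map_id, Category.id_comp]
  set bp := T.obj st with hbp
  set tau := T.map ((Multiplicative.ofAdd 1 : Multiplicative ℤ) : st ⟶ st) with htau
  -- the comparison map on objects
  let Ψobj : CostructuredArrow LF T → CostructuredArrow F bp := fun X =>
    CostructuredArrow.mk (S := F) (X.hom.app st)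
  have hΨ : ∀ (X Y : CostructuredArrow LF T), IsIsomorphic X Y →
      (Quotient.mk (isIsomorphicSetoid _) (Ψobj X) : PiZero (CostructuredArrow F bp)) =
        Quotient.mk (isIsomorphicSetoid _) (Ψobj Y) := by
    rintro X Y ⟨e⟩
    refine Quotient.sound ⟨CostructuredArrow.isoMk (asIso (e.hom.left.app st)) ?_⟩
    have hw : F.map (e.hom.left.app st) ≫ Y.hom.app st = X.hom.app st :=
      congrArg (fun (t : LF.obj X.left ⟶ T) => t.app st) (CostructuredArrow.w e.hom)
    simpa [Ψobj] using hw
  let ΨQ : PiZero (CostructuredArrow LF T) → PiZero (CostructuredArrow F bp) :=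
    Quotient.lift (fun X => Quotient.mk (isIsomorphicSetoid _) (Ψobj X)) hΨ
  -- the "action by tau" respects isomorphism
  have hact : ∀ (D E : CostructuredArrow F bp), IsIsomorphic D E →
      IsIsomorphic (CostructuredArrow.mk (D.hom ≫ tau) : CostructuredArrow F bp)
        (CostructuredArrow.mk (E.hom ≫ tau)) := by
    rintro D E ⟨e⟩
    refine ⟨CostructuredArrow.isoMk (asIso e.hom.left) ?_⟩
    have hw := CostructuredArrow.w e.hom
    simp only [CostructuredArrow.mk_hom_eq_self, asIso_hom, ← Category.assoc, hw]
  have hfixrep : ∀ (c : PiZero (CostructuredArrow F bp)) (D : CostructuredArrow F bp),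
      Quotient.mk (isIsomorphicSetoid _) D = c →
      ((Quotient.mk (isIsomorphicSetoid _)
          (CostructuredArrow.mk ((Quotient.out c).hom ≫ tau)) : PiZero (CostructuredArrow F bp)) = c ↔
        (Quotient.mk (isIsomorphicSetoid _)
          (CostructuredArrow.mk (D.hom ≫ tau)) : PiZero (CostructuredArrow F bp)) = c) := by
    intro c D hD
    have heq : (Quotient.mk (isIsomorphicSetoid _)
        (CostructuredArrow.mk ((Quotient.out c).hom ≫ tau)) : PiZero (CostructuredArrow F bp)) =
        Quotient.mk (isIsomorphicSetoid _) (CostructuredArrow.mk (D.hom ≫ tau)) := by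
      apply Quotient.sound
      apply hact
      exact Quotient.exact (show Quotient.mk (isIsomorphicSetoid _) (Quotient.out c) =
        Quotient.mk (isIsomorphicSetoid _) D from by rw [Quotient.out_eq, hD])
    rw [heq]
  -- images of the comparison map are fixed points
  have hfix : ∀ X : CostructuredArrow LF T,
      Quotient.mk (isIsomorphicSetoid _)
          (CostructuredArrow.mk ((Quotient.out (ΨQ (Quotient.mk (isIsomorphicSetoid _) X))).hom ≫ tau)) =
        ΨQ (Quotient.mk (isIsomorphicSetoid _) X) := by
    intro X
    rw [hfixrep (ΨQ (Quotient.mk (isIsomorphicSetoid _) X)) (Ψobj X) rfl]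
    show _ = Quotient.mk (isIsomorphicSetoid _) (Ψobj X)
    apply Quotient.sound
    refine ⟨CostructuredArrow.isoMk
      (asIso (X.left.map ((Multiplicative.ofAdd 1 : Multiplicative ℤ) : st ⟶ st))) ?_⟩
    have hn : F.map (X.left.map ((Multiplicative.ofAdd 1 : Multiplicative ℤ) : st ⟶ st)) ≫
        X.hom.app st = X.hom.app st ≫ tau :=
      X.hom.naturality ((Multiplicative.ofAdd 1 : Multiplicative ℤ) : st ⟶ st)
    simpa [Ψobj] using hn
  -- injectivity
  have hinj : ∀ (X Y : CostructuredArrow LF T),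
      (Quotient.mk (isIsomorphicSetoid _) (Ψobj X) : PiZero (CostructuredArrow F bp)) =
        Quotient.mk (isIsomorphicSetoid _) (Ψobj Y) →
      (Quotient.mk (isIsomorphicSetoid _) X : PiZero (CostructuredArrow LF T)) =
        Quotient.mk (isIsomorphicSetoid _) Y := by
    intro X Y hxy
    obtain ⟨e⟩ := Quotient.exact hxy
    have hγ : F.map e.hom.left ≫ Y.hom.app st = X.hom.app st := by
      simpa [Ψobj] using CostructuredArrow.w e.hom
    have hnat : ∀ a : Multiplicative ℤ,
        X.left.map (a : st ⟶ st) ≫ e.hom.left = e.hom.left ≫ Y.left.map (a : st ⟶ st) := by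
      intro a
      apply hfaith
      have n1 : F.map (X.left.map (a : st ⟶ st)) ≫ X.hom.app st =
          X.hom.app st ≫ T.map (a : st ⟶ st) := X.hom.naturality (a : st ⟶ st)
      have n2 : F.map (Y.left.map (a : st ⟶ st)) ≫ Y.hom.app st =
          Y.hom.app st ≫ T.map (a : st ⟶ st) := Y.hom.naturality (a : st ⟶ st)
      refine (cancel_mono (Y.hom.app st)).mp ?_
      calc F.map (X.left.map (a : st ⟶ st) ≫ e.hom.left) ≫ Y.hom.app st
          = F.map (X.left.map (a : st ⟶ st)) ≫ F.map e.hom.left ≫ Y.hom.app st := by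
            rw [Functor.map_comp, Category.assoc]
        _ = F.map (X.left.map (a : st ⟶ st)) ≫ X.hom.app st := by rw [hγ]
        _ = X.hom.app st ≫ T.map (a : st ⟶ st) := n1
        _ = (F.map e.hom.left ≫ Y.hom.app st) ≫ T.map (a : st ⟶ st) := by rw [hγ]
        _ = F.map e.hom.left ≫ Y.hom.app st ≫ T.map (a : st ⟶ st) := by rw [Category.assoc]
        _ = F.map e.hom.left ≫ F.map (Y.left.map (a : st ⟶ st)) ≫ Y.hom.app st := by rw [n2]
        _ = F.map (e.hom.left ≫ Y.left.map (a : st ⟶ st)) ≫ Y.hom.app st := by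
            rw [Functor.map_comp, Category.assoc]
    haveI : IsIso e.hom.left := inferInstance
    have hnat' : ∀ a : Multiplicative ℤ,
        Y.left.map (a : st ⟶ st) ≫ inv e.hom.left = inv e.hom.left ≫ X.left.map (a : st ⟶ st) := by
      intro a
      rw [IsIso.comp_inv_eq, Category.assoc, hnat a, IsIso.inv_hom_id_assoc]
    refine Quotient.sound ⟨⟨CostructuredArrow.homMk (SingleObj.natTrans e.hom.left hnat) ?_,
      CostructuredArrow.homMk (SingleObj.natTrans (inv e.hom.left) hnat') ?_,
      hsub _ _ _ _, hsub _ _ _ _⟩⟩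
    · apply NatTrans.ext
      funext j
      exact hγ
    · apply NatTrans.ext
      funext j
      have hh : F.map (inv e.hom.left) ≫ X.hom.app st = Y.hom.app st := by
        rw [← hγ, ← Functor.map_comp_assoc, IsIso.inv_hom_id, CategoryTheory.Functor.map_id, Category.id_comp]
      exact hh
  have hinj' : ∀ (q q' : PiZero (CostructuredArrow LF T)), ΨQ q = ΨQ q' → q = q' :=
    fun q q' => Quotient.inductionOn₂ q q' hinj
  -- surjectivity
  have hsurj : ∀ (c : PiZero (CostructuredArrow F bp)),
      Quotient.mk (isIsomorphicSetoid _) (CostructuredArrow.mk ((Quotient.out c).hom ≫ tau)) = c →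
      ∃ q : PiZero (CostructuredArrow LF T), ΨQ q = c := by
    intro c hc
    obtain ⟨e⟩ : Nonempty ((CostructuredArrow.mk ((Quotient.out c).hom ≫ tau) :
        CostructuredArrow F bp) ≅ Quotient.out c) :=
      Quotient.exact (hc.trans (Quotient.out_eq c).symm)
    set D := Quotient.out c with hD
    let σ : End D.left := e.hom.left
    have hσ : F.map σ ≫ D.hom = D.hom ≫ tau := CostructuredArrow.w e.hom
    let P : SingleObj (Multiplicative ℤ) ⥤ G := SingleObj.functor (zpowersHom (End D.left) σ)
    have hP : ∀ a : Multiplicative ℤ,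
        (P ⋙ F).map (X := st) (Y := st) a ≫ D.hom = D.hom ≫ T.map (X := st) (Y := st) a := by
      intro a
      have key : ((F.mapEnd D.left) σ : F.obj D.left ⟶ F.obj D.left) ≫ D.hom =
          D.hom ≫ T.map (Multiplicative.ofAdd 1) := hσ
      have hpn := FreeLoopsAux.pow_nat T ((F.mapEnd D.left) σ) D.hom key a
      have hm : (P ⋙ F).map (X := st) (Y := st) a =
          (((F.mapEnd D.left) σ ^ a.toAdd : End (F.obj D.left)) :
            F.obj D.left ⟶ F.obj D.left) := by
        show F.map ((σ ^ a.toAdd : End D.left) : D.left ⟶ D.left) = _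
        exact map_zpow (F.mapEnd D.left) σ a.toAdd
      rw [hm]
      exact hpn
    let φ : LF.obj P ⟶ T := SingleObj.natTrans (M := Multiplicative ℤ) D.hom hP
    refine ⟨Quotient.mk (isIsomorphicSetoid _) (CostructuredArrow.mk (S := LF) φ), ?_⟩
    show Quotient.mk (isIsomorphicSetoid _) (Ψobj (CostructuredArrow.mk (S := LF) φ)) = c
    have hde : Ψobj (CostructuredArrow.mk (S := LF) φ) = D := (CostructuredArrow.eq_mk D).symm
    rw [hde, hD]
    exact Quotient.out_eq c
  -- Hom-sets in a groupoid with finite automorphism groups are finite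
  have hHomFin : ∀ (a b : H), Finite (a ⟶ b) := by
    intro a b
    by_cases hne : Nonempty (a ⟶ b)
    · obtain ⟨f0⟩ := hne
      haveI : Finite (b ≅ b) := hHa b
      refine Finite.of_injective (fun (g : a ⟶ b) => (asIso (Groupoid.inv f0 ≫ g) : Aut b)) ?_
      intro g g' hgg'
      have h2 : Groupoid.inv f0 ≫ g = Groupoid.inv f0 ≫ g' := congrArg Iso.hom hgg'
      exact (cancel_epi (Groupoid.inv f0)).mp h2
    · haveI : IsEmpty (a ⟶ b) := not_nonempty_iff.mp hne
      infer_instance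
  -- π₀ of the comma category over bp is finite
  haveI hDfin : Finite (PiZero (CostructuredArrow F bp)) := by
    haveI := hG
    haveI : ∀ d : PiZero G, Finite (F.obj (Quotient.out d) ⟶ bp) := fun d => hHomFin _ _
    refine Finite.of_surjective
      (fun p : Σ d : PiZero G, (F.obj (Quotient.out d) ⟶ bp) =>
        (Quotient.mk (isIsomorphicSetoid _) (CostructuredArrow.mk (S := F) p.2) :
          PiZero (CostructuredArrow F bp))) ?_
    intro c
    obtain ⟨e⟩ := Quotient.exact
      (Quotient.out_eq (Quotient.mk (isIsomorphicSetoid G) (Quotient.out c).left))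
    refine ⟨⟨Quotient.mk (isIsomorphicSetoid G) (Quotient.out c).left,
      F.map e.hom ≫ (Quotient.out c).hom⟩, ?_⟩
    have hiso2 : IsIsomorphic
        (CostructuredArrow.mk (S := F) (F.map e.hom ≫ (Quotient.out c).hom))
        (Quotient.out c) := ⟨CostructuredArrow.isoMk e rfl⟩
    exact (Quotient.sound hiso2).trans (Quotient.out_eq c)
  -- the comparison bijection
  let cond : PiZero (CostructuredArrow F bp) → Prop := fun c =>
    Quotient.mk (isIsomorphicSetoid _) (CostructuredArrow.mk ((Quotient.out c).hom ≫ tau)) = c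
  let Θ : PiZero (CostructuredArrow LF T) → {c : PiZero (CostructuredArrow F bp) // cond c} :=
    fun q => ⟨ΨQ q, Quotient.inductionOn (motive := fun q => cond (ΨQ q)) q hfix⟩
  have hbij : Function.Bijective Θ := by
    constructor
    · intro q q' hqq'
      exact hinj' q q' (congrArg Subtype.val hqq')
    · rintro ⟨c, hc⟩
      obtain ⟨q, hq⟩ := hsurj c hc
      exact ⟨q, Subtype.ext hq⟩
  haveI hCfin : Finite (PiZero (CostructuredArrow LF T)) := Finite.of_injective Θ hbij.1
  obtain ⟨n, ⟨efin⟩⟩ := Finite.exists_equiv_fin (PiZero (CostructuredArrow LF T))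
  obtain ⟨eq1⟩ := FreeLoopsAux.equiv_discrete (CostructuredArrow LF T) (fun {X Y} u => hiso u) hsub
  constructor
  · exact ⟨Fin n, ⟨eq1.trans (Discrete.equivalence efin)⟩⟩
  · exact ⟨Equiv.ofBijective Θ hbij⟩
end

section
/- Let g ≥ 0 and n ≥ 1 be integers with 2g − 2 + (n−1) > 0. Let S_n be a finite set of stable, connected, genus g, n-marked graphs containing exactly one representative from each isomorphism class of such graphs, and let S_{n−1} be such a set for (n−1)-marked graphs. Then ∑_{G ∈ S_n} (−1)^{|E(G)|}/|Aut(G)| = (2 − g − n) · ∑_{G ∈ S_{n−1}} (−1)^{|E(G)|}/|Aut(G)|. -/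
/-- A graph with `n` (not necessarily distinct) marked points: finite sets of
vertices `V` and half-edges `H`, a fixed-point-free involution `s` on half-edges,
an attaching map `r : H → V`, and a marking `m : Fin n → V`. -/
structure MarkedGraph (n : ℕ) where
  V : Type
  H : Type
  finV : Finite V
  finH : Finite H
  s : H → H
  s_invol : ∀ x, s (s x) = x
  s_ne : ∀ x, s x ≠ x
  r : H → V
  m : Fin n → V

namespace MarkedGraph

variable {n : ℕ}

/-- The number of edges: since `s` is a fixed-point-free involution on the half-edges,
the set of edges `E = H/(x ∼ s x)` has cardinality `|H|/2`. -/
noncomputable def numEdges (G : MarkedGraph n) : ℕ := Nat.card G.H / 2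

/-- `G` has genus `g` if `|V| - |E| = 1 - g`. -/
def IsGenus (G : MarkedGraph n) (g : ℕ) : Prop :=
  Nat.card G.V + g = 1 + G.numEdges

/-- Two vertices are adjacent if some edge joins them. -/
def Adj (G : MarkedGraph n) (v w : G.V) : Prop :=
  ∃ x : G.H, G.r x = v ∧ G.r (G.s x) = w

/-- `G` is connected: there is a vertex, and any two vertices are joined by a path
of edges. -/
def Connected (G : MarkedGraph n) : Prop :=
  Nonempty G.V ∧ ∀ v w : G.V, Relation.ReflTransGen G.Adj v w

/-- `G` is stable: every vertex carries at least three half-edges or markings. -/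
def Stable (G : MarkedGraph n) : Prop :=
  ∀ v : G.V, 3 ≤ Nat.card {x : G.H // G.r x = v} + Nat.card {i : Fin n // G.m i = v}

/-- An isomorphism of `n`-marked graphs. -/
structure Iso (G G' : MarkedGraph n) where
  tV : G.V ≃ G'.V
  tH : G.H ≃ G'.H
  comm_s : ∀ x, tH (G.s x) = G'.s (tH x)
  comm_r : ∀ x, tV (G.r x) = G'.r (tH x)
  comm_m : ∀ i, tV (G.m i) = G'.m i

end MarkedGraph

-- ====== auxiliary infrastructure ======
namespace MarkedGraph

variable {n : ℕ}

instance instFinV (G : MarkedGraph n) : Finite G.V := G.finV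
instance instFinH (G : MarkedGraph n) : Finite G.H := G.finH

theorem Iso.ext' {G G' : MarkedGraph n} {ψ χ : Iso G G'} (hV : ψ.tV = χ.tV)
    (hH : ψ.tH = χ.tH) : ψ = χ := by
  cases ψ; cases χ; simp_all

def Iso.refl (G : MarkedGraph n) : Iso G G :=
  ⟨Equiv.refl _, Equiv.refl _, fun _ => rfl, fun _ => rfl, fun _ => rfl⟩

def Iso.symm {G G' : MarkedGraph n} (ψ : Iso G G') : Iso G' G where
  tV := ψ.tV.symm
  tH := ψ.tH.symm
  comm_s x := by
    apply ψ.tH.injective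
    rw [Equiv.apply_symm_apply, ψ.comm_s, Equiv.apply_symm_apply]
  comm_r x := by
    apply ψ.tV.injective
    rw [Equiv.apply_symm_apply, ψ.comm_r, Equiv.apply_symm_apply]
  comm_m i := by
    apply ψ.tV.injective
    rw [Equiv.apply_symm_apply, ψ.comm_m]

def Iso.trans {G₁ G₂ G₃ : MarkedGraph n} (ψ : Iso G₁ G₂) (χ : Iso G₂ G₃) : Iso G₁ G₃ where
  tV := ψ.tV.trans χ.tV
  tH := ψ.tH.trans χ.tH
  comm_s x := by simp [ψ.comm_s, χ.comm_s]
  comm_r x := by simp [ψ.comm_r, χ.comm_r]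
  comm_m i := by simp [ψ.comm_m, χ.comm_m]

instance {G G' : MarkedGraph n} : Finite (Iso G G') :=
  Finite.of_injective (fun ψ => (ψ.tV, ψ.tH))
    (fun a b h => Iso.ext' (congrArg Prod.fst h) (congrArg Prod.snd h))

theorem card_iso_left {A B : MarkedGraph n} (ψ : Iso A B) :
    Nat.card (Iso A B) = Nat.card (Iso A A) :=
  Nat.card_congr
    { toFun := fun χ => χ.trans ψ.symm
      invFun := fun φ => φ.trans ψ
      left_inv := fun χ => by
        apply Iso.ext' <;> apply Equiv.ext <;> intro x <;>
          simp [Iso.trans, Iso.symm]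
      right_inv := fun φ => by
        apply Iso.ext' <;> apply Equiv.ext <;> intro x <;>
          simp [Iso.trans, Iso.symm] }

theorem card_iso_right {A B : MarkedGraph n} (ψ : Iso A B) :
    Nat.card (Iso A B) = Nat.card (Iso B B) :=
  Nat.card_congr
    { toFun := fun χ => ψ.symm.trans χ
      invFun := fun φ => ψ.trans φ
      left_inv := fun χ => by
        apply Iso.ext' <;> apply Equiv.ext <;> intro x <;>
          simp [Iso.trans, Iso.symm]
      right_inv := fun φ => by
        apply Iso.ext' <;> apply Equiv.ext <;> intro x <;>
          simp [Iso.trans, Iso.symm] }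

theorem card_iso_symm (A B : MarkedGraph n) :
    Nat.card (Iso A B) = Nat.card (Iso B A) :=
  Nat.card_congr
    { toFun := Iso.symm
      invFun := Iso.symm
      left_inv := fun χ => by
        apply Iso.ext' <;> apply Equiv.ext <;> intro x <;> simp [Iso.symm]
      right_inv := fun χ => by
        apply Iso.ext' <;> apply Equiv.ext <;> intro x <;> simp [Iso.symm] }

theorem aut_pos (G : MarkedGraph n) : 0 < Nat.card (Iso G G) :=
  Nat.card_pos_iff.mpr ⟨⟨Iso.refl G⟩, inferInstance⟩

theorem numEdges_iso {A B : MarkedGraph n} (ψ : Iso A B) : A.numEdges = B.numEdges := by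
  unfold numEdges; rw [Nat.card_congr ψ.tH]

theorem card_halves_iso {A B : MarkedGraph n} (ψ : Iso A B) (v : A.V) :
    Nat.card {x : A.H // A.r x = v} = Nat.card {x : B.H // B.r x = ψ.tV v} :=
  Nat.card_congr (Equiv.subtypeEquiv ψ.tH (fun x => by
    rw [← ψ.comm_r]; exact (Equiv.apply_eq_iff_eq ψ.tV).symm))

theorem card_marks_iso {A B : MarkedGraph n} (ψ : Iso A B) (v : A.V)
    {γ : Type*} (f : γ → Fin n) :
    Nat.card {i : γ // A.m (f i) = v} = Nat.card {i : γ // B.m (f i) = ψ.tV v} :=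
  Nat.card_congr
    { toFun := fun i => ⟨i.1, by rw [← ψ.comm_m (f i.1), i.2]⟩
      invFun := fun i => ⟨i.1, ψ.tV.injective (by rw [ψ.comm_m (f i.1), i.2])⟩
      left_inv := fun i => rfl
      right_inv := fun i => rfl }

theorem card_marks_iso' {A B : MarkedGraph n} (ψ : Iso A B) (v : A.V) :
    Nat.card {i : Fin n // A.m i = v} = Nat.card {i : Fin n // B.m i = ψ.tV v} :=
  Nat.card_congr
    { toFun := fun i => ⟨i.1, by rw [← ψ.comm_m i.1, i.2]⟩
      invFun := fun i => ⟨i.1, ψ.tV.injective (by rw [ψ.comm_m i.1, i.2])⟩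
      left_inv := fun i => rfl
      right_inv := fun i => rfl }

theorem stable_iso {A B : MarkedGraph n} (ψ : Iso A B) (hA : A.Stable) : B.Stable := by
  intro v
  have := hA (ψ.tV.symm v)
  rwa [card_halves_iso ψ, card_marks_iso' ψ, Equiv.apply_symm_apply] at this

theorem even_card_of_involution {α : Type*} [Finite α] (f : α → α)
    (hinv : ∀ a, f (f a) = a) (hne : ∀ a, f a ≠ a) : Even (Nat.card α) := by
  classical
  cases nonempty_fintype α
  rw [Nat.card_eq_fintype_card]
  have key : ∀ (s : Finset α), (∀ a ∈ s, f a ∈ s) → Even s.card := by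
    intro s
    induction s using Finset.strongInduction with
    | _ s ih =>
      intro hstab
      rcases s.eq_empty_or_nonempty with rfl | ⟨a, ha⟩
      · simp
      · have hfa : f a ∈ s := hstab a ha
        have hss : ({a, f a} : Finset α) ⊆ s := by
          intro x hx; simp only [Finset.mem_insert, Finset.mem_singleton] at hx
          rcases hx with rfl | rfl
          exacts [ha, hfa]
        have hc2 : ({a, f a} : Finset α).card = 2 := by
          rw [Finset.card_insert_of_notMem (by simp [Ne.symm (hne a)]), Finset.card_singleton]
        have hlt : s \ {a, f a} ⊂ s := Finset.sdiff_ssubset hss ⟨a, by simp⟩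
        have hst : ∀ b ∈ s \ {a, f a}, f b ∈ s \ {a, f a} := by
          intro b hb
          simp only [Finset.mem_sdiff, Finset.mem_insert, Finset.mem_singleton,
            not_or] at hb ⊢
          refine ⟨hstab b hb.1, ?_, ?_⟩
          · intro h
            exact hb.2.2 (by rw [← h, hinv])
          · intro h
            have : b = a := by rw [← hinv b, h, hinv]
            exact hb.2.1 this
        have hev := ih _ hlt hst
        have hcard : s.card = (s \ {a, f a}).card + 2 := by
          rw [Finset.card_sdiff_of_subset hss, hc2]
          have := Finset.card_le_card hss
          omega
        rw [hcard]
        exact hev.add (by decide)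
  have := key Finset.univ (fun a _ => Finset.mem_univ _)
  simpa using this


-- ====== helper equivalences ======

def sumUnitNe (α : Type*) : α ≃ {z : α ⊕ Unit // ∀ u : Unit, z ≠ Sum.inr u} where
  toFun a := ⟨Sum.inl a, by simp⟩
  invFun z := match z with
    | ⟨Sum.inl a, _⟩ => a
    | ⟨Sum.inr u, h⟩ => absurd rfl (h u)
  left_inv a := rfl
  right_inv z := by
    obtain ⟨z, h⟩ := z
    cases z with
    | inl a => rfl
    | inr u => exact absurd rfl (h u)

def sumBoolNe (α : Type*) : α ≃ {z : α ⊕ Bool // ∀ b : Bool, z ≠ Sum.inr b} where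
  toFun a := ⟨Sum.inl a, by simp⟩
  invFun z := match z with
    | ⟨Sum.inl a, _⟩ => a
    | ⟨Sum.inr b, h⟩ => absurd rfl (h b)
  left_inv a := rfl
  right_inv z := by
    obtain ⟨z, h⟩ := z
    cases z with
    | inl a => rfl
    | inr b => exact absurd rfl (h b)

open Classical in
noncomputable def complSingle {α : Type*} (a₀ : α) : {z : α // z ≠ a₀} ⊕ Unit ≃ α where
  toFun z := match z with
    | Sum.inl z => z.1
    | Sum.inr _ => a₀
  invFun w := if h : w = a₀ then Sum.inr () else Sum.inl ⟨w, h⟩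
  left_inv z := by
    rcases z with ⟨z, hz⟩ | u
    · simp [hz]
    · simp
  right_inv w := by
    by_cases h : w = a₀ <;> simp [h]

open Classical in
noncomputable def complPair {α : Type*} {a₁ a₂ : α} (hne : a₁ ≠ a₂) {P : α → Prop}
    (hP : ∀ z, P z ↔ (z ≠ a₁ ∧ z ≠ a₂)) (b : Bool) : {z : α // P z} ⊕ Bool ≃ α where
  toFun z := match z with
    | Sum.inl z => z.1
    | Sum.inr c => if c = b then a₁ else a₂
  invFun w := if h1 : w = a₁ then Sum.inr b else if h2 : w = a₂ then Sum.inr (!b) else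
    Sum.inl ⟨w, (hP w).mpr ⟨h1, h2⟩⟩
  left_inv z := by
    rcases z with ⟨z, hz⟩ | c
    · have := (hP z).mp hz
      simp [this.1, this.2]
    · by_cases hc : c = b
      · simp [hc]
      · have hcb : c = !b := by cases c <;> cases b <;> simp_all
        simp [hc, hne.symm, hcb]
  right_inv w := by
    by_cases h1 : w = a₁
    · simp [h1]
    · by_cases h2 : w = a₂
      · subst h2
        cases b <;> simp [h1, hne.symm]
      · simp [h1, h2]

theorem nat_card_sigma {ι : Type*} [Fintype ι] (f : ι → Type*) [∀ i, Finite (f i)] :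
    Nat.card ((i : ι) × f i) = ∑ i, Nat.card (f i) := by
  classical
  letI : ∀ i, Fintype (f i) := fun i => Fintype.ofFinite _
  simp [Nat.card_eq_fintype_card, Fintype.card_sigma]

-- ====== constructions ======

variable {m : ℕ}

/-- The distinguished vertex carrying the last marking. -/
def lastV (G : MarkedGraph (m + 1)) : G.V := G.m (Fin.last m)

/-- Number of half-edges at the distinguished vertex. -/
noncomputable def hdeg (G : MarkedGraph (m + 1)) : ℕ :=
  Nat.card {x : G.H // G.r x = G.lastV}

/-- Number of markings other than the last at the distinguished vertex. -/
noncomputable def mdeg (G : MarkedGraph (m + 1)) : ℕ :=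
  Nat.card {j : Fin m // G.m j.castSucc = G.lastV}

theorem lastV_iso {A B : MarkedGraph (m + 1)} (ψ : Iso A B) : ψ.tV A.lastV = B.lastV :=
  ψ.comm_m (Fin.last m)

theorem hdeg_iso {A B : MarkedGraph (m + 1)} (ψ : Iso A B) : A.hdeg = B.hdeg := by
  unfold hdeg
  rw [card_halves_iso ψ, lastV_iso ψ]

theorem mdeg_iso {A B : MarkedGraph (m + 1)} (ψ : Iso A B) : A.mdeg = B.mdeg := by
  unfold mdeg
  rw [card_marks_iso ψ A.lastV (Fin.castSucc), lastV_iso ψ]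

/-- Forget the last marking (no stabilization). -/
def fgt (G : MarkedGraph (m + 1)) : MarkedGraph m :=
  ⟨G.V, G.H, G.finV, G.finH, G.s, G.s_invol, G.s_ne, G.r, fun j => G.m j.castSucc⟩

/-- Place the last marked point at the vertex `v`. -/
def phiV (G : MarkedGraph m) (v : G.V) : MarkedGraph (m + 1) :=
  ⟨G.V, G.H, G.finV, G.finH, G.s, G.s_invol, G.s_ne, G.r, Fin.snoc G.m v⟩

-- subdivide the edge containing half-edge x, put last point on new vertex
open Classical in
noncomputable def phiE (G : MarkedGraph m) (x : G.H) : MarkedGraph (m + 1) where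
  V := G.V ⊕ Unit
  H := G.H ⊕ Bool
  finV := by have := G.finV; infer_instance
  finH := by have := G.finH; infer_instance
  s := fun z => match z with
    | Sum.inl y => if y = x then Sum.inr true else
        if y = G.s x then Sum.inr false else Sum.inl (G.s y)
    | Sum.inr true => Sum.inl x
    | Sum.inr false => Sum.inl (G.s x)
  s_invol := by
    intro z
    rcases z with y | b
    · by_cases h1 : y = x
      · simp [h1]
      · by_cases h2 : y = G.s x
        · subst h2
          simp [if_neg (G.s_ne x)]
        · have h3 : G.s y ≠ x := fun h => h2 (by rw [← G.s_invol y, h])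
          have h4 : G.s y ≠ G.s x := fun h => h1 (by
            have := congrArg G.s h; rwa [G.s_invol, G.s_invol] at this)
          simp [h1, h2, h3, h4, G.s_invol]
    · cases b
      · have h1 : G.s x ≠ x := G.s_ne x
        simp [h1]
      · simp
  s_ne := by
    intro z
    rcases z with y | b
    · by_cases h1 : y = x
      · simp [h1]
      · by_cases h2 : y = G.s x
        · subst h2
          simp [if_neg (G.s_ne x)]
        · simp [h1, h2]
          exact fun h => G.s_ne y h
    · cases b <;> simp
  r := fun z => match z with
    | Sum.inl y => Sum.inl (G.r y)
    | Sum.inr _ => Sum.inr ()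
  m := Fin.snoc (fun j => Sum.inl (G.m j)) (Sum.inr ())

-- attach new vertex carrying markings i0 and last by a new edge
open Classical in
noncomputable def phiM (G : MarkedGraph m) (i₀ : Fin m) : MarkedGraph (m + 1) where
  V := G.V ⊕ Unit
  H := G.H ⊕ Bool
  finV := by have := G.finV; infer_instance
  finH := by have := G.finH; infer_instance
  s := fun z => match z with
    | Sum.inl y => Sum.inl (G.s y)
    | Sum.inr b => Sum.inr (!b)
  s_invol := by
    intro z
    rcases z with y | b
    · simp [G.s_invol]
    · simp
  s_ne := by
    intro z
    rcases z with y | b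
    · simpa using G.s_ne y
    · cases b <;> simp
  r := fun z => match z with
    | Sum.inl y => Sum.inl (G.r y)
    | Sum.inr true => Sum.inr ()
    | Sum.inr false => Sum.inl (G.m i₀)
  m := Fin.snoc (fun j => if j = i₀ then Sum.inr () else Sum.inl (G.m j)) (Sum.inr ())


-- ====== contractions ======

/-- Data witnessing that `G` is obtained by subdividing an edge: the distinguished
vertex carries exactly the two half-edges `h₁ ≠ h₂` (not forming a loop) and no
other marking. -/
structure EData (G : MarkedGraph (m + 1)) where
  h₁ : G.H
  h₂ : G.H
  ne : h₁ ≠ h₂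
  root : ∀ h, G.r h = G.lastV ↔ (h = h₁ ∨ h = h₂)
  noloop : G.s h₁ ≠ h₂
  nomark : ∀ j : Fin m, G.m j.castSucc ≠ G.lastV

namespace EData

variable {m : ℕ} {G : MarkedGraph (m + 1)} (d : EData G)

theorem r₁ : G.r d.h₁ = G.lastV := (d.root _).mpr (Or.inl rfl)
theorem r₂ : G.r d.h₂ = G.lastV := (d.root _).mpr (Or.inr rfl)
theorem noloop' : G.s d.h₂ ≠ d.h₁ := fun h => d.noloop (by rw [← h, G.s_invol])
theorem rs₁ : G.r (G.s d.h₁) ≠ G.lastV := by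
  intro h
  rcases (d.root _).mp h with h' | h'
  · exact G.s_ne _ h'
  · exact d.noloop h'
theorem rs₂ : G.r (G.s d.h₂) ≠ G.lastV := by
  intro h
  rcases (d.root _).mp h with h' | h'
  · exact d.noloop' h'
  · exact G.s_ne _ h'

end EData

open Classical in
noncomputable def ctr (G : MarkedGraph (m + 1)) (d : EData G) : MarkedGraph m where
  V := {w : G.V // w ≠ G.lastV}
  H := {h : G.H // G.r h ≠ G.lastV}
  finV := by have := G.finV; infer_instance
  finH := by have := G.finH; infer_instance
  s := fun h =>
    if hc1 : G.s h.1 = d.h₁ then ⟨G.s d.h₂, d.rs₂⟩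
    else if hc2 : G.s h.1 = d.h₂ then ⟨G.s d.h₁, d.rs₁⟩
    else ⟨G.s h.1, fun hr => by
      rcases (d.root _).mp hr with h' | h'
      · exact hc1 h'
      · exact hc2 h'⟩
  s_invol := by
    rintro ⟨z, hz⟩
    apply Subtype.ext
    dsimp only
    by_cases c1 : G.s z = d.h₁
    · rw [dif_pos c1, dif_neg (by rw [G.s_invol]; exact fun hh => d.ne hh.symm),
        dif_pos (G.s_invol d.h₂)]
      show G.s d.h₁ = z
      rw [← c1, G.s_invol]
    · by_cases c2 : G.s z = d.h₂
      · rw [dif_neg c1, dif_pos c2, dif_pos (G.s_invol d.h₁)]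
        show G.s d.h₂ = z
        rw [← c2, G.s_invol]
      · have hz1 : z ≠ d.h₁ := fun h => hz (h ▸ d.r₁)
        have hz2 : z ≠ d.h₂ := fun h => hz (h ▸ d.r₂)
        rw [dif_neg c1, dif_neg c2, dif_neg (by rw [G.s_invol]; exact hz1),
          dif_neg (by rw [G.s_invol]; exact hz2)]
        exact G.s_invol z
  s_ne := by
    rintro ⟨z, hz⟩ h
    have hv := congrArg Subtype.val h
    dsimp only at hv
    by_cases c1 : G.s z = d.h₁
    · rw [dif_pos c1] at hv
      have := congrArg G.s hv
      rw [G.s_invol, c1] at this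
      exact d.ne this.symm
    · by_cases c2 : G.s z = d.h₂
      · rw [dif_neg c1, dif_pos c2] at hv
        have := congrArg G.s hv
        rw [G.s_invol, c2] at this
        exact d.ne this
      · rw [dif_neg c1, dif_neg c2] at hv
        exact G.s_ne z hv
  r := fun h => ⟨G.r h.1, h.2⟩
  m := fun j => ⟨G.m j.castSucc, d.nomark j⟩

/-- Data witnessing that `G` is obtained by attaching markings `i₀`, `last` on a
new vertex joined by an edge: the distinguished vertex carries exactly one
half-edge `h₀` and exactly one other marking `i₀`. -/
structure MData (G : MarkedGraph (m + 1)) where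
  h₀ : G.H
  i₀ : Fin m
  root : ∀ h, G.r h = G.lastV ↔ h = h₀
  mark : ∀ j : Fin m, G.m j.castSucc = G.lastV ↔ j = i₀

namespace MData

variable {m : ℕ} {G : MarkedGraph (m + 1)} (d : MData G)

theorem r₀ : G.r d.h₀ = G.lastV := (d.root _).mpr rfl
theorem ne₀ : d.h₀ ≠ G.s d.h₀ := (G.s_ne d.h₀).symm
theorem rs : G.r (G.s d.h₀) ≠ G.lastV :=
  fun h => G.s_ne d.h₀ ((d.root _).mp h)

end MData

open Classical in
noncomputable def mctr (G : MarkedGraph (m + 1)) (d : MData G) : MarkedGraph m where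
  V := {w : G.V // w ≠ G.lastV}
  H := {h : G.H // h ≠ d.h₀ ∧ h ≠ G.s d.h₀}
  finV := by have := G.finV; infer_instance
  finH := by have := G.finH; infer_instance
  s := fun h => ⟨G.s h.1,
    fun hc => h.2.2 (by rw [← G.s_invol h.1, hc]),
    fun hc => h.2.1 (by rw [← G.s_invol h.1, hc, G.s_invol])⟩
  s_invol := by
    rintro ⟨z, hz⟩
    apply Subtype.ext
    exact G.s_invol z
  s_ne := by
    rintro ⟨z, hz⟩
    intro h
    exact G.s_ne z (congrArg Subtype.val h)
  r := fun h => ⟨G.r h.1, fun hc => h.2.1 ((d.root _).mp hc)⟩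
  m := fun j =>
    if hj : j = d.i₀ then ⟨G.r (G.s d.h₀), d.rs⟩
    else ⟨G.m j.castSucc, fun hc => hj ((d.mark _).mp hc)⟩


-- ====== basic facts about the constructions ======

theorem card_sum_unit (α : Type*) [Finite α] : Nat.card (α ⊕ Unit) = Nat.card α + 1 := by
  rw [Nat.card_sum]; simp

theorem card_sum_bool (α : Type*) [Finite α] : Nat.card (α ⊕ Bool) = Nat.card α + 2 := by
  rw [Nat.card_sum]; simp [Nat.card_eq_fintype_card]

@[simp] theorem lastV_phiV (G : MarkedGraph m) (v : G.V) : (phiV G v).lastV = v := by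
  simp [lastV, phiV]

@[simp] theorem phiV_m_cast (G : MarkedGraph m) (v : G.V) (j : Fin m) :
    (phiV G v).m j.castSucc = G.m j := by
  simp [phiV]

@[simp] theorem lastV_phiE (G : MarkedGraph m) (x : G.H) :
    (phiE G x).lastV = Sum.inr () := by
  simp [lastV, phiE]

@[simp] theorem phiE_m_cast (G : MarkedGraph m) (x : G.H) (j : Fin m) :
    (phiE G x).m j.castSucc = Sum.inl (G.m j) := by
  simp [phiE]

@[simp] theorem lastV_phiM (G : MarkedGraph m) (i₀ : Fin m) :
    (phiM G i₀).lastV = Sum.inr () := by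
  simp [lastV, phiM]

open Classical in
theorem phiM_m_cast (G : MarkedGraph m) (i₀ : Fin m) (j : Fin m) :
    (phiM G i₀).m j.castSucc = if j = i₀ then Sum.inr () else Sum.inl (G.m j) := by
  simp [phiM]

theorem isGenus_phiV {G : MarkedGraph m} {g : ℕ} (h : G.IsGenus g) (v : G.V) :
    (phiV G v).IsGenus g := h

theorem numEdges_phiE (G : MarkedGraph m) (x : G.H) :
    (phiE G x).numEdges = G.numEdges + 1 := by
  have : Nat.card (phiE G x).H = Nat.card G.H + 2 := card_sum_bool G.H
  unfold numEdges
  rw [this, Nat.add_div_right _ (by norm_num)]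

theorem numEdges_phiM (G : MarkedGraph m) (i₀ : Fin m) :
    (phiM G i₀).numEdges = G.numEdges + 1 := by
  have : Nat.card (phiM G i₀).H = Nat.card G.H + 2 := card_sum_bool G.H
  unfold numEdges
  rw [this, Nat.add_div_right _ (by norm_num)]

theorem isGenus_phiE {G : MarkedGraph m} {g : ℕ} (h : G.IsGenus g) (x : G.H) :
    (phiE G x).IsGenus g := by
  unfold IsGenus at h ⊢
  rw [numEdges_phiE]
  have : Nat.card (phiE G x).V = Nat.card G.V + 1 := card_sum_unit G.V
  rw [this]
  omega

theorem isGenus_phiM {G : MarkedGraph m} {g : ℕ} (h : G.IsGenus g) (i₀ : Fin m) :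
    (phiM G i₀).IsGenus g := by
  unfold IsGenus at h ⊢
  rw [numEdges_phiM]
  have : Nat.card (phiM G i₀).V = Nat.card G.V + 1 := card_sum_unit G.V
  rw [this]
  omega

-- cards for contractions

theorem EData.card_V {G : MarkedGraph (m + 1)} (d : EData G) :
    Nat.card G.V = Nat.card {w : G.V // w ≠ G.lastV} + 1 := by
  rw [← Nat.card_congr (complSingle G.lastV), card_sum_unit]

theorem EData.not_root_iff {G : MarkedGraph (m + 1)} (d : EData G) (z : G.H) :
    G.r z ≠ G.lastV ↔ (z ≠ d.h₁ ∧ z ≠ d.h₂) := by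
  rw [← not_or, not_iff_not]
  exact d.root z

theorem EData.card_H {G : MarkedGraph (m + 1)} (d : EData G) :
    Nat.card G.H = Nat.card {h : G.H // G.r h ≠ G.lastV} + 2 := by
  rw [← Nat.card_congr (complPair d.ne d.not_root_iff true), card_sum_bool]

theorem MData.card_V {G : MarkedGraph (m + 1)} (d : MData G) :
    Nat.card G.V = Nat.card {w : G.V // w ≠ G.lastV} + 1 := by
  rw [← Nat.card_congr (complSingle G.lastV), card_sum_unit]

theorem MData.card_H {G : MarkedGraph (m + 1)} (d : MData G) :
    Nat.card G.H = Nat.card {h : G.H // h ≠ d.h₀ ∧ h ≠ G.s d.h₀} + 2 := by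
  rw [← Nat.card_congr (complPair d.ne₀ (fun z => Iff.rfl) true), card_sum_bool]

theorem numEdges_ctr {G : MarkedGraph (m + 1)} (d : EData G) :
    G.numEdges = (ctr G d).numEdges + 1 := by
  unfold numEdges
  have : Nat.card G.H = Nat.card (ctr G d).H + 2 := d.card_H
  rw [this, Nat.add_div_right _ (by norm_num)]

theorem numEdges_mctr {G : MarkedGraph (m + 1)} (d : MData G) :
    G.numEdges = (mctr G d).numEdges + 1 := by
  unfold numEdges
  have : Nat.card G.H = Nat.card (mctr G d).H + 2 := d.card_H
  rw [this, Nat.add_div_right _ (by norm_num)]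

theorem isGenus_ctr {G : MarkedGraph (m + 1)} {g : ℕ} (d : EData G) (h : G.IsGenus g) :
    (ctr G d).IsGenus g := by
  unfold IsGenus at h ⊢
  have h1 : Nat.card G.V = Nat.card (ctr G d).V + 1 := d.card_V
  have h2 := numEdges_ctr d
  omega

theorem isGenus_mctr {G : MarkedGraph (m + 1)} {g : ℕ} (d : MData G) (h : G.IsGenus g) :
    (mctr G d).IsGenus g := by
  unfold IsGenus at h ⊢
  have h1 : Nat.card G.V = Nat.card (mctr G d).V + 1 := d.card_V
  have h2 := numEdges_mctr d
  omega

theorem isGenus_fgt {G : MarkedGraph (m + 1)} {g : ℕ} (h : G.IsGenus g) :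
    (fgt G).IsGenus g := h

theorem numEdges_fgt (G : MarkedGraph (m + 1)) : (fgt G).numEdges = G.numEdges := rfl

theorem numEdges_phiV (G : MarkedGraph m) (v : G.V) : (phiV G v).numEdges = G.numEdges := rfl

-- local degrees of the constructions

theorem hdeg_phiV (G : MarkedGraph m) (v : G.V) :
    (phiV G v).hdeg = Nat.card {x : G.H // G.r x = v} := by
  unfold hdeg
  rw [lastV_phiV]
  rfl

theorem mdeg_phiV (G : MarkedGraph m) (v : G.V) :
    (phiV G v).mdeg = Nat.card {j : Fin m // G.m j = v} := by
  unfold mdeg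
  apply Nat.card_congr
  apply Equiv.subtypeEquiv (Equiv.refl _)
  intro j
  rw [lastV_phiV]
  simp
  rfl

theorem hdeg_phiE (G : MarkedGraph m) (x : G.H) : (phiE G x).hdeg = 2 := by
  unfold hdeg
  have e : {z : (phiE G x).H // (phiE G x).r z = (phiE G x).lastV} ≃ Bool :=
    { toFun := fun z => match z with
        | ⟨Sum.inl y, hy⟩ => by rw [lastV_phiE] at hy; exact absurd hy (by simp [phiE])
        | ⟨Sum.inr b, _⟩ => b
      invFun := fun b => ⟨Sum.inr b, by rw [lastV_phiE]; rfl⟩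
      left_inv := fun z => by
        obtain ⟨z, hz⟩ := z
        cases z with
        | inl y => rw [lastV_phiE] at hz; exact absurd hz (by simp [phiE])
        | inr b => rfl
      right_inv := fun b => rfl }
  rw [Nat.card_congr e, Nat.card_eq_fintype_card]
  simp

theorem mdeg_phiE (G : MarkedGraph m) (x : G.H) : (phiE G x).mdeg = 0 := by
  unfold mdeg
  rw [Nat.card_eq_zero]
  left
  constructor
  rintro ⟨j, hj⟩
  rw [lastV_phiE, phiE_m_cast] at hj
  exact absurd hj (by simp)

theorem hdeg_phiM (G : MarkedGraph m) (i₀ : Fin m) : (phiM G i₀).hdeg = 1 := by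
  unfold hdeg
  rw [Nat.card_eq_one_iff_unique]
  constructor
  · constructor
    rintro ⟨z1, hz1⟩ ⟨z2, hz2⟩
    rw [lastV_phiM] at hz1 hz2
    apply Subtype.ext
    match z1, hz1, z2, hz2 with
    | Sum.inr true, _, Sum.inr true, _ => rfl
    | Sum.inl y, hy, _, _ => exact absurd hy (by simp [phiM])
    | Sum.inr false, hy, _, _ => exact absurd hy (by simp [phiM])
    | _, _, Sum.inl y, hy => exact absurd hy (by simp [phiM])
    | _, _, Sum.inr false, hy => exact absurd hy (by simp [phiM])
  · exact ⟨⟨Sum.inr true, by rw [lastV_phiM]; rfl⟩⟩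

open Classical in
theorem mdeg_phiM (G : MarkedGraph m) (i₀ : Fin m) : (phiM G i₀).mdeg = 1 := by
  unfold mdeg
  rw [Nat.card_eq_one_iff_unique]
  constructor
  · constructor
    rintro ⟨j1, hj1⟩ ⟨j2, hj2⟩
    rw [lastV_phiM, phiM_m_cast] at hj1 hj2
    apply Subtype.ext
    by_cases c1 : j1 = i₀
    · by_cases c2 : j2 = i₀
      · show j1 = j2
        rw [c1, c2]
      · rw [if_neg c2] at hj2
        exact absurd hj2 (by simp)
    · rw [if_neg c1] at hj1
      exact absurd hj1 (by simp)
  · exact ⟨⟨i₀, by rw [lastV_phiM, phiM_m_cast, if_pos rfl]⟩⟩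


-- ====== stability and connectivity of the placements ======

theorem three_le_of_inj {α β γ δ : Type*} [Finite α] [Finite β] [Finite γ] [Finite δ]
    (f : α ⊕ β → γ ⊕ δ) (hf : Function.Injective f)
    (h : 3 ≤ Nat.card α + Nat.card β) : 3 ≤ Nat.card γ + Nat.card δ := by
  rw [← Nat.card_sum] at h ⊢
  exact h.trans (Nat.card_le_card_of_injective f hf)

theorem adj_symm {G : MarkedGraph n} {v w : G.V} (h : G.Adj v w) : G.Adj w v := by
  obtain ⟨x, h1, h2⟩ := h
  exact ⟨G.s x, h2, by rw [G.s_invol]; exact h1⟩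

theorem stable_phiV {G : MarkedGraph m} (hG : G.Stable) (v : G.V) : (phiV G v).Stable := by
  intro w
  refine three_le_of_inj
    (Sum.map (fun x : {x : G.H // G.r x = w} => (⟨x.1, x.2⟩ : {x : G.H // (phiV G v).r x = w}))
      (fun j : {j : Fin m // G.m j = w} =>
        (⟨j.1.castSucc, by rw [phiV_m_cast]; exact j.2⟩ : {i : Fin (m+1) // (phiV G v).m i = w})))
    (Function.Injective.sumMap
      (fun a b h => Subtype.ext (congrArg Subtype.val h))
      (fun a b h => Subtype.ext (Fin.castSucc_injective m (congrArg Subtype.val h))))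
    (hG w)

theorem conn_phiV {G : MarkedGraph m} (hG : G.Connected) (v : G.V) : (phiV G v).Connected := hG

theorem stable_phiE {G : MarkedGraph m} (hG : G.Stable) (x : G.H) : (phiE G x).Stable := by
  rintro (w | u)
  · refine three_le_of_inj
      (Sum.map
        (fun y : {y : G.H // G.r y = w} =>
          (⟨Sum.inl y.1, show Sum.inl (G.r y.1) = Sum.inl w by rw [y.2]⟩ :
            {z : (phiE G x).H // (phiE G x).r z = Sum.inl w}))
        (fun j : {j : Fin m // G.m j = w} =>
          (⟨j.1.castSucc, by rw [phiE_m_cast, j.2]⟩ :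
            {i : Fin (m+1) // (phiE G x).m i = Sum.inl w})))
      (Function.Injective.sumMap
        (fun a b h => Subtype.ext (Sum.inl_injective (congrArg Subtype.val h)))
        (fun a b h => Subtype.ext (Fin.castSucc_injective m (congrArg Subtype.val h))))
      (hG w)
  · cases u
    show 3 ≤ Nat.card {z : (phiE G x).H // (phiE G x).r z = Sum.inr ()} +
      Nat.card {i : Fin (m+1) // (phiE G x).m i = Sum.inr ()}
    have h1 : Nat.card {z : (phiE G x).H // (phiE G x).r z = Sum.inr ()} = 2 := by
      have := hdeg_phiE G x
      unfold hdeg at this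
      rwa [lastV_phiE] at this
    have h2 : 0 < Nat.card {i : Fin (m+1) // (phiE G x).m i = Sum.inr ()} :=
      Nat.card_pos_iff.mpr ⟨⟨⟨Fin.last m, by simp [phiE]⟩⟩, inferInstance⟩
    omega

open Classical in
theorem stable_phiM {G : MarkedGraph m} (hG : G.Stable) (i₀ : Fin m) : (phiM G i₀).Stable := by
  rintro (w | u)
  · refine three_le_of_inj (γ := {z : (phiM G i₀).H // (phiM G i₀).r z = Sum.inl w})
      (δ := {i : Fin (m+1) // (phiM G i₀).m i = Sum.inl w})
      (fun a => match a with
        | Sum.inl y => Sum.inl ⟨Sum.inl y.1, show Sum.inl (G.r y.1) = Sum.inl w by rw [y.2]⟩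
        | Sum.inr j =>
          if hj : j.1 = i₀ then
            Sum.inl ⟨Sum.inr false, show Sum.inl (G.m i₀) = Sum.inl w by rw [← hj, j.2]⟩
          else
            Sum.inr ⟨j.1.castSucc, by rw [phiM_m_cast, if_neg hj, j.2]⟩)
      ?_ (hG w)
    rintro (y1 | j1) (y2 | j2) hab <;> dsimp only at hab
    · have : y1.1 = y2.1 := by
        have := congrArg Subtype.val (Sum.inl_injective hab)
        exact Sum.inl_injective this
      rw [Sum.inl.injEq]
      exact Subtype.ext this
    · by_cases hj : j2.1 = i₀
      · rw [dif_pos hj] at hab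
        have := congrArg Subtype.val (Sum.inl_injective hab)
        simp at this
      · rw [dif_neg hj] at hab
        exact absurd hab (by simp)
    · by_cases hj : j1.1 = i₀
      · rw [dif_pos hj] at hab
        have := congrArg Subtype.val (Sum.inl_injective hab)
        simp at this
      · rw [dif_neg hj] at hab
        exact absurd hab (by simp)
    · by_cases hj1 : j1.1 = i₀
      · by_cases hj2 : j2.1 = i₀
        · rw [Sum.inr.injEq]
          exact Subtype.ext (hj1.trans hj2.symm)
        · rw [dif_pos hj1, dif_neg hj2] at hab
          exact absurd hab (by simp)
      · by_cases hj2 : j2.1 = i₀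
        · rw [dif_neg hj1, dif_pos hj2] at hab
          exact absurd hab (by simp)
        · rw [dif_neg hj1, dif_neg hj2] at hab
          have := congrArg Subtype.val (Sum.inr_injective hab)
          rw [Sum.inr.injEq]
          exact Subtype.ext (Fin.castSucc_injective m this)
  · cases u
    show 3 ≤ Nat.card {z : (phiM G i₀).H // (phiM G i₀).r z = Sum.inr ()} +
      Nat.card {i : Fin (m+1) // (phiM G i₀).m i = Sum.inr ()}
    have h1 : Nat.card {z : (phiM G i₀).H // (phiM G i₀).r z = Sum.inr ()} = 1 := by
      have := hdeg_phiM G i₀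
      unfold hdeg at this
      rwa [lastV_phiM] at this
    have h2 : 2 ≤ Nat.card {i : Fin (m+1) // (phiM G i₀).m i = Sum.inr ()} := by
      have hcb : Nat.card Bool = 2 := by simp [Nat.card_eq_fintype_card]
      rw [← hcb]
      refine Nat.card_le_card_of_injective
        (fun b => match b with
          | true => ⟨Fin.last m, by simp [phiM]⟩
          | false => ⟨i₀.castSucc, by rw [phiM_m_cast, if_pos rfl]⟩) ?_
      intro b1 b2 h
      rcases b1 <;> rcases b2
      · rfl
      · exact absurd (congrArg Subtype.val h) (Fin.castSucc_lt_last i₀).ne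
      · exact absurd (congrArg Subtype.val h) (Fin.castSucc_lt_last i₀).ne'
      · rfl
    omega

theorem conn_phiE {G : MarkedGraph m} (hG : G.Connected) (x : G.H) : (phiE G x).Connected := by
  classical
  have bridge1 : (phiE G x).Adj (Sum.inl (G.r x)) (Sum.inr ()) :=
    ⟨Sum.inl x, rfl, by simp [phiE]⟩
  have bridge2 : (phiE G x).Adj (Sum.inr ()) (Sum.inl (G.r (G.s x))) :=
    ⟨Sum.inr false, rfl, rfl⟩
  have bridge2' : (phiE G x).Adj (Sum.inr ()) (Sum.inl (G.r x)) := adj_symm bridge1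
  have lift : ∀ a b : G.V, Relation.ReflTransGen G.Adj a b →
      Relation.ReflTransGen (phiE G x).Adj (Sum.inl a) (Sum.inl b) := by
    intro a b hab
    induction hab with
    | refl => exact Relation.ReflTransGen.refl
    | tail hp step ih =>
      rename_i c b'
      obtain ⟨z, hz1, hz2⟩ := step
      by_cases hzx : z = x
      · subst hzx
        subst hz1; subst hz2
        exact (ih.tail bridge1).tail bridge2
      · by_cases hzsx : z = G.s x
        · subst hzsx
          subst hz1; subst hz2
          rw [G.s_invol]
          exact (ih.tail (adj_symm bridge2)).tail bridge2'
        · refine ih.tail ⟨Sum.inl z, ?_, ?_⟩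
          · show Sum.inl (G.r z) = _
            rw [hz1]
          · show (phiE G x).r (if z = x then Sum.inr true else
              if z = G.s x then Sum.inr false else Sum.inl (G.s z)) = _
            refine (congrArg (phiE G x).r (show (if z = x then Sum.inr true else
                if z = G.s x then Sum.inr false else Sum.inl (G.s z) : G.H ⊕ Bool) = Sum.inl (G.s z) by
              rw [if_neg hzx, if_neg hzsx])).trans ?_
            show Sum.inl (G.r (G.s z)) = _
            rw [hz2]
  constructor
  · exact ⟨Sum.inr ()⟩
  · rintro (a | ⟨⟩) (b | ⟨⟩)
    · exact lift a b (hG.2 a b)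
    · exact (lift a (G.r x) (hG.2 a (G.r x))).tail bridge1
    · exact Relation.ReflTransGen.head bridge2' (lift (G.r x) b (hG.2 (G.r x) b))
    · exact Relation.ReflTransGen.refl

theorem conn_phiM {G : MarkedGraph m} (hG : G.Connected) (i₀ : Fin m) : (phiM G i₀).Connected := by
  have bridge : (phiM G i₀).Adj (Sum.inl (G.m i₀)) (Sum.inr ()) :=
    ⟨Sum.inr false, rfl, rfl⟩
  have lift : ∀ a b : G.V, Relation.ReflTransGen G.Adj a b →
      Relation.ReflTransGen (phiM G i₀).Adj (Sum.inl a) (Sum.inl b) := by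
    intro a b hab
    induction hab with
    | refl => exact Relation.ReflTransGen.refl
    | tail hp step ih =>
      obtain ⟨z, hz1, hz2⟩ := step
      refine ih.tail ⟨Sum.inl z, ?_, ?_⟩
      · show Sum.inl (G.r z) = _
        rw [hz1]
      · show Sum.inl (G.r (G.s z)) = _
        rw [hz2]
  constructor
  · exact ⟨Sum.inr ()⟩
  · rintro (a | ⟨⟩) (b | ⟨⟩)
    · exact lift a b (hG.2 a b)
    · exact (lift a (G.m i₀) (hG.2 a (G.m i₀))).tail bridge
    · exact Relation.ReflTransGen.head (adj_symm bridge) (lift (G.m i₀) b (hG.2 (G.m i₀) b))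
    · exact Relation.ReflTransGen.refl


-- ====== counting all markings at the distinguished vertex ======

open Classical in
theorem card_marks_last (G : MarkedGraph (m + 1)) :
    Nat.card {i : Fin (m + 1) // G.m i = G.lastV} = G.mdeg + 1 := by
  have e : {i : Fin (m + 1) // G.m i = G.lastV} ≃
      {j : Fin m // G.m j.castSucc = G.lastV} ⊕ Unit :=
    { toFun := fun i => if h : i.1 = Fin.last m then Sum.inr () else
        Sum.inl ⟨i.1.castPred h, by rw [Fin.castSucc_castPred]; exact i.2⟩
      invFun := fun z => match z with
        | Sum.inl j => ⟨j.1.castSucc, j.2⟩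
        | Sum.inr _ => ⟨Fin.last m, rfl⟩
      left_inv := fun i => by
        dsimp only
        by_cases h : i.1 = Fin.last m
        · rw [dif_pos h]
          exact Subtype.ext h.symm
        · rw [dif_neg h]
          exact Subtype.ext (Fin.castSucc_castPred i.1 h)
      right_inv := fun z => by
        rcases z with j | u
        · dsimp only
          rw [dif_neg (Fin.castSucc_lt_last j.1).ne]
          rw [Sum.inl.injEq]
          exact Subtype.ext (Fin.castPred_castSucc (Fin.castSucc_lt_last j.1).ne)
        · dsimp only
          rw [dif_pos rfl] }
  rw [Nat.card_congr e, card_sum_unit]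
  rfl

-- ====== stability and connectivity of the contractions ======

theorem stable_fgt {G : MarkedGraph (m + 1)} (hG : G.Stable)
    (htype : 3 ≤ G.hdeg + G.mdeg) : (fgt G).Stable := by
  intro w
  by_cases hw : w = G.lastV
  · subst hw
    exact htype
  · refine three_le_of_inj
      (Sum.map (fun x : {x : G.H // G.r x = w} => (⟨x.1, x.2⟩ : {x : G.H // (fgt G).r x = w}))
        (fun i : {i : Fin (m + 1) // G.m i = w} =>
          have hlast : i.1 ≠ Fin.last m := fun hl => hw (by rw [← i.2, hl]; rfl)
          (⟨i.1.castPred hlast, by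
            show G.m ((i.1.castPred hlast).castSucc) = w
            rw [Fin.castSucc_castPred]; exact i.2⟩ : {j : Fin m // (fgt G).m j = w})))
      (Function.Injective.sumMap
        (fun a b h => Subtype.ext (congrArg Subtype.val h))
        (fun a b h => by
          apply Subtype.ext
          have hv := congrArg Subtype.val h
          dsimp at hv
          rw [← Fin.castSucc_castPred a.1 (fun hl => hw (by rw [← a.2, hl]; rfl)),
            ← Fin.castSucc_castPred b.1 (fun hl => hw (by rw [← b.2, hl]; rfl)), hv]))
      (hG w)

theorem conn_fgt {G : MarkedGraph (m + 1)} (hG : G.Connected) : (fgt G).Connected := hG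

theorem stable_ctr {G : MarkedGraph (m + 1)} (d : EData G) (hG : G.Stable) :
    (ctr G d).Stable := by
  rintro ⟨w, hw⟩
  refine three_le_of_inj (γ := {h : (ctr G d).H // (ctr G d).r h = ⟨w, hw⟩})
    (δ := {j : Fin m // (ctr G d).m j = ⟨w, hw⟩})
    (Sum.map
      (fun x : {x : G.H // G.r x = w} =>
        (⟨⟨x.1, by rw [x.2]; exact hw⟩, Subtype.ext x.2⟩ :
          {h : (ctr G d).H // (ctr G d).r h = ⟨w, hw⟩}))
      (fun i : {i : Fin (m + 1) // G.m i = w} =>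
        have hlast : i.1 ≠ Fin.last m := fun hl => hw (by rw [← i.2, hl]; rfl)
        (⟨i.1.castPred hlast, Subtype.ext (by
          show G.m ((i.1.castPred hlast).castSucc) = w
          rw [Fin.castSucc_castPred]; exact i.2)⟩ : {j : Fin m // (ctr G d).m j = ⟨w, hw⟩})))
    (Function.Injective.sumMap
      (fun a b h => by
        apply Subtype.ext
        have hv := congrArg (fun z => (Subtype.val (Subtype.val z))) h
        exact hv)
      (fun a b h => by
        apply Subtype.ext
        have hv := congrArg Subtype.val h
        dsimp at hv
        rw [← Fin.castSucc_castPred a.1 (fun hl => hw (by rw [← a.2, hl]; rfl)),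
          ← Fin.castSucc_castPred b.1 (fun hl => hw (by rw [← b.2, hl]; rfl)), hv]))
    (hG w)

open Classical in
theorem stable_mctr {G : MarkedGraph (m + 1)} (d : MData G) (hG : G.Stable) :
    (mctr G d).Stable := by
  rintro ⟨w, hw⟩
  have hr₀ : G.r d.h₀ = G.lastV := d.r₀
  refine three_le_of_inj (γ := {h : (mctr G d).H // (mctr G d).r h = ⟨w, hw⟩})
    (δ := {j : Fin m // (mctr G d).m j = ⟨w, hw⟩})
    (α := {x : G.H // G.r x = w}) (β := {i : Fin (m + 1) // G.m i = w})
    (fun a => match a with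
      | Sum.inl x =>
        if hx : x.1 = G.s d.h₀ then
          Sum.inr ⟨d.i₀, by
            show (mctr G d).m d.i₀ = ⟨w, hw⟩
            show (if hj : d.i₀ = d.i₀ then _ else _) = _
            exact (dif_pos rfl).trans (Subtype.ext (show G.r (G.s d.h₀) = w by rw [← hx]; exact x.2))⟩
        else
          Sum.inl ⟨⟨x.1, ⟨fun hc => hw (by rw [← x.2, hc]; exact hr₀), hx⟩⟩, Subtype.ext x.2⟩
      | Sum.inr i =>
        have hlast : i.1 ≠ Fin.last m := fun hl => hw (by rw [← i.2, hl]; rfl)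
        have hi₀ : i.1.castPred hlast ≠ d.i₀ := fun hc => hw (by
          rw [← i.2, ← Fin.castSucc_castPred i.1 hlast, hc]
          exact (d.mark d.i₀).mpr rfl)
        Sum.inr ⟨i.1.castPred hlast, by
          show (if hj : i.1.castPred hlast = d.i₀ then _ else _) = _
          refine (dif_neg hi₀).trans ?_
          exact Subtype.ext (by
            show G.m ((i.1.castPred hlast).castSucc) = w
            rw [Fin.castSucc_castPred]; exact i.2)⟩)
    ?_ (hG w)
  rintro (x1 | i1) (x2 | i2) hab <;> dsimp only at hab
  · by_cases h1 : x1.1 = G.s d.h₀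
    · by_cases h2 : x2.1 = G.s d.h₀
      · rw [Sum.inl.injEq]
        exact Subtype.ext (h1.trans h2.symm)
      · rw [dif_pos h1, dif_neg h2] at hab
        exact absurd hab.symm (by simp)
    · by_cases h2 : x2.1 = G.s d.h₀
      · rw [dif_neg h1, dif_pos h2] at hab
        exact absurd hab (by simp)
      · rw [dif_neg h1, dif_neg h2] at hab
        have hv := congrArg (fun z => Subtype.val (Subtype.val z)) (Sum.inl_injective hab)
        rw [Sum.inl.injEq]
        exact Subtype.ext hv
  · by_cases h1 : x1.1 = G.s d.h₀
    · rw [dif_pos h1] at hab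
      have hv := congrArg Subtype.val (Sum.inr_injective hab)
      dsimp at hv
      refine absurd hv.symm (fun hc => ?_)
      have hlast : i2.1 ≠ Fin.last m := fun hl => hw (by rw [← i2.2, hl]; rfl)
      have hi₀ : i2.1.castPred hlast ≠ d.i₀ := fun hc2 => hw (by
        rw [← i2.2, ← Fin.castSucc_castPred i2.1 hlast, hc2]
        exact (d.mark d.i₀).mpr rfl)
      exact hi₀ hc
    · rw [dif_neg h1] at hab
      exact absurd hab (by simp)
  · by_cases h2 : x2.1 = G.s d.h₀
    · rw [dif_pos h2] at hab
      have hv := congrArg Subtype.val (Sum.inr_injective hab)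
      dsimp at hv
      refine absurd hv (fun hc => ?_)
      have hlast : i1.1 ≠ Fin.last m := fun hl => hw (by rw [← i1.2, hl]; rfl)
      have hi₀ : i1.1.castPred hlast ≠ d.i₀ := fun hc2 => hw (by
        rw [← i1.2, ← Fin.castSucc_castPred i1.1 hlast, hc2]
        exact (d.mark d.i₀).mpr rfl)
      exact hi₀ hc
    · rw [dif_neg h2] at hab
      exact absurd hab.symm (by simp)
  · have hv := congrArg Subtype.val (Sum.inr_injective hab)
    dsimp at hv
    rw [Sum.inr.injEq]
    apply Subtype.ext
    have h1 : i1.1 ≠ Fin.last m := fun hl => hw (by rw [← i1.2, hl]; rfl)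
    have h2 : i2.1 ≠ Fin.last m := fun hl => hw (by rw [← i2.2, hl]; rfl)
    rw [← Fin.castSucc_castPred i1.1 h1, ← Fin.castSucc_castPred i2.1 h2, hv]


open Classical in
theorem conn_ctr {G : MarkedGraph (m + 1)} (d : EData G) (hG : G.Connected) :
    (ctr G d).Connected := by
  set C := ctr G d with hC
  let proj : G.V → C.V := fun a =>
    if h : a = G.lastV then ⟨G.r (G.s d.h₁), d.rs₁⟩ else ⟨a, h⟩
  have projv : ∀ (a : G.V) (ha : a ≠ G.lastV), proj a = ⟨a, ha⟩ := by
    intro a ha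
    simp only [proj]
    exact dif_neg ha
  have hstep : ∀ a b : G.V, G.Adj a b →
      Relation.ReflTransGen C.Adj (proj a) (proj b) := by
    intro a b ⟨z, hz1, hz2⟩
    by_cases hz₁ : z = d.h₁
    · subst hz₁
      have ha : a = G.lastV := by rw [← hz1]; exact d.r₁
      have hb : b ≠ G.lastV := by rw [← hz2]; exact d.rs₁
      have : proj a = proj b := by
        rw [projv b hb]
        simp only [proj]
        exact (dif_pos ha).trans (Subtype.ext hz2)
      rw [this]
    · by_cases hz₂ : z = d.h₂
      · subst hz₂
        have ha : a = G.lastV := by rw [← hz1]; exact d.r₂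
        have hb : b ≠ G.lastV := by rw [← hz2]; exact d.rs₂
        refine Relation.ReflTransGen.single ⟨⟨G.s d.h₁, d.rs₁⟩, ?_, ?_⟩
        · show (⟨G.r (G.s d.h₁), d.rs₁⟩ : C.V) = proj a
          simp only [proj]
          symm; exact dif_pos ha
        · show C.r (C.s ⟨G.s d.h₁, d.rs₁⟩) = proj b
          rw [projv b hb]
          have : C.s ⟨G.s d.h₁, d.rs₁⟩ = ⟨G.s d.h₂, d.rs₂⟩ := by
            show (if hc1 : G.s (G.s d.h₁) = d.h₁ then _ else _) = _
            exact dif_pos (G.s_invol d.h₁)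
          rw [this]
          exact Subtype.ext hz2
      · by_cases hsz₁ : G.s z = d.h₁
        · have ha : a ≠ G.lastV := by
            rw [← hz1]
            rw [show z = G.s d.h₁ by rw [← hsz₁, G.s_invol]]
            exact d.rs₁
          have hb : b = G.lastV := by rw [← hz2, hsz₁]; exact d.r₁
          have : proj a = proj b := by
            rw [projv a ha]
            rw [show proj b = ⟨G.r (G.s d.h₁), d.rs₁⟩ by simp only [proj]; exact dif_pos hb]
            apply Subtype.ext
            show a = G.r (G.s d.h₁)
            rw [← hz1, show z = G.s d.h₁ by rw [← hsz₁, G.s_invol]]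
          rw [this]
        · by_cases hsz₂ : G.s z = d.h₂
          · have ha : a ≠ G.lastV := by
              rw [← hz1, show z = G.s d.h₂ by rw [← hsz₂, G.s_invol]]
              exact d.rs₂
            have hb : b = G.lastV := by rw [← hz2, hsz₂]; exact d.r₂
            refine Relation.ReflTransGen.single ⟨⟨G.s d.h₂, d.rs₂⟩, ?_, ?_⟩
            · show (⟨G.r (G.s d.h₂), d.rs₂⟩ : C.V) = proj a
              rw [projv a ha]
              apply Subtype.ext
              show G.r (G.s d.h₂) = a
              rw [← hz1, show z = G.s d.h₂ by rw [← hsz₂, G.s_invol]]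
            · show C.r (C.s ⟨G.s d.h₂, d.rs₂⟩) = proj b
              have h1 : G.s (G.s d.h₂) ≠ d.h₁ := by
                rw [G.s_invol]
                exact fun hh => d.ne hh.symm
              have : C.s ⟨G.s d.h₂, d.rs₂⟩ = ⟨G.s d.h₁, d.rs₁⟩ := by
                show (if hc1 : G.s (G.s d.h₂) = d.h₁ then _ else _) = _
                exact (dif_neg h1).trans (dif_pos (G.s_invol d.h₂))
              rw [this]
              simp only [proj]
              symm; exact dif_pos hb
          · have hzr : G.r z ≠ G.lastV := by
              intro hc
              rcases (d.root z).mp hc with h | h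
              · exact hz₁ h
              · exact hz₂ h
            have hszr : G.r (G.s z) ≠ G.lastV := by
              intro hc
              rcases (d.root _).mp hc with h | h
              · exact hsz₁ h
              · exact hsz₂ h
            have ha : a ≠ G.lastV := hz1 ▸ hzr
            have hb : b ≠ G.lastV := hz2 ▸ hszr
            refine Relation.ReflTransGen.single ⟨⟨z, hzr⟩, ?_, ?_⟩
            · rw [projv a ha]
              exact Subtype.ext hz1
            · rw [projv b hb]
              have : C.s ⟨z, hzr⟩ = ⟨G.s z, hszr⟩ := by
                show (if hc1 : G.s z = d.h₁ then _ else _) = _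
                exact (dif_neg hsz₁).trans (dif_neg hsz₂)
              rw [this]
              exact Subtype.ext hz2
  constructor
  · exact ⟨⟨G.r (G.s d.h₁), d.rs₁⟩⟩
  · rintro ⟨v, hv⟩ ⟨w, hw⟩
    have := hG.2 v w
    have lift : ∀ a b : G.V, Relation.ReflTransGen G.Adj a b →
        Relation.ReflTransGen C.Adj (proj a) (proj b) := by
      intro a b hab
      induction hab with
      | refl => exact Relation.ReflTransGen.refl
      | tail hp step ih => exact ih.trans (hstep _ _ step)
    have := lift v w this
    rwa [projv v hv, projv w hw] at this

open Classical in
theorem conn_mctr {G : MarkedGraph (m + 1)} (d : MData G) (hG : G.Connected) :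
    (mctr G d).Connected := by
  set C := mctr G d with hC
  let proj : G.V → C.V := fun a =>
    if h : a = G.lastV then ⟨G.r (G.s d.h₀), d.rs⟩ else ⟨a, h⟩
  have projv : ∀ (a : G.V) (ha : a ≠ G.lastV), proj a = ⟨a, ha⟩ := by
    intro a ha
    simp only [proj]
    exact dif_neg ha
  have hstep : ∀ a b : G.V, G.Adj a b →
      Relation.ReflTransGen C.Adj (proj a) (proj b) := by
    intro a b ⟨z, hz1, hz2⟩
    by_cases hz₀ : z = d.h₀
    · subst hz₀
      have ha : a = G.lastV := by rw [← hz1]; exact d.r₀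
      have hb : b ≠ G.lastV := by rw [← hz2]; exact d.rs
      have : proj a = proj b := by
        rw [projv b hb]
        simp only [proj]
        exact (dif_pos ha).trans (Subtype.ext hz2)
      rw [this]
    · by_cases hsz₀ : G.s z = d.h₀
      · have hzv : z = G.s d.h₀ := by rw [← hsz₀, G.s_invol]
        have ha : a ≠ G.lastV := by
          rw [← hz1, hzv]
          exact d.rs
        have hb : b = G.lastV := by rw [← hz2, hsz₀]; exact d.r₀
        have : proj a = proj b := by
          rw [projv a ha]
          rw [show proj b = ⟨G.r (G.s d.h₀), d.rs⟩ by simp only [proj]; exact dif_pos hb]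
          apply Subtype.ext
          show a = G.r (G.s d.h₀)
          rw [← hz1, hzv]
        rw [this]
      · have hz2' : z ≠ G.s d.h₀ := fun hc => hsz₀ (by rw [hc, G.s_invol])
        have hzr : a ≠ G.lastV := by
          rw [← hz1]
          exact fun hc => hz₀ ((d.root z).mp hc)
        have hszr : b ≠ G.lastV := by
          rw [← hz2]
          exact fun hc => hsz₀ ((d.root _).mp hc)
        refine Relation.ReflTransGen.single ⟨⟨z, hz₀, hz2'⟩, ?_, ?_⟩
        · rw [projv a hzr]
          exact Subtype.ext hz1
        · rw [projv b hszr]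
          exact Subtype.ext hz2
  constructor
  · exact ⟨⟨G.r (G.s d.h₀), d.rs⟩⟩
  · rintro ⟨v, hv⟩ ⟨w, hw⟩
    have lift : ∀ a b : G.V, Relation.ReflTransGen G.Adj a b →
        Relation.ReflTransGen C.Adj (proj a) (proj b) := by
      intro a b hab
      induction hab with
      | refl => exact Relation.ReflTransGen.refl
      | tail hp step ih => exact ih.trans (hstep _ _ step)
    have := lift v w (hG.2 v w)
    rwa [projv v hv, projv w hw] at this


-- ====== trichotomy ======

theorem isEmpty_of_card_zero {α : Type*} [Finite α] (h : Nat.card α = 0) : IsEmpty α := by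
  rcases Nat.card_eq_zero.mp h with h' | h'
  · exact h'
  · exact absurd h' (not_infinite_iff_finite.mpr ‹_›)

theorem all_eq_lastV {G : MarkedGraph (m + 1)} (hconn : G.Connected)
    (hstep : ∀ z : G.H, G.r z = G.lastV → G.r (G.s z) = G.lastV) :
    ∀ w : G.V, w = G.lastV := by
  intro w
  have h := hconn.2 G.lastV w
  induction h with
  | refl => rfl
  | tail hp step ih =>
    obtain ⟨z, hz1, hz2⟩ := step
    rw [← hz2]
    exact hstep z (by rw [hz1, ih])

theorem card_fin (k : ℕ) : Nat.card (Fin k) = k := by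
  simp [Nat.card_eq_fintype_card]

theorem trichotomy {G : MarkedGraph (m + 1)} {g : ℕ} (hst : G.Stable) (hconn : G.Connected)
    (hgen : G.IsGenus g) (hgn : 3 ≤ 2 * g + m) :
    (3 ≤ G.hdeg + G.mdeg) ∨ Nonempty (EData G) ∨ Nonempty (MData G) := by
  by_cases h3 : 3 ≤ G.hdeg + G.mdeg
  · exact Or.inl h3
  have hsum : 2 ≤ G.hdeg + G.mdeg := by
    have h := hst G.lastV
    rw [card_marks_last] at h
    unfold hdeg
    omega
  have hcases : (G.hdeg = 0 ∧ G.mdeg = 2) ∨ (G.hdeg = 1 ∧ G.mdeg = 1) ∨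
      (G.hdeg = 2 ∧ G.mdeg = 0) := by omega
  rcases hcases with ⟨hh, hm⟩ | ⟨hh, hm⟩ | ⟨hh, hm⟩
  · -- no half-edges at the distinguished vertex: impossible
    exfalso
    have hemp : IsEmpty {x : G.H // G.r x = G.lastV} := isEmpty_of_card_zero hh
    have hall : ∀ w : G.V, w = G.lastV :=
      all_eq_lastV hconn (fun z hz => (hemp.false ⟨z, hz⟩).elim)
    have hHemp : IsEmpty G.H := ⟨fun h => hemp.false ⟨h, hall (G.r h)⟩⟩
    have hcardH : Nat.card G.H = 0 := Nat.card_of_isEmpty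
    have hcardV : Nat.card G.V = 1 :=
      Nat.card_eq_one_iff_unique.mpr
        ⟨⟨fun v w => (hall v).trans (hall w).symm⟩, hconn.1⟩
    have hg : g = 0 := by
      have := hgen
      unfold IsGenus numEdges at this
      rw [hcardH, hcardV] at this
      omega
    have hmeq : m = 2 := by
      have e : {j : Fin m // G.m j.castSucc = G.lastV} ≃ Fin m :=
        Equiv.subtypeUnivEquiv (fun j => hall _)
      have : G.mdeg = m := by
        unfold mdeg
        rw [Nat.card_congr e, card_fin]
      omega
    omega
  · -- one half-edge and one extra marking: MData
    obtain ⟨hs, ⟨x₀⟩⟩ := Nat.card_eq_one_iff_unique.mp hh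
    obtain ⟨ms, ⟨j₀⟩⟩ := Nat.card_eq_one_iff_unique.mp hm
    refine Or.inr (Or.inr ⟨⟨x₀.1, j₀.1, fun h => ⟨fun hh' => ?_, fun hh' => ?_⟩,
      fun j => ⟨fun hj' => ?_, fun hj' => ?_⟩⟩⟩)
    · exact congrArg Subtype.val (hs.allEq ⟨h, hh'⟩ x₀)
    · rw [hh']; exact x₀.2
    · exact congrArg Subtype.val (ms.allEq ⟨j, hj'⟩ j₀)
    · rw [hj']; exact j₀.2
  · -- two half-edges, no extra marking: EData (unless loop, which is impossible)
    have hmemp : IsEmpty {j : Fin m // G.m j.castSucc = G.lastV} := isEmpty_of_card_zero hm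
    obtain ⟨p₁, p₂, hne, huniv⟩ := Nat.card_eq_two_iff.mp hh
    have root : ∀ h, G.r h = G.lastV ↔ (h = p₁.1 ∨ h = p₂.1) := by
      intro h
      constructor
      · intro hh'
        have : (⟨h, hh'⟩ : {x : G.H // G.r x = G.lastV}) ∈ ({p₁, p₂} : Set _) := by
          rw [huniv]; trivial
        rcases this with h' | h'
        · exact Or.inl (congrArg Subtype.val h')
        · exact Or.inr (congrArg Subtype.val h')
      · rintro (rfl | rfl)
        · exact p₁.2
        · exact p₂.2
    by_cases hloop : G.s p₁.1 = p₂.1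
    · exfalso
      have hstep : ∀ z : G.H, G.r z = G.lastV → G.r (G.s z) = G.lastV := by
        intro z hz
        rcases (root z).mp hz with rfl | rfl
        · rw [hloop]; exact p₂.2
        · rw [show G.s p₂.1 = p₁.1 by rw [← hloop, G.s_invol]]; exact p₁.2
      have hall : ∀ w : G.V, w = G.lastV := all_eq_lastV hconn hstep
      have hcardH : Nat.card G.H = 2 := by
        have e : {x : G.H // G.r x = G.lastV} ≃ G.H :=
          Equiv.subtypeUnivEquiv (fun x => hall _)
        rw [← Nat.card_congr e]; exact hh
      have hcardV : Nat.card G.V = 1 :=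
        Nat.card_eq_one_iff_unique.mpr
          ⟨⟨fun v w => (hall v).trans (hall w).symm⟩, hconn.1⟩
      have hg : g = 1 := by
        have := hgen
        unfold IsGenus numEdges at this
        rw [hcardH, hcardV] at this
        omega
      have hm0 : m = 0 := by
        have : IsEmpty (Fin m) := ⟨fun j => hmemp.false ⟨j, hall _⟩⟩
        have := Nat.card_of_isEmpty (α := Fin m)
        rwa [card_fin] at this
      omega
    · refine Or.inr (Or.inl ⟨⟨p₁.1, p₂.1, fun h => hne (Subtype.ext h), root, hloop,
        fun j hj => hmemp.false ⟨j, hj⟩⟩⟩)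


-- ====== counting bijection: vertex placements ======

theorem card_eq_of_maps {α β : Type*} (f : α → β) (g : β → α)
    (hfg : ∀ b, f (g b) = b) (hf : Function.Injective f) : Nat.card α = Nat.card β :=
  Nat.card_congr (Equiv.ofBijective f ⟨hf, fun b => ⟨g b, hfg b⟩⟩)

theorem phiV_m_last (G : MarkedGraph m) (v : G.V) :
    (phiV G v).m (Fin.last m) = v := by simp [phiV]

/-- Descent for vertex placements. -/
def fwdV (G' : MarkedGraph m) (G : MarkedGraph (m + 1))
    (p : (v : G'.V) × Iso (phiV G' v) G) : Iso G' (fgt G) where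
  tV := p.2.tV
  tH := p.2.tH
  comm_s := p.2.comm_s
  comm_r := p.2.comm_r
  comm_m := fun j => by
    have h := p.2.comm_m j.castSucc
    rwa [phiV_m_cast] at h

/-- Ascent for vertex placements. -/
def bwdV (G' : MarkedGraph m) (G : MarkedGraph (m + 1)) (δ : Iso G' (fgt G)) :
    (v : G'.V) × Iso (phiV G' v) G :=
  ⟨δ.tV.symm G.lastV,
   { tV := δ.tV
     tH := δ.tH
     comm_s := δ.comm_s
     comm_r := δ.comm_r
     comm_m := fun i => by
       induction i using Fin.lastCases with
       | last =>
         rw [phiV_m_last]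
         exact Equiv.apply_symm_apply δ.tV G.lastV
       | cast j =>
         rw [phiV_m_cast]
         exact δ.comm_m j }⟩

theorem card_sigma_phiV (G' : MarkedGraph m) (G : MarkedGraph (m + 1)) :
    Nat.card ((v : G'.V) × Iso (phiV G' v) G) = Nat.card (Iso G' (fgt G)) := by
  refine card_eq_of_maps (fwdV G' G) (bwdV G' G) (fun δ => Iso.ext' rfl rfl) ?_
  rintro ⟨v, ψ⟩ ⟨w, χ⟩ h
  have hV : ψ.tV = χ.tV := congrArg Iso.tV h
  have hH : ψ.tH = χ.tH := congrArg Iso.tH h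
  have hv : v = w := by
    have h1 := ψ.comm_m (Fin.last m)
    have h2 := χ.comm_m (Fin.last m)
    rw [phiV_m_last] at h1 h2
    apply ψ.tV.injective
    rw [h1, hV]
    exact h2.symm
  subst hv
  exact congrArg (Sigma.mk v) (Iso.ext' hV hH)


-- ====== counting bijection: marking placements ======

theorem phiM_m_last (G : MarkedGraph m) (i₀ : Fin m) :
    (phiM G i₀).m (Fin.last m) = Sum.inr () := by simp [phiM]

section CM

variable {G' : MarkedGraph m} {G : MarkedGraph (m + 1)}

theorem phiM_hlast {i : Fin m} (ψ : Iso (phiM G' i) G) :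
    ψ.tV (Sum.inr ()) = G.lastV := by
  have h := ψ.comm_m (Fin.last m)
  rwa [phiM_m_last] at h

theorem phiM_htrue {i : Fin m} (ψ : Iso (phiM G' i) G) (d : MData G) :
    ψ.tH (Sum.inr true) = d.h₀ := by
  apply (d.root _).mp
  have h := ψ.comm_r (Sum.inr true)
  rw [show (phiM G' i).r (Sum.inr true) = Sum.inr () from rfl] at h
  rw [← h]
  exact phiM_hlast ψ

theorem phiM_hfalse {i : Fin m} (ψ : Iso (phiM G' i) G) (d : MData G) :
    ψ.tH (Sum.inr false) = G.s d.h₀ := by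
  have h := ψ.comm_s (Sum.inr true)
  rw [show (phiM G' i).s (Sum.inr true) = Sum.inr false from rfl] at h
  rw [h, phiM_htrue ψ d]

theorem phiM_hieq {i : Fin m} (ψ : Iso (phiM G' i) G) (d : MData G) : i = d.i₀ := by
  apply (d.mark i).mp
  have h := ψ.comm_m i.castSucc
  rw [phiM_m_cast, if_pos rfl] at h
  rw [← h]
  exact phiM_hlast ψ

/-- Descent for marking placements. -/
noncomputable def fwdM (d : MData G) (p : (i : Fin m) × Iso (phiM G' i) G) :
    Iso G' (mctr G d) :=
  have hlast := phiM_hlast p.2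
  have htrue := phiM_htrue p.2 d
  have hfalse := phiM_hfalse p.2 d
  have hieq := phiM_hieq p.2 d
  { tV := (sumUnitNe G'.V).trans (Equiv.subtypeEquiv p.2.tV (fun z =>
      ⟨fun hz hc => hz () (p.2.tV.injective (hc.trans hlast.symm)),
       fun hz u hc => hz (by rw [hc]; cases u; exact hlast)⟩))
    tH := (sumBoolNe G'.H).trans (Equiv.subtypeEquiv p.2.tH (fun z =>
      ⟨fun hz => ⟨fun hc => hz true (p.2.tH.injective (hc.trans htrue.symm)),
        fun hc => hz false (p.2.tH.injective (hc.trans hfalse.symm))⟩,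
       fun hz b hc => by
        cases b
        · exact hz.2 (by rw [hc]; exact hfalse)
        · exact hz.1 (by rw [hc]; exact htrue)⟩))
    comm_s := fun y => Subtype.ext (p.2.comm_s (Sum.inl y))
    comm_r := fun y => Subtype.ext (p.2.comm_r (Sum.inl y))
    comm_m := fun j => by
      apply Subtype.ext
      show p.2.tV (Sum.inl (G'.m j)) = ((mctr G d).m j).val
      by_cases hj : j = d.i₀
      · show p.2.tV (Sum.inl (G'.m j)) = (if hj : j = d.i₀ then (⟨G.r (G.s d.h₀), d.rs⟩ :
          {w : G.V // w ≠ G.lastV}) else _).val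
        rw [dif_pos hj]
        have h := p.2.comm_r (Sum.inr false)
        rw [show (phiM G' p.1).r (Sum.inr false) = Sum.inl (G'.m p.1) from rfl] at h
        rw [show j = p.1 from hj.trans hieq.symm, h, hfalse]
      · show p.2.tV (Sum.inl (G'.m j)) = (if hj : j = d.i₀ then _ else
          (⟨G.m j.castSucc, _⟩ : {w : G.V // w ≠ G.lastV})).val
        rw [dif_neg hj]
        have h := p.2.comm_m j.castSucc
        rwa [phiM_m_cast, if_neg (fun hc => hj (hc.trans hieq))] at h }

/-- Ascent for marking placements. -/
noncomputable def bwdM (d : MData G) (G'' : MarkedGraph m) (δ : Iso G'' (mctr G d)) :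
    (i : Fin m) × Iso (phiM G'' i) G :=
  ⟨d.i₀,
   { tV := (Equiv.sumCongr δ.tV (Equiv.refl Unit)).trans (complSingle G.lastV)
     tH := (Equiv.sumCongr δ.tH (Equiv.refl Bool)).trans
       (complPair d.ne₀ (fun z => Iff.rfl) true)
     comm_s := fun z => by
       rcases z with y | b
       · show (complPair d.ne₀ (fun z => Iff.rfl) true) (Sum.inl (δ.tH (G''.s y))) =
           G.s ((complPair d.ne₀ (fun z => Iff.rfl) true) (Sum.inl (δ.tH y)))
         show (δ.tH (G''.s y)).val = G.s (δ.tH y).val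
         rw [δ.comm_s y]
         rfl
       · cases b
         · show (complPair d.ne₀ (fun z => Iff.rfl) true) (Sum.inr true) =
             G.s ((complPair d.ne₀ (fun z => Iff.rfl) true) (Sum.inr false))
           show (if (true : Bool) = true then d.h₀ else G.s d.h₀) =
             G.s (if (false : Bool) = true then d.h₀ else G.s d.h₀)
           rw [if_pos rfl, if_neg (by simp), G.s_invol]
         · show (complPair d.ne₀ (fun z => Iff.rfl) true) (Sum.inr false) =
             G.s ((complPair d.ne₀ (fun z => Iff.rfl) true) (Sum.inr true))
           show (if (false : Bool) = true then d.h₀ else G.s d.h₀) =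
             G.s (if (true : Bool) = true then d.h₀ else G.s d.h₀)
           rw [if_pos rfl, if_neg (by simp)]
     comm_r := fun z => by
       rcases z with y | b
       · show (δ.tV (G''.r y)).val = G.r (δ.tH y).val
         rw [δ.comm_r y]
         rfl
       · cases b
         · show (δ.tV (G''.m d.i₀)).val =
             G.r (if (false : Bool) = true then d.h₀ else G.s d.h₀)
           rw [if_neg (by simp), δ.comm_m d.i₀]
           show ((mctr G d).m d.i₀).val = _
           show (if hj : d.i₀ = d.i₀ then (⟨G.r (G.s d.h₀), d.rs⟩ :
             {w : G.V // w ≠ G.lastV}) else _).val = _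
           rw [dif_pos rfl]
         · show G.lastV = G.r (if (true : Bool) = true then d.h₀ else G.s d.h₀)
           rw [if_pos rfl, d.r₀]
     comm_m := fun i => by
       induction i using Fin.lastCases with
       | last =>
         rw [phiM_m_last]
         rfl
       | cast j =>
         rw [phiM_m_cast]
         by_cases hj : j = d.i₀
         · rw [if_pos hj]
           show G.lastV = G.m j.castSucc
           exact ((d.mark j).mpr hj).symm
         · rw [if_neg hj]
           show (δ.tV (G''.m j)).val = G.m j.castSucc
           rw [δ.comm_m j]
           show ((mctr G d).m j).val = _
           show (if hj : j = d.i₀ then _ else (⟨G.m j.castSucc, _⟩ :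
             {w : G.V // w ≠ G.lastV})).val = _
           rw [dif_neg hj] }⟩

theorem card_sigma_phiM (d : MData G) (G'' : MarkedGraph m) :
    Nat.card ((i : Fin m) × Iso (phiM G'' i) G) = Nat.card (Iso G'' (mctr G d)) := by
  refine card_eq_of_maps (fwdM d) (bwdM d G'') ?_ ?_
  · intro δ
    refine Iso.ext' ?_ ?_
    · apply Equiv.ext
      intro w
      apply Subtype.ext
      rfl
    · apply Equiv.ext
      intro y
      apply Subtype.ext
      rfl
  · rintro ⟨i, ψ⟩ ⟨i', χ⟩ h
    have hi : i = i' := (phiM_hieq ψ d).trans (phiM_hieq χ d).symm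
    subst hi
    refine congrArg (Sigma.mk i) (Iso.ext' ?_ ?_)
    · apply Equiv.ext
      rintro (w | u)
      · exact congrArg (fun e => (e.tV w).val) h
      · cases u
        rw [phiM_hlast ψ, phiM_hlast χ]
    · apply Equiv.ext
      rintro (y | b)
      · exact congrArg (fun e => (e.tH y).val) h
      · cases b
        · rw [phiM_hfalse ψ d, phiM_hfalse χ d]
        · rw [phiM_htrue ψ d, phiM_htrue χ d]

end CM


-- ====== counting bijection: edge placements ======

theorem phiE_m_last (G : MarkedGraph m) (x : G.H) :
    (phiE G x).m (Fin.last m) = Sum.inr () := by simp [phiE]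

open Classical in
theorem phiE_s_inl (G : MarkedGraph m) (x y : G.H) :
    (phiE G x).s (Sum.inl y) = if y = x then Sum.inr true else
      if y = G.s x then Sum.inr false else Sum.inl (G.s y) := rfl

theorem phiE_s_inr_true (G : MarkedGraph m) (x : G.H) :
    (phiE G x).s (Sum.inr true) = Sum.inl x := rfl

theorem phiE_s_inr_false (G : MarkedGraph m) (x : G.H) :
    (phiE G x).s (Sum.inr false) = Sum.inl (G.s x) := rfl

section CE

variable {G' : MarkedGraph m} {G : MarkedGraph (m + 1)}

theorem phiE_hlast {x : G'.H} (ψ : Iso (phiE G' x) G) :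
    ψ.tV (Sum.inr ()) = G.lastV := by
  have h := ψ.comm_m (Fin.last m)
  rwa [phiE_m_last] at h

theorem phiE_hroot {x : G'.H} (ψ : Iso (phiE G' x) G) (c : Bool) :
    G.r (ψ.tH (Sum.inr c)) = G.lastV := by
  have h := ψ.comm_r (Sum.inr c)
  rw [show (phiE G' x).r (Sum.inr c) = Sum.inr () from rfl] at h
  rw [← h]
  exact phiE_hlast ψ

theorem phiE_htp {x : G'.H} (ψ : Iso (phiE G' x) G) (d : EData G) :
    ψ.tH (Sum.inr true) = d.h₁ ∨ ψ.tH (Sum.inr true) = d.h₂ :=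
  (d.root _).mp (phiE_hroot ψ true)

theorem phiE_hfp {x : G'.H} (ψ : Iso (phiE G' x) G) (d : EData G) :
    ψ.tH (Sum.inr false) = d.h₁ ∨ ψ.tH (Sum.inr false) = d.h₂ :=
  (d.root _).mp (phiE_hroot ψ false)

theorem phiE_hne_tf {x : G'.H} (ψ : Iso (phiE G' x) G) :
    ψ.tH (Sum.inr true) ≠ ψ.tH (Sum.inr false) := fun h => by
  have := Sum.inr_injective (ψ.tH.injective h)
  exact absurd this (by decide)

theorem phiE_hx {x : G'.H} (ψ : Iso (phiE G' x) G) :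
    ψ.tH (Sum.inl x) = G.s (ψ.tH (Sum.inr true)) := by
  have h := ψ.comm_s (Sum.inr true)
  rw [phiE_s_inr_true] at h
  exact h

theorem phiE_hsx {x : G'.H} (ψ : Iso (phiE G' x) G) :
    ψ.tH (Sum.inl (G'.s x)) = G.s (ψ.tH (Sum.inr false)) := by
  have h := ψ.comm_s (Sum.inr false)
  rw [phiE_s_inr_false] at h
  exact h

open Classical in
theorem ctr_s_val {d : EData G} (h : (ctr G d).H) :
    ((ctr G d).s h).val = if G.s h.val = d.h₁ then G.s d.h₂ else
      if G.s h.val = d.h₂ then G.s d.h₁ else G.s h.val := by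
  classical
  show (if hc1 : G.s h.val = d.h₁ then (⟨G.s d.h₂, d.rs₂⟩ : (ctr G d).H) else
    if hc2 : G.s h.val = d.h₂ then ⟨G.s d.h₁, d.rs₁⟩ else ⟨G.s h.val, _⟩).val = _
  by_cases hc1 : G.s h.val = d.h₁
  · rw [dif_pos hc1, if_pos hc1]
  · by_cases hc2 : G.s h.val = d.h₂
    · rw [dif_neg hc1, dif_pos hc2, if_neg hc1, if_pos hc2]
    · rw [dif_neg hc1, dif_neg hc2, if_neg hc1, if_neg hc2]

-- descent for edge placements
open Classical in
noncomputable def fwdE (d : EData G) (p : (x : G'.H) × Iso (phiE G' x) G) :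
    Iso G' (ctr G d) × Bool :=
  have hlast := phiE_hlast p.2
  ({ tV := (sumUnitNe G'.V).trans (Equiv.subtypeEquiv p.2.tV (fun z =>
      ⟨fun hz hc => hz () (p.2.tV.injective (hc.trans hlast.symm)),
       fun hz u hc => hz (by rw [hc]; cases u; exact hlast)⟩))
     tH := (sumBoolNe G'.H).trans (Equiv.subtypeEquiv p.2.tH (fun z =>
      ⟨fun hz hc => by
        rcases (d.root _).mp hc with h | h
        · rcases phiE_htp p.2 d with ht | ht
          · exact hz true (p.2.tH.injective (h.trans ht.symm))
          · rcases phiE_hfp p.2 d with hf | hf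
            · exact hz false (p.2.tH.injective (h.trans hf.symm))
            · exact phiE_hne_tf p.2 (ht.trans hf.symm)
        · rcases phiE_htp p.2 d with ht | ht
          · rcases phiE_hfp p.2 d with hf | hf
            · exact phiE_hne_tf p.2 (ht.trans hf.symm)
            · exact hz false (p.2.tH.injective (h.trans hf.symm))
          · exact hz true (p.2.tH.injective (h.trans ht.symm)),
       fun hz b hc => hz (by rw [hc]; exact phiE_hroot p.2 b)⟩))
     comm_s := fun y => by
       apply Subtype.ext
       show p.2.tH (Sum.inl (G'.s y)) = ((ctr G d).s ⟨p.2.tH (Sum.inl y), _⟩).val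
       refine Eq.trans ?_ (ctr_s_val (d := d) ⟨p.2.tH (Sum.inl y), _⟩).symm
       by_cases hy1 : y = p.1
       · have e1 : G.s (p.2.tH (Sum.inl y)) = p.2.tH (Sum.inr true) := by
           rw [hy1, phiE_hx p.2, G.s_invol]
         have hsy : G'.s y = G'.s p.1 := by rw [hy1]
         rcases phiE_htp p.2 d with ht | ht
         · rw [if_pos (e1.trans ht)]
           rcases phiE_hfp p.2 d with hf | hf
           · exact absurd (ht.trans hf.symm) (phiE_hne_tf p.2)
           · rw [hsy, phiE_hsx p.2, hf]
         · rw [if_neg (by rw [e1, ht]; exact fun hh => d.ne hh.symm),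
             if_pos (e1.trans ht)]
           rcases phiE_hfp p.2 d with hf | hf
           · rw [hsy, phiE_hsx p.2, hf]
           · exact absurd (ht.trans hf.symm) (phiE_hne_tf p.2)
       · by_cases hy2 : y = G'.s p.1
         · have hGsy : G'.s y = p.1 := by rw [hy2, G'.s_invol]
           have e2 : G.s (p.2.tH (Sum.inl y)) = p.2.tH (Sum.inr false) := by
             rw [hy2, phiE_hsx p.2, G.s_invol]
           rcases phiE_hfp p.2 d with hf | hf
           · rw [if_pos (e2.trans hf)]
             rcases phiE_htp p.2 d with ht | ht
             · exact absurd (ht.trans hf.symm) (phiE_hne_tf p.2)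
             · rw [hGsy, phiE_hx p.2, ht]
           · rw [if_neg (by rw [e2, hf]; exact fun hh => d.ne hh.symm),
               if_pos (e2.trans hf)]
             rcases phiE_htp p.2 d with ht | ht
             · rw [hGsy, phiE_hx p.2, ht]
             · exact absurd (ht.trans hf.symm) (phiE_hne_tf p.2)
         · have hs1 : G.s (p.2.tH (Sum.inl y)) ≠ d.h₁ := by
             intro hc
             have hy : p.2.tH (Sum.inl y) = G.s d.h₁ := by
               rw [← hc, G.s_invol]
             rcases phiE_htp p.2 d with ht | ht
             · exact hy1 (Sum.inl_injective (p.2.tH.injective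
                 (by rw [hy, ← ht, ← phiE_hx p.2])))
             · rcases phiE_hfp p.2 d with hf | hf
               · exact hy2 (Sum.inl_injective (p.2.tH.injective
                   (by rw [hy, ← hf, ← phiE_hsx p.2])))
               · exact absurd (ht.trans hf.symm) (phiE_hne_tf p.2)
           have hs2 : G.s (p.2.tH (Sum.inl y)) ≠ d.h₂ := by
             intro hc
             have hy : p.2.tH (Sum.inl y) = G.s d.h₂ := by
               rw [← hc, G.s_invol]
             rcases phiE_htp p.2 d with ht | ht
             · rcases phiE_hfp p.2 d with hf | hf
               · exact absurd (ht.trans hf.symm) (phiE_hne_tf p.2)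
               · exact hy2 (Sum.inl_injective (p.2.tH.injective
                   (by rw [hy, ← hf, ← phiE_hsx p.2])))
             · exact hy1 (Sum.inl_injective (p.2.tH.injective
                 (by rw [hy, ← ht, ← phiE_hx p.2])))
           rw [if_neg hs1, if_neg hs2]
           have h := p.2.comm_s (Sum.inl y)
           rw [phiE_s_inl, if_neg hy1, if_neg hy2] at h
           exact h
     comm_r := fun y => Subtype.ext (p.2.comm_r (Sum.inl y))
     comm_m := fun j => Subtype.ext (by
       have h := p.2.comm_m j.castSucc
       rwa [phiE_m_cast] at h) },
   if p.2.tH (Sum.inr true) = d.h₁ then true else false)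


-- ascent for edge placements
open Classical in
noncomputable def bwdE (d : EData G) (G'' : MarkedGraph m) :
    Iso G'' (ctr G d) × Bool → (x : G''.H) × Iso (phiE G'' x) G := fun p =>
  have hroot : ∀ b : Bool, G.r (G.s (if (true : Bool) = b then d.h₁ else d.h₂)) ≠ G.lastV := by
    intro b
    cases b
    · exact d.rs₂
    · exact d.rs₁
  ⟨p.1.tH.symm ⟨G.s (if (true : Bool) = p.2 then d.h₁ else d.h₂), hroot p.2⟩,
   { tV := (Equiv.sumCongr p.1.tV (Equiv.refl Unit)).trans (complSingle G.lastV)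
     tH := (Equiv.sumCongr p.1.tH (Equiv.refl Bool)).trans (complPair d.ne d.not_root_iff p.2)
     comm_s := by
       have hx0 : p.1.tH (p.1.tH.symm ⟨G.s (if (true : Bool) = p.2 then d.h₁ else d.h₂),
           hroot p.2⟩) = ⟨G.s (if (true : Bool) = p.2 then d.h₁ else d.h₂), hroot p.2⟩ :=
         Equiv.apply_symm_apply _ _
       have hx0v : (p.1.tH (p.1.tH.symm ⟨G.s (if (true : Bool) = p.2 then d.h₁ else d.h₂),
           hroot p.2⟩)).val = G.s (if (true : Bool) = p.2 then d.h₁ else d.h₂) :=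
         congrArg Subtype.val hx0
       have hctr : ((ctr G d).s (p.1.tH (p.1.tH.symm
           ⟨G.s (if (true : Bool) = p.2 then d.h₁ else d.h₂), hroot p.2⟩))).val =
           (if (true : Bool) = p.2 then G.s d.h₂ else G.s d.h₁) := by
         rw [ctr_s_val, hx0v]
         rcases p with ⟨δ, b⟩
         cases b
         · show (if G.s (G.s d.h₂) = d.h₁ then G.s d.h₂ else
             if G.s (G.s d.h₂) = d.h₂ then G.s d.h₁ else G.s (G.s d.h₂)) = G.s d.h₁
           rw [if_neg (by rw [G.s_invol]; exact fun hh => d.ne hh.symm),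
             if_pos (G.s_invol d.h₂)]
         · show (if G.s (G.s d.h₁) = d.h₁ then G.s d.h₂ else _) = G.s d.h₂
           rw [if_pos (G.s_invol d.h₁)]
       rintro (y | c)
       · by_cases hy1 : y = p.1.tH.symm ⟨G.s (if (true : Bool) = p.2 then d.h₁ else d.h₂),
           hroot p.2⟩
         · rw [phiE_s_inl, if_pos hy1]
           show (if (true : Bool) = p.2 then d.h₁ else d.h₂) = G.s (p.1.tH y).val
           rw [hy1, hx0v, G.s_invol]
         · by_cases hy2 : y = G''.s (p.1.tH.symm
             ⟨G.s (if (true : Bool) = p.2 then d.h₁ else d.h₂), hroot p.2⟩)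
           · rw [phiE_s_inl, if_neg hy1, if_pos hy2]
             show (if (false : Bool) = p.2 then d.h₁ else d.h₂) = G.s (p.1.tH y).val
             rw [hy2, p.1.comm_s, hctr]
             rcases p with ⟨δ, b⟩
             cases b
             · show d.h₁ = G.s (G.s d.h₁)
               rw [G.s_invol]
             · show d.h₂ = G.s (G.s d.h₂)
               rw [G.s_invol]
           · rw [phiE_s_inl, if_neg hy1, if_neg hy2]
             show (p.1.tH (G''.s y)).val = G.s (p.1.tH y).val
             rw [p.1.comm_s, ctr_s_val]
             have hn1 : G.s ((p.1.tH y).val) ≠ d.h₁ := by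
               intro hc
               have hyv : (p.1.tH y).val = G.s d.h₁ := by rw [← hc, G.s_invol]
               rcases Bool.eq_false_or_eq_true p.2 with hb | hb
               · -- p.2 = true : G.s d.h₁ is the image of x₀
                 apply hy1
                 apply p.1.tH.injective
                 apply Subtype.ext
                 rw [hx0v, hb, if_pos rfl]
                 exact hyv
               · -- p.2 = false : G.s d.h₁ is the image of G''.s x₀
                 apply hy2
                 apply p.1.tH.injective
                 rw [p.1.comm_s]
                 apply Subtype.ext
                 rw [hctr, hb, if_neg (by decide)]
                 exact hyv
             have hn2 : G.s ((p.1.tH y).val) ≠ d.h₂ := by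
               intro hc
               have hyv : (p.1.tH y).val = G.s d.h₂ := by rw [← hc, G.s_invol]
               rcases Bool.eq_false_or_eq_true p.2 with hb | hb
               · apply hy2
                 apply p.1.tH.injective
                 rw [p.1.comm_s]
                 apply Subtype.ext
                 rw [hctr, hb, if_pos rfl]
                 exact hyv
               · apply hy1
                 apply p.1.tH.injective
                 apply Subtype.ext
                 rw [hx0v, hb, if_neg (by decide)]
                 exact hyv
             rw [if_neg hn1, if_neg hn2]
       · cases c
         · rw [phiE_s_inr_false]
           show (p.1.tH (G''.s _)).val = G.s (if (false : Bool) = p.2 then d.h₁ else d.h₂)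
           rw [p.1.comm_s, hctr]
           rcases p with ⟨δ, b⟩
           cases b
           · rfl
           · rfl
         · rw [phiE_s_inr_true]
           show (p.1.tH (p.1.tH.symm ⟨G.s (if (true : Bool) = p.2 then d.h₁ else d.h₂),
             hroot p.2⟩)).val = G.s (if (true : Bool) = p.2 then d.h₁ else d.h₂)
           exact hx0v
     comm_r := by
       rintro (y | c)
       · show (p.1.tV (G''.r y)).val = G.r (p.1.tH y).val
         rw [p.1.comm_r]
         rfl
       · cases c
         · show G.lastV = G.r (if (false : Bool) = p.2 then d.h₁ else d.h₂)
           rcases p with ⟨δ, b⟩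
           cases b
           · exact d.r₁.symm
           · exact d.r₂.symm
         · show G.lastV = G.r (if (true : Bool) = p.2 then d.h₁ else d.h₂)
           rcases p with ⟨δ, b⟩
           cases b
           · exact d.r₂.symm
           · exact d.r₁.symm
     comm_m := fun i => by
       induction i using Fin.lastCases with
       | last =>
         rw [phiE_m_last]
         rfl
       | cast j =>
         rw [phiE_m_cast]
         show (p.1.tV (G''.m j)).val = G.m j.castSucc
         rw [p.1.comm_m j]
         rfl }⟩

open Classical in
theorem fwdE_snd (d : EData G) (p : (x : G'.H) × Iso (phiE G' x) G) :
    (fwdE d p).2 = if p.2.tH (Sum.inr true) = d.h₁ then true else false := rfl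

theorem card_sigma_phiE (d : EData G) (G'' : MarkedGraph m) :
    Nat.card ((x : G''.H) × Iso (phiE G'' x) G) = 2 * Nat.card (Iso G'' (ctr G d)) := by
  have h2 : Nat.card (Iso G'' (ctr G d) × Bool) = 2 * Nat.card (Iso G'' (ctr G d)) := by
    rw [Nat.card_prod]
    have : Nat.card Bool = 2 := by simp [Nat.card_eq_fintype_card]
    rw [this, Nat.mul_comm]
  rw [← h2]
  refine card_eq_of_maps (fwdE d) (bwdE d G'') ?_ ?_
  · rintro ⟨δ, b⟩
    have hsnd : (fwdE d (bwdE d G'' (δ, b))).2 = b := by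
      rw [fwdE_snd]
      cases b
      · exact if_neg (fun hc => d.ne (Eq.symm (show d.h₂ = d.h₁ from hc)))
      · exact if_pos (show (bwdE d G'' (δ, true)).snd.tH (Sum.inr true) = d.h₁ from rfl)
    refine Prod.ext ?_ hsnd
    refine Iso.ext' ?_ ?_
    · apply Equiv.ext
      intro w
      apply Subtype.ext
      rfl
    · apply Equiv.ext
      intro y
      apply Subtype.ext
      rfl
  · rintro ⟨x, ψ⟩ ⟨x', χ⟩ h
    have hfst := congrArg Prod.fst h
    have hsnd := congrArg Prod.snd h
    have hVp : ∀ w : G''.V, ψ.tV (Sum.inl w) = χ.tV (Sum.inl w) :=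
      fun w => congrArg (fun e => ((Prod.fst e).tV w).val) h
    have hHp : ∀ y : G''.H, ψ.tH (Sum.inl y) = χ.tH (Sum.inl y) :=
      fun y => congrArg (fun e => ((Prod.fst e).tH y).val) h
    have ht : ψ.tH (Sum.inr true) = χ.tH (Sum.inr true) := by
      rw [fwdE_snd, fwdE_snd] at hsnd
      have hsnd' := hsnd
      by_cases hψ : ψ.tH (Sum.inr true) = d.h₁
      · by_cases hχ : χ.tH (Sum.inr true) = d.h₁
        · rw [hψ, hχ]
        · rw [if_pos hψ, if_neg hχ] at hsnd'
          exact absurd hsnd' (by decide)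
      · by_cases hχ : χ.tH (Sum.inr true) = d.h₁
        · rw [if_neg hψ, if_pos hχ] at hsnd'
          exact absurd hsnd' (by decide)
        · have h1 : ψ.tH (Sum.inr true) = d.h₂ := (phiE_htp ψ d).resolve_left hψ
          have h2 : χ.tH (Sum.inr true) = d.h₂ := (phiE_htp χ d).resolve_left hχ
          rw [h1, h2]
    have hf : ψ.tH (Sum.inr false) = χ.tH (Sum.inr false) := by
      rcases phiE_hfp ψ d with h1 | h1 <;> rcases phiE_hfp χ d with h2 | h2
      · rw [h1, h2]
      · have e1 : ψ.tH (Sum.inr true) = d.h₂ :=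
          (phiE_htp ψ d).resolve_left (fun hh => phiE_hne_tf ψ (hh.trans h1.symm))
        have e2 : χ.tH (Sum.inr true) = d.h₁ :=
          (phiE_htp χ d).resolve_right (fun hh => phiE_hne_tf χ (hh.trans h2.symm))
        exact absurd (e1.symm.trans (ht.trans e2)) d.ne.symm
      · have e1 : ψ.tH (Sum.inr true) = d.h₁ :=
          (phiE_htp ψ d).resolve_right (fun hh => phiE_hne_tf ψ (hh.trans h1.symm))
        have e2 : χ.tH (Sum.inr true) = d.h₂ :=
          (phiE_htp χ d).resolve_left (fun hh => phiE_hne_tf χ (hh.trans h2.symm))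
        exact absurd (e1.symm.trans (ht.trans e2)) d.ne
      · rw [h1, h2]
    have hx' : x = x' := by
      have hkey : χ.tH (Sum.inl x) = χ.tH (Sum.inl x') := by
        rw [← hHp x, phiE_hx ψ, ht, ← phiE_hx χ]
      exact Sum.inl_injective (χ.tH.injective hkey)
    subst hx'
    refine congrArg (Sigma.mk x) (Iso.ext' ?_ ?_)
    · apply Equiv.ext
      rintro (w | u)
      · exact hVp w
      · cases u
        rw [phiE_hlast ψ, phiE_hlast χ]
    · apply Equiv.ext
      rintro (y | c)
      · exact hHp y
      · cases c
        · exact hf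
        · exact ht

end CE



-- ====== degrees from the data packages ======

open Classical in
noncomputable def pairEquivBool {α : Type*} {a b : α} (hne : a ≠ b) :
    {x : α // x = a ∨ x = b} ≃ Bool where
  toFun z := if z.val = a then true else false
  invFun c := match c with
    | true => ⟨a, Or.inl rfl⟩
    | false => ⟨b, Or.inr rfl⟩
  left_inv z := by
    dsimp only
    rcases z with ⟨z, hz | hz⟩
    · rw [if_pos hz]
      exact Subtype.ext hz.symm
    · rw [if_neg (fun hc => hne (hc.symm.trans hz))]
      exact Subtype.ext hz.symm
  right_inv c := by
    cases c
    · show (if b = a then true else false) = false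
      rw [if_neg (fun hc => hne hc.symm)]
    · show (if a = a then true else false) = true
      rw [if_pos rfl]

theorem EData.hdeg_eq {G : MarkedGraph (m + 1)} (d : EData G) : G.hdeg = 2 := by
  unfold hdeg
  rw [Nat.card_congr ((Equiv.subtypeEquiv (Equiv.refl G.H) (fun x => by
    simpa using d.root x)).trans (pairEquivBool d.ne))]
  simp [Nat.card_eq_fintype_card]

theorem EData.mdeg_eq {G : MarkedGraph (m + 1)} (d : EData G) : G.mdeg = 0 := by
  unfold mdeg
  have : IsEmpty {j : Fin m // G.m j.castSucc = G.lastV} := ⟨fun j => d.nomark j.1 j.2⟩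
  exact Nat.card_of_isEmpty

theorem MData.hdeg_eq {G : MarkedGraph (m + 1)} (d : MData G) : G.hdeg = 1 := by
  unfold hdeg
  rw [Nat.card_eq_one_iff_unique]
  exact ⟨⟨fun z w => Subtype.ext (((d.root z.1).mp z.2).trans ((d.root w.1).mp w.2).symm)⟩,
    ⟨⟨d.h₀, d.r₀⟩⟩⟩

theorem MData.mdeg_eq {G : MarkedGraph (m + 1)} (d : MData G) : G.mdeg = 1 := by
  unfold mdeg
  rw [Nat.card_eq_one_iff_unique]
  exact ⟨⟨fun z w => Subtype.ext (((d.mark z.1).mp z.2).trans ((d.mark w.1).mp w.2).symm)⟩,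
    ⟨⟨d.i₀, (d.mark d.i₀).mpr rfl⟩⟩⟩

-- ====== vanishing lemmas ======

theorem fgt_not_stable_E {G : MarkedGraph (m + 1)} (d : EData G) : ¬ (fgt G).Stable := by
  intro hstb
  have h := hstb G.lastV
  have h1 : Nat.card {x : (fgt G).H // (fgt G).r x = G.lastV} = 2 := d.hdeg_eq
  have h2 : Nat.card {j : Fin m // (fgt G).m j = G.lastV} = 0 := d.mdeg_eq
  rw [h1, h2] at h
  omega

theorem fgt_not_stable_M {G : MarkedGraph (m + 1)} (d : MData G) : ¬ (fgt G).Stable := by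
  intro hstb
  have h := hstb G.lastV
  have h1 : Nat.card {x : (fgt G).H // (fgt G).r x = G.lastV} = 1 := d.hdeg_eq
  have h2 : Nat.card {j : Fin m // (fgt G).m j = G.lastV} = 1 := d.mdeg_eq
  rw [h1, h2] at h
  omega

theorem isEmpty_iso_of_unstable {k : ℕ} {A B : MarkedGraph k} (hA : A.Stable)
    (hB : ¬ B.Stable) : IsEmpty (Iso A B) :=
  ⟨fun ψ => hB (stable_iso ψ hA)⟩

theorem isEmpty_iso_phiE_of_V {G' : MarkedGraph m} {G : MarkedGraph (m + 1)}
    (htype : 3 ≤ G.hdeg + G.mdeg) (x : G'.H) : IsEmpty (Iso (phiE G' x) G) :=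
  ⟨fun ψ => by
    have h1 := hdeg_iso ψ
    have h2 := mdeg_iso ψ
    rw [hdeg_phiE] at h1
    rw [mdeg_phiE] at h2
    omega⟩

theorem isEmpty_iso_phiM_of_V {G' : MarkedGraph m} {G : MarkedGraph (m + 1)}
    (htype : 3 ≤ G.hdeg + G.mdeg) (i : Fin m) : IsEmpty (Iso (phiM G' i) G) :=
  ⟨fun ψ => by
    have h1 := hdeg_iso ψ
    have h2 := mdeg_iso ψ
    rw [hdeg_phiM] at h1
    rw [mdeg_phiM] at h2
    omega⟩

theorem isEmpty_iso_phiM_of_E {G' : MarkedGraph m} {G : MarkedGraph (m + 1)}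
    (d : EData G) (i : Fin m) : IsEmpty (Iso (phiM G' i) G) :=
  ⟨fun ψ => by
    have h1 := hdeg_iso ψ
    rw [hdeg_phiM, d.hdeg_eq] at h1
    omega⟩

theorem isEmpty_iso_phiE_of_M {G' : MarkedGraph m} {G : MarkedGraph (m + 1)}
    (d : MData G) (x : G'.H) : IsEmpty (Iso (phiE G' x) G) :=
  ⟨fun ψ => by
    have h1 := hdeg_iso ψ
    rw [hdeg_phiE, d.hdeg_eq] at h1
    omega⟩

-- ====== summation over a set of representatives ======

theorem sum_card_iso {k : ℕ} (S : Set (MarkedGraph k)) (hfin : S.Finite)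
    (huniq : ∀ G₁ ∈ S, ∀ G₂ ∈ S, Nonempty (Iso G₁ G₂) → G₁ = G₂)
    (A : MarkedGraph k) (G₀ : MarkedGraph k) (hG₀ : G₀ ∈ S) (ψ₀ : Iso A G₀)
    (f : MarkedGraph k → ℚ) :
    ∑ G ∈ hfin.toFinset, f G * (Nat.card (Iso A G) : ℚ) =
      f G₀ * (Nat.card (Iso G₀ G₀) : ℚ) := by
  rw [Finset.sum_eq_single G₀]
  · rw [card_iso_right ψ₀]
  · intro G hG hne
    have hemp : IsEmpty (Iso A G) := by
      by_contra hc
      rw [not_isEmpty_iff] at hc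
      obtain ⟨ψ⟩ := hc
      exact hne (huniq G (hfin.mem_toFinset.mp hG) G₀ hG₀ ⟨ψ.symm.trans ψ₀⟩)
    rw [Nat.card_of_isEmpty]
    simp
  · intro hc
    exact absurd (hfin.mem_toFinset.mpr hG₀) hc

theorem sum_card_iso_zero {k : ℕ} (S : Set (MarkedGraph k)) (hfin : S.Finite)
    (A : MarkedGraph k) (hemp : ∀ G ∈ S, IsEmpty (Iso A G))
    (f : MarkedGraph k → ℚ) :
    ∑ G ∈ hfin.toFinset, f G * (Nat.card (Iso A G) : ℚ) = 0 := by
  apply Finset.sum_eq_zero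
  intro G hG
  have := hemp G (hfin.mem_toFinset.mp hG)
  rw [Nat.card_of_isEmpty]
  simp


-- ====== the double-count value ======

noncomputable def qval (G' : MarkedGraph m) (G : MarkedGraph (m + 1)) : ℚ :=
  ((-1 : ℚ)) ^ G'.numEdges *
    ((Nat.card ((v : G'.V) × Iso (phiV G' v) G) : ℚ)
      - (Nat.card ((x : G'.H) × Iso (phiE G' x) G) : ℚ) / 2
      - (Nat.card ((i : Fin m) × Iso (phiM G' i) G) : ℚ))
    / ((Nat.card (Iso G' G') : ℚ) * (Nat.card (Iso G G) : ℚ))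

theorem aut_ne_zero {k : ℕ} (X : MarkedGraph k) : (Nat.card (Iso X X) : ℚ) ≠ 0 := by
  have := aut_pos X
  positivity

theorem card_sigma_zero_of_isEmpty {ι : Type*} {f : ι → Type*}
    (h : ∀ i, IsEmpty (f i)) : Nat.card ((i : ι) × f i) = 0 := by
  have : IsEmpty ((i : ι) × f i) := ⟨fun p => (h p.1).false p.2⟩
  exact Nat.card_of_isEmpty

theorem col_sum (g : ℕ) (S' : Set (MarkedGraph m)) (hfin' : S'.Finite)
    (hmem' : ∀ G ∈ S', G.Stable ∧ G.Connected ∧ G.IsGenus g)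
    (hrep' : ∀ G' : MarkedGraph m, G'.Stable → G'.Connected → G'.IsGenus g →
      ∃ G ∈ S', Nonempty (Iso G' G))
    (huniq' : ∀ G₁ ∈ S', ∀ G₂ ∈ S', Nonempty (Iso G₁ G₂) → G₁ = G₂)
    (G : MarkedGraph (m + 1)) (hst : G.Stable) (hconn : G.Connected)
    (hgen : G.IsGenus g) (hgn : 3 ≤ 2 * g + m) :
    ∑ G' ∈ hfin'.toFinset, qval G' G =
      ((-1 : ℚ)) ^ G.numEdges / (Nat.card (Iso G G) : ℚ) := by
  classical
  rcases trichotomy hst hconn hgen hgn with htype | ⟨⟨d⟩⟩ | ⟨⟨d⟩⟩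
  · -- vertex type
    have hcongr : ∀ G' ∈ hfin'.toFinset, qval G' G =
        (((-1 : ℚ)) ^ G'.numEdges /
          ((Nat.card (Iso G' G') : ℚ) * (Nat.card (Iso G G) : ℚ))) *
          (Nat.card (Iso (fgt G) G') : ℚ) := by
      intro G' _
      unfold qval
      rw [show Nat.card ((x : G'.H) × Iso (phiE G' x) G) = 0 from
          card_sigma_zero_of_isEmpty (fun x => isEmpty_iso_phiE_of_V htype x),
        show Nat.card ((i : Fin m) × Iso (phiM G' i) G) = 0 from
          card_sigma_zero_of_isEmpty (fun i => isEmpty_iso_phiM_of_V htype i),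
        card_sigma_phiV G' G, card_iso_symm G' (fgt G)]
      push_cast
      ring
    rw [Finset.sum_congr rfl hcongr]
    obtain ⟨G₀, hG₀, ⟨ψ₀⟩⟩ := hrep' (fgt G) (stable_fgt hst htype) (conn_fgt hconn)
      (isGenus_fgt hgen)
    rw [sum_card_iso S' hfin' huniq' (fgt G) G₀ hG₀ ψ₀]
    have hε : G₀.numEdges = G.numEdges := (numEdges_iso ψ₀).symm
    rw [hε]
    rw [div_mul_eq_mul_div, div_eq_div_iff (by
      exact mul_ne_zero (aut_ne_zero G₀) (aut_ne_zero G)) (aut_ne_zero G)]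
    ring
  · -- edge type
    have hcongr : ∀ G' ∈ hfin'.toFinset, qval G' G =
        ((-((-1 : ℚ)) ^ G'.numEdges) /
          ((Nat.card (Iso G' G') : ℚ) * (Nat.card (Iso G G) : ℚ))) *
          (Nat.card (Iso (ctr G d) G') : ℚ) := by
      intro G' hG'
      unfold qval
      rw [show Nat.card ((v : G'.V) × Iso (phiV G' v) G) = 0 from ?hv,
        show Nat.card ((i : Fin m) × Iso (phiM G' i) G) = 0 from
          card_sigma_zero_of_isEmpty (fun i => isEmpty_iso_phiM_of_E d i),
        card_sigma_phiE d G', card_iso_symm G' (ctr G d)]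
      · push_cast
        ring
      case hv =>
        rw [card_sigma_phiV G' G]
        have : IsEmpty (Iso G' (fgt G)) :=
          isEmpty_iso_of_unstable (hmem' G' (hfin'.mem_toFinset.mp hG')).1
            (fgt_not_stable_E d)
        exact Nat.card_of_isEmpty
    rw [Finset.sum_congr rfl hcongr]
    obtain ⟨G₀, hG₀, ⟨ψ₀⟩⟩ := hrep' (ctr G d) (stable_ctr d hst) (conn_ctr d hconn)
      (isGenus_ctr d hgen)
    rw [sum_card_iso S' hfin' huniq' (ctr G d) G₀ hG₀ ψ₀]
    have hε : G.numEdges = G₀.numEdges + 1 := by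
      rw [← numEdges_iso ψ₀]
      exact numEdges_ctr d
    rw [hε, pow_succ]
    rw [div_mul_eq_mul_div, div_eq_div_iff (by
      exact mul_ne_zero (aut_ne_zero G₀) (aut_ne_zero G)) (aut_ne_zero G)]
    ring
  · -- marking type
    have hcongr : ∀ G' ∈ hfin'.toFinset, qval G' G =
        ((-((-1 : ℚ)) ^ G'.numEdges) /
          ((Nat.card (Iso G' G') : ℚ) * (Nat.card (Iso G G) : ℚ))) *
          (Nat.card (Iso (mctr G d) G') : ℚ) := by
      intro G' hG'
      unfold qval
      rw [show Nat.card ((v : G'.V) × Iso (phiV G' v) G) = 0 from ?hv,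
        show Nat.card ((x : G'.H) × Iso (phiE G' x) G) = 0 from
          card_sigma_zero_of_isEmpty (fun x => isEmpty_iso_phiE_of_M d x),
        card_sigma_phiM d G', card_iso_symm G' (mctr G d)]
      · push_cast
        ring
      case hv =>
        rw [card_sigma_phiV G' G]
        have : IsEmpty (Iso G' (fgt G)) :=
          isEmpty_iso_of_unstable (hmem' G' (hfin'.mem_toFinset.mp hG')).1
            (fgt_not_stable_M d)
        exact Nat.card_of_isEmpty
    rw [Finset.sum_congr rfl hcongr]
    obtain ⟨G₀, hG₀, ⟨ψ₀⟩⟩ := hrep' (mctr G d) (stable_mctr d hst) (conn_mctr d hconn)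
      (isGenus_mctr d hgen)
    rw [sum_card_iso S' hfin' huniq' (mctr G d) G₀ hG₀ ψ₀]
    have hε : G.numEdges = G₀.numEdges + 1 := by
      rw [← numEdges_iso ψ₀]
      exact numEdges_mctr d
    rw [hε, pow_succ]
    rw [div_mul_eq_mul_div, div_eq_div_iff (by
      exact mul_ne_zero (aut_ne_zero G₀) (aut_ne_zero G)) (aut_ne_zero G)]
    ring


theorem row_sum (g : ℕ) (S : Set (MarkedGraph (m + 1))) (hfin : S.Finite)
    (hrep : ∀ A : MarkedGraph (m + 1), A.Stable → A.Connected → A.IsGenus g →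
      ∃ G ∈ S, Nonempty (Iso A G))
    (huniq : ∀ G₁ ∈ S, ∀ G₂ ∈ S, Nonempty (Iso G₁ G₂) → G₁ = G₂)
    (G' : MarkedGraph m) (hst' : G'.Stable) (hconn' : G'.Connected)
    (hgen' : G'.IsGenus g) :
    ∑ G ∈ hfin.toFinset, qval G' G =
      ((2 : ℚ) - g - (m + 1)) *
        (((-1 : ℚ)) ^ G'.numEdges / (Nat.card (Iso G' G') : ℚ)) := by
  classical
  letI : Fintype G'.V := Fintype.ofFinite _
  letI : Fintype G'.H := Fintype.ofFinite _
  have inner_V : ∀ v : G'.V, ∑ G ∈ hfin.toFinset,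
      (1 / (Nat.card (Iso G G) : ℚ)) * (Nat.card (Iso (phiV G' v) G) : ℚ) = 1 := by
    intro v
    obtain ⟨G₀, hG₀, ⟨ψ₀⟩⟩ := hrep (phiV G' v) (stable_phiV hst' v) (conn_phiV hconn' v)
      (isGenus_phiV hgen' v)
    rw [sum_card_iso S hfin huniq _ G₀ hG₀ ψ₀, one_div,
      inv_mul_cancel₀ (aut_ne_zero G₀)]
  have inner_E : ∀ x : G'.H, ∑ G ∈ hfin.toFinset,
      (1 / (Nat.card (Iso G G) : ℚ)) * (Nat.card (Iso (phiE G' x) G) : ℚ) = 1 := by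
    intro x
    obtain ⟨G₀, hG₀, ⟨ψ₀⟩⟩ := hrep (phiE G' x) (stable_phiE hst' x) (conn_phiE hconn' x)
      (isGenus_phiE hgen' x)
    rw [sum_card_iso S hfin huniq _ G₀ hG₀ ψ₀, one_div,
      inv_mul_cancel₀ (aut_ne_zero G₀)]
  have inner_M : ∀ i : Fin m, ∑ G ∈ hfin.toFinset,
      (1 / (Nat.card (Iso G G) : ℚ)) * (Nat.card (Iso (phiM G' i) G) : ℚ) = 1 := by
    intro i
    obtain ⟨G₀, hG₀, ⟨ψ₀⟩⟩ := hrep (phiM G' i) (stable_phiM hst' i) (conn_phiM hconn' i)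
      (isGenus_phiM hgen' i)
    rw [sum_card_iso S hfin huniq _ G₀ hG₀ ψ₀, one_div,
      inv_mul_cancel₀ (aut_ne_zero G₀)]
  have expand : ∀ G ∈ hfin.toFinset, qval G' G =
      ((-1 : ℚ)) ^ G'.numEdges / (Nat.card (Iso G' G') : ℚ) *
        ((∑ v : G'.V, (1 / (Nat.card (Iso G G) : ℚ)) * (Nat.card (Iso (phiV G' v) G) : ℚ))
          - (∑ x : G'.H, (1 / (Nat.card (Iso G G) : ℚ)) *
              (Nat.card (Iso (phiE G' x) G) : ℚ)) / 2
          - (∑ i : Fin m, (1 / (Nat.card (Iso G G) : ℚ)) *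
              (Nat.card (Iso (phiM G' i) G) : ℚ))) := by
    intro G _
    unfold qval
    rw [nat_card_sigma, nat_card_sigma, nat_card_sigma, ← Finset.mul_sum,
      ← Finset.mul_sum, ← Finset.mul_sum]
    push_cast
    field_simp
  rw [Finset.sum_congr rfl expand, ← Finset.mul_sum]
  have hsplit : ∑ G ∈ hfin.toFinset,
      ((∑ v : G'.V, (1 / (Nat.card (Iso G G) : ℚ)) * (Nat.card (Iso (phiV G' v) G) : ℚ))
        - (∑ x : G'.H, (1 / (Nat.card (Iso G G) : ℚ)) *
            (Nat.card (Iso (phiE G' x) G) : ℚ)) / 2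
        - (∑ i : Fin m, (1 / (Nat.card (Iso G G) : ℚ)) *
            (Nat.card (Iso (phiM G' i) G) : ℚ))) =
      (Fintype.card G'.V : ℚ) - (Fintype.card G'.H : ℚ) / 2 - (m : ℚ) := by
    rw [Finset.sum_sub_distrib, Finset.sum_sub_distrib, ← Finset.sum_div]
    congr 1
    · congr 1
      · rw [Finset.sum_comm, Finset.sum_congr rfl (fun v _ => inner_V v)]
        simp
      · rw [Finset.sum_comm, Finset.sum_congr rfl (fun x _ => inner_E x)]
        simp
    · rw [Finset.sum_comm, Finset.sum_congr rfl (fun i _ => inner_M i)]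
      simp
  rw [hsplit]
  have harith : (Fintype.card G'.V : ℚ) - (Fintype.card G'.H : ℚ) / 2 - (m : ℚ) =
      (2 : ℚ) - g - (m + 1) := by
    obtain ⟨e, he⟩ := even_card_of_involution G'.s G'.s_invol G'.s_ne
    have hgen2 : Nat.card G'.V + g = 1 + e := by
      have h := hgen'
      unfold IsGenus numEdges at h
      omega
    rw [← Nat.card_eq_fintype_card, ← Nat.card_eq_fintype_card, he]
    have hq : (Nat.card G'.V : ℚ) + g = 1 + e := by exact_mod_cast hgen2
    push_cast
    linarith
  rw [harith]
  ring


theorem main_step (g : ℕ) (hgn : 3 ≤ 2 * g + m)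
    (S : Set (MarkedGraph (m + 1))) (hfin : S.Finite)
    (hmem : ∀ G ∈ S, G.Stable ∧ G.Connected ∧ G.IsGenus g)
    (hrep : ∀ A : MarkedGraph (m + 1), A.Stable → A.Connected → A.IsGenus g →
      ∃ G ∈ S, Nonempty (Iso A G))
    (huniq : ∀ G₁ ∈ S, ∀ G₂ ∈ S, Nonempty (Iso G₁ G₂) → G₁ = G₂)
    (S' : Set (MarkedGraph m)) (hfin' : S'.Finite)
    (hmem' : ∀ G ∈ S', G.Stable ∧ G.Connected ∧ G.IsGenus g)
    (hrep' : ∀ A : MarkedGraph m, A.Stable → A.Connected → A.IsGenus g →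
      ∃ G ∈ S', Nonempty (Iso A G))
    (huniq' : ∀ G₁ ∈ S', ∀ G₂ ∈ S', Nonempty (Iso G₁ G₂) → G₁ = G₂) :
    (∑ G ∈ hfin.toFinset, ((-1 : ℚ)) ^ G.numEdges / (Nat.card (Iso G G) : ℚ)) =
      ((2 : ℚ) - g - (m + 1)) *
        ∑ G ∈ hfin'.toFinset, ((-1 : ℚ)) ^ G.numEdges / (Nat.card (Iso G G) : ℚ) := by
  classical
  calc
    (∑ G ∈ hfin.toFinset, ((-1 : ℚ)) ^ G.numEdges / (Nat.card (Iso G G) : ℚ))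
        = ∑ G ∈ hfin.toFinset, ∑ G' ∈ hfin'.toFinset, qval G' G := by
      refine Finset.sum_congr rfl (fun G hG => ?_)
      obtain ⟨hst, hconn, hgen⟩ := hmem G (hfin.mem_toFinset.mp hG)
      exact (col_sum g S' hfin' hmem' hrep' huniq' G hst hconn hgen hgn).symm
    _ = ∑ G' ∈ hfin'.toFinset, ∑ G ∈ hfin.toFinset, qval G' G := Finset.sum_comm
    _ = ∑ G' ∈ hfin'.toFinset, ((2 : ℚ) - g - (m + 1)) *
        (((-1 : ℚ)) ^ G'.numEdges / (Nat.card (Iso G' G') : ℚ)) := by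
      refine Finset.sum_congr rfl (fun G' hG' => ?_)
      obtain ⟨hst', hconn', hgen'⟩ := hmem' G' (hfin'.mem_toFinset.mp hG')
      exact row_sum g S hfin hrep huniq G' hst' hconn' hgen'
    _ = ((2 : ℚ) - g - (m + 1)) *
        ∑ G ∈ hfin'.toFinset, ((-1 : ℚ)) ^ G.numEdges / (Nat.card (Iso G G) : ℚ) :=
      (Finset.mul_sum _ _ _).symm

end MarkedGraph

theorem orbifold_euler_char_marked_graphs_step' (g n : ℕ) (hn : 1 ≤ n)
    (hgn : 0 < 2 * (g : ℤ) - 2 + ((n : ℤ) - 1))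
    (S : Set (MarkedGraph n)) (hfin : S.Finite)
    (hmem : ∀ G ∈ S, G.Stable ∧ G.Connected ∧ G.IsGenus g)
    (hrep : ∀ G' : MarkedGraph n, G'.Stable → G'.Connected → G'.IsGenus g →
      ∃ G ∈ S, Nonempty (MarkedGraph.Iso G' G))
    (huniq : ∀ G₁ ∈ S, ∀ G₂ ∈ S, Nonempty (MarkedGraph.Iso G₁ G₂) → G₁ = G₂)
    (S' : Set (MarkedGraph (n - 1))) (hfin' : S'.Finite)
    (hmem' : ∀ G ∈ S', G.Stable ∧ G.Connected ∧ G.IsGenus g)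
    (hrep' : ∀ G' : MarkedGraph (n - 1), G'.Stable → G'.Connected → G'.IsGenus g →
      ∃ G ∈ S', Nonempty (MarkedGraph.Iso G' G))
    (huniq' : ∀ G₁ ∈ S', ∀ G₂ ∈ S', Nonempty (MarkedGraph.Iso G₁ G₂) → G₁ = G₂) :
    (∑ᶠ G ∈ S, ((-1 : ℚ)) ^ G.numEdges / (Nat.card (MarkedGraph.Iso G G) : ℚ)) =
      ((2 : ℚ) - g - n) *
        ∑ᶠ G ∈ S', ((-1 : ℚ)) ^ G.numEdges / (Nat.card (MarkedGraph.Iso G G) : ℚ) := by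
  obtain ⟨m, rfl⟩ : ∃ m, n = m + 1 := ⟨n - 1, (Nat.succ_pred_eq_of_pos hn).symm⟩
  have hgn' : 3 ≤ 2 * g + m := by
    push_cast at hgn
    omega
  rw [← hfin.coe_toFinset, finsum_mem_coe_finset,
    ← hfin'.coe_toFinset, finsum_mem_coe_finset]
  have := MarkedGraph.main_step g hgn' S hfin hmem hrep huniq S' hfin' hmem' hrep' huniq'
  rw [this]
  congr 1
  push_cast
  ring


/-- Induction step for the orbifold Euler characteristic of categories of stable,
connected, genus `g`, `n`-marked graphs: forgetting the last marked point multiplies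
the orbifold Euler characteristic by `(2 - g - n)`. -/
theorem orbifold_euler_char_marked_graphs_step (g n : ℕ) (hn : 1 ≤ n)
    (hgn : 0 < 2 * (g : ℤ) - 2 + ((n : ℤ) - 1))
    (S : Set (MarkedGraph n)) (hfin : S.Finite)
    (hmem : ∀ G ∈ S, G.Stable ∧ G.Connected ∧ G.IsGenus g)
    (hrep : ∀ G' : MarkedGraph n, G'.Stable → G'.Connected → G'.IsGenus g →
      ∃ G ∈ S, Nonempty (MarkedGraph.Iso G' G))
    (huniq : ∀ G₁ ∈ S, ∀ G₂ ∈ S, Nonempty (MarkedGraph.Iso G₁ G₂) → G₁ = G₂)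
    (S' : Set (MarkedGraph (n - 1))) (hfin' : S'.Finite)
    (hmem' : ∀ G ∈ S', G.Stable ∧ G.Connected ∧ G.IsGenus g)
    (hrep' : ∀ G' : MarkedGraph (n - 1), G'.Stable → G'.Connected → G'.IsGenus g →
      ∃ G ∈ S', Nonempty (MarkedGraph.Iso G' G))
    (huniq' : ∀ G₁ ∈ S', ∀ G₂ ∈ S', Nonempty (MarkedGraph.Iso G₁ G₂) → G₁ = G₂) :
    (∑ᶠ G ∈ S, ((-1 : ℚ)) ^ G.numEdges / (Nat.card (MarkedGraph.Iso G G) : ℚ)) =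
      ((2 : ℚ) - g - n) *
        ∑ᶠ G ∈ S', ((-1 : ℚ)) ^ G.numEdges / (Nat.card (MarkedGraph.Iso G G) : ℚ) := by
  exact orbifold_euler_char_marked_graphs_step' g n hn hgn S hfin hmem hrep huniq
    S' hfin' hmem' hrep' huniq'
end
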